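/- arXiv:2009.05435 — 6 statements merged into one kernel-verified Lean document; each statement's English description precedes it below -/
import Mathlib

section
/- Let q ≥ 2 be an integer and let f be a real-valued q-additive function such that both series ∑_{j≥0} ∑_{d=1}^{q-1} f(d·q^j) and ∑_{j≥0} ∑_{d=1}^{q-1} f(d·q^j)² converge. Then for every real t, lim_{N→∞} (1/N) ∑_{n<N} e^{i t f(n)} = ∏_{j≥0} ( (1/q) ∑_{d=0}^{q-1} e^{i t f(d q^j)} ), i.e. the characteristic function of the limiting distribution is given by this convergent infinite product. -/
open Filter Finset Topology

/-- `f : ℕ → ℝ` is `q`-additive. -/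
def IsQAdditive (q : ℕ) (f : ℕ → ℝ) : Prop :=
  ∀ n : ℕ, f n = ∑ j ∈ Finset.range n, f (n / q ^ j % q * q ^ j)

/-- Empirical characteristic function `φ_N(t) = (1/N) ∑_{n<N} e^{i t f(n)}`. -/
noncomputable def empCharFun (f : ℕ → ℝ) (N : ℕ) (t : ℝ) : ℂ :=
  (∑ n ∈ Finset.range N, Complex.exp (Complex.I * t * f n)) / N

section QA
variable {q : ℕ} {f : ℕ → ℝ} (hq : 2 ≤ q) (hf : IsQAdditive q f)

include hf in
lemma f_zero : f 0 = 0 := by simpa using hf 0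

include hq hf in
lemma f_eq_sum {n K : ℕ} (hK : n ≤ K) :
    f n = ∑ j ∈ Finset.range K, f (n / q ^ j % q * q ^ j) := by
  rw [hf n]
  apply Finset.sum_subset (Finset.range_subset_range.2 hK)
  intro j hj hj'
  simp only [Finset.mem_range, not_lt] at hj'
  have : n < q ^ j := by
    calc n < 2 ^ n := Nat.lt_two_pow_self
    _ ≤ 2 ^ j := Nat.pow_le_pow_right (by norm_num) hj'
    _ ≤ q ^ j := Nat.pow_le_pow_left hq j
  rw [Nat.div_eq_of_lt this]
  simpa using f_zero hf

include hq hf in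
lemma f_split {a m s : ℕ} (ha : a < q ^ s) :
    f (a + m * q ^ s) = f a + f (m * q ^ s) := by
  have hq0 : 0 < q := by omega
  set K := a + m * q ^ s + s with hKdef
  have h1 : f (a + m * q ^ s) = ∑ j ∈ Finset.range K,
      f ((a + m * q ^ s) / q ^ j % q * q ^ j) := f_eq_sum hq hf (by omega)
  have h2 : f a = ∑ j ∈ Finset.range K, f (a / q ^ j % q * q ^ j) :=
    f_eq_sum hq hf (by omega)
  have h3 : f (m * q ^ s) = ∑ j ∈ Finset.range K,
      f (m * q ^ s / q ^ j % q * q ^ j) := f_eq_sum hq hf (by omega)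
  rw [h1, h2, h3, ← Finset.sum_add_distrib]
  apply Finset.sum_congr rfl
  intro j _
  rcases lt_or_ge j s with hjs | hjs
  · -- low digits: from a; digit of m*q^s is 0
    have e1 : (a + m * q ^ s) / q ^ j = a / q ^ j + m * q ^ (s - j) := by
      have : q ^ s = q ^ (s - j) * q ^ j := by
        rw [← pow_add]; congr 1; omega
      rw [this, ← mul_assoc, Nat.add_mul_div_right _ _ (pow_pos hq0 j)]
    have e2 : (a / q ^ j + m * q ^ (s - j)) % q = a / q ^ j % q := by
      have : q ^ (s - j) = q ^ (s - j - 1) * q := by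
        rw [← pow_succ]; congr 1; omega
      rw [this, ← mul_assoc, Nat.add_mul_mod_self_right]
    have e3 : m * q ^ s / q ^ j % q = 0 := by
      have : m * q ^ s = (m * q ^ (s - j - 1) * q) * q ^ j := by
        rw [mul_assoc, mul_assoc, ← pow_succ', ← pow_add]; congr 2; omega
      rw [this, Nat.mul_div_cancel _ (pow_pos hq0 j), Nat.mul_mod_left]
    rw [e1, e2, e3]
    simp [f_zero hf]
  · -- high digits: from m*q^s; digit of a is 0
    have e0 : a / q ^ j = 0 := Nat.div_eq_of_lt (lt_of_lt_of_le ha (Nat.pow_le_pow_right hq0 hjs))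
    have hqj : q ^ j = q ^ s * q ^ (j - s) := by rw [← pow_add]; congr 1; omega
    have e1 : (a + m * q ^ s) / q ^ j = m / q ^ (j - s) := by
      rw [hqj, ← Nat.div_div_eq_div_mul, Nat.add_mul_div_right _ _ (pow_pos hq0 s),
        Nat.div_eq_of_lt ha, zero_add]
    have e2 : m * q ^ s / q ^ j = m / q ^ (j - s) := by
      rw [hqj, ← Nat.div_div_eq_div_mul, Nat.mul_div_cancel _ (pow_pos hq0 s)]
    rw [e1, e2, e0]
    simp [f_zero hf]

include hq hf in
lemma f_digit_split {e m s : ℕ} (he : e < q) :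
    f ((m * q + e) * q ^ s) = f (e * q ^ s) + f (m * q ^ (s + 1)) := by
  have : (m * q + e) * q ^ s = e * q ^ s + m * q ^ (s + 1) := by ring
  rw [this, f_split hq hf]
  calc e * q ^ s < q * q ^ s := by
        have := pow_pos (show 0 < q by omega) s
        exact (Nat.mul_lt_mul_right this).2 he
  _ = q ^ (s + 1) := by ring

end QA

noncomputable def cc (q : ℕ) (f : ℕ → ℝ) (t : ℝ) (j : ℕ) : ℂ :=
  (∑ d ∈ Finset.range q, Complex.exp (Complex.I * t * f (d * q ^ j))) / q

noncomputable def vv (q : ℕ) (f : ℕ → ℝ) (t : ℝ) (j : ℕ) : ℝ :=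
  ∑ d ∈ Finset.range q, ‖Complex.exp (Complex.I * t * f (d * q ^ j)) - 1‖

noncomputable def TT (q : ℕ) (f : ℕ → ℝ) (t : ℝ) (s N : ℕ) : ℂ :=
  ∑ n ∈ Finset.range N, Complex.exp (Complex.I * t * f (n * q ^ s))

def lenb (q N : ℕ) : ℕ := if N = 0 then 0 else Nat.log q N + 1

section B
variable {q : ℕ} {f : ℕ → ℝ} {t : ℝ} (hq : 2 ≤ q) (hf : IsQAdditive q f)

lemma norm_exp_I_mul (t x : ℝ) : ‖Complex.exp (Complex.I * t * x)‖ = 1 := by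
  rw [Complex.norm_exp]
  simp [Complex.mul_re]

lemma vv_nonneg (j : ℕ) : 0 ≤ vv q f t j :=
  Finset.sum_nonneg fun _ _ => norm_nonneg _

include hq in
lemma cc_norm_le (j : ℕ) : ‖cc q f t j‖ ≤ 1 := by
  have hq0 : (0:ℝ) < q := by positivity
  rw [cc, norm_div]
  rw [div_le_one (by simpa using hq0)]
  calc ‖∑ d ∈ Finset.range q, Complex.exp (Complex.I * t * f (d * q ^ j))‖
      ≤ ∑ d ∈ Finset.range q, ‖Complex.exp (Complex.I * t * f (d * q ^ j))‖ :=
        norm_sum_le _ _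
    _ = ∑ d ∈ Finset.range q, 1 := by
        apply Finset.sum_congr rfl; intro d _; exact norm_exp_I_mul t _
    _ = q := by simp
    _ = ‖(q:ℂ)‖ := by simp

include hq hf in
lemma exp_split {e m s : ℕ} (he : e < q) :
    Complex.exp (Complex.I * t * f ((m * q + e) * q ^ s)) =
      Complex.exp (Complex.I * t * f (e * q ^ s)) *
        Complex.exp (Complex.I * t * f (m * q ^ (s + 1))) := by
  rw [f_digit_split hq hf he, ← Complex.exp_add]
  congr 1
  push_cast
  ring

include hq hf in
lemma TT_block {s M r : ℕ} (hr : r ≤ q) :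
    ∑ i ∈ Finset.range r, Complex.exp (Complex.I * t * f ((M * q + i) * q ^ s)) =
      Complex.exp (Complex.I * t * f (M * q ^ (s + 1))) *
        ∑ e ∈ Finset.range r, Complex.exp (Complex.I * t * f (e * q ^ s)) := by
  rw [Finset.mul_sum]
  apply Finset.sum_congr rfl
  intro e he
  rw [exp_split hq hf (lt_of_lt_of_le (Finset.mem_range.1 he) hr)]
  ring

include hq hf in
lemma TT_mul (s M : ℕ) :
    ∑ n ∈ Finset.range (M * q), Complex.exp (Complex.I * t * f (n * q ^ s)) =
      (∑ d ∈ Finset.range q, Complex.exp (Complex.I * t * f (d * q ^ s))) *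
        TT q f t (s + 1) M := by
  induction M with
  | zero => simp [TT]
  | succ M ih =>
      have : (M + 1) * q = M * q + q := by ring
      rw [this, Finset.sum_range_add, ih, TT_block hq hf le_rfl]
      simp only [TT, Finset.sum_range_succ]
      ring

include hq hf in
lemma TT_rec (s N : ℕ) :
    TT q f t s N = (∑ d ∈ Finset.range q, Complex.exp (Complex.I * t * f (d * q ^ s))) *
        TT q f t (s + 1) (N / q) +
      Complex.exp (Complex.I * t * f (N / q * q ^ (s + 1))) *
        ∑ e ∈ Finset.range (N % q), Complex.exp (Complex.I * t * f (e * q ^ s)) := by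
  have hN : N / q * q + N % q = N := Nat.div_add_mod' _ _
  calc TT q f t s N = ∑ n ∈ Finset.range (N / q * q + N % q),
        Complex.exp (Complex.I * t * f (n * q ^ s)) := by rw [hN, TT]
    _ = _ := by
        rw [Finset.sum_range_add, TT_mul hq hf,
          TT_block hq hf (le_of_lt (Nat.mod_lt _ (by omega)))]

-- lenb lemmas
lemma lenb_zero : lenb q 0 = 0 := rfl

include hq in
lemma lenb_succ {N : ℕ} (hN : N ≠ 0) : lenb q N = lenb q (N / q) + 1 := by
  rcases lt_or_ge N q with h | h
  · have h1 : N / q = 0 := Nat.div_eq_of_lt h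
    have h2 : Nat.log q N = 0 := by
      rw [Nat.log_eq_zero_iff]; left; exact h
    simp [lenb, hN, h1, h2]
  · have hNq : N / q ≠ 0 := by
      have := (Nat.one_le_div_iff (show 0 < q by omega)).2 h
      omega
    have hlog : 0 < Nat.log q N := Nat.log_pos (by omega) h
    have : Nat.log q (N / q) = Nat.log q N - 1 := Nat.log_div_base q N
    simp only [lenb, hN, hNq, if_false]
    omega

omit hq in
lemma pow_lenb_le {N : ℕ} (hN : N ≠ 0) : q ^ (lenb q N - 1) ≤ N := by
  simp only [lenb, hN, if_false, Nat.add_sub_cancel]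
  exact Nat.pow_log_le_self q hN

include hq in
lemma lenb_tendsto : Tendsto (lenb q) atTop atTop := by
  apply tendsto_atTop_atTop.2
  intro b
  refine ⟨q ^ b, fun N hN => ?_⟩
  have hN0 : N ≠ 0 := by
    have : 0 < q ^ b := pow_pos (by omega) b
    omega
  have : b ≤ Nat.log q N := (Nat.le_log_iff_pow_le (by omega) hN0).2 hN
  simp only [lenb, hN0, if_false]
  omega

include hq hf in
lemma phase_bound (s M : ℕ) :
    ‖Complex.exp (Complex.I * t * f (M * q ^ s)) - 1‖ ≤
      ∑ k ∈ Finset.range (lenb q M), vv q f t (s + k) := by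
  induction M using Nat.strong_induction_on generalizing s with
  | _ M ih =>
    rcases eq_or_ne M 0 with rfl | hM
    · have : f 0 = 0 := f_zero hf
      simp [this, lenb_zero]
    · have hMq : M / q < M := Nat.div_lt_self (by omega) (by omega)
      have hMd : M / q * q + M % q = M := Nat.div_add_mod' _ _
      have key : Complex.exp (Complex.I * t * f (M * q ^ s)) =
          Complex.exp (Complex.I * t * f (M % q * q ^ s)) *
            Complex.exp (Complex.I * t * f (M / q * q ^ (s + 1))) := by
        conv_lhs => rw [← hMd]
        exact exp_split hq hf (Nat.mod_lt _ (by omega))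
      rw [key]
      have decomp : Complex.exp (Complex.I * t * f (M % q * q ^ s)) *
            Complex.exp (Complex.I * t * f (M / q * q ^ (s + 1))) - 1 =
          Complex.exp (Complex.I * t * f (M % q * q ^ s)) *
            (Complex.exp (Complex.I * t * f (M / q * q ^ (s + 1))) - 1) +
          (Complex.exp (Complex.I * t * f (M % q * q ^ s)) - 1) := by ring
      rw [decomp, lenb_succ hq hM]
      calc ‖_ + _‖ ≤ ‖Complex.exp (Complex.I * t * f (M % q * q ^ s)) *
            (Complex.exp (Complex.I * t * f (M / q * q ^ (s + 1))) - 1)‖ +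
            ‖Complex.exp (Complex.I * t * f (M % q * q ^ s)) - 1‖ := norm_add_le _ _
        _ ≤ ∑ k ∈ Finset.range (lenb q (M / q)), vv q f t (s + 1 + k) + vv q f t s := by
            apply add_le_add
            · rw [norm_mul, norm_exp_I_mul, one_mul]
              exact ih _ hMq (s + 1)
            · exact Finset.single_le_sum (f := fun d =>
                ‖Complex.exp (Complex.I * t * f (d * q ^ s)) - 1‖)
                (fun d _ => norm_nonneg _)
                (Finset.mem_range.2 (Nat.mod_lt _ (by omega)))
        _ = _ := by
            rw [Finset.sum_range_succ']
            congr 1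
            apply Finset.sum_congr rfl
            intro k _
            congr 1
            omega

end B

section C
variable {q : ℕ} {f : ℕ → ℝ} {t : ℝ}

set_option maxHeartbeats 2000000 in
lemma prod_part (hq : 2 ≤ q) (hf0 : f 0 = 0)
    {S S2 : ℝ}
    (hS : Tendsto (fun J : ℕ => ∑ j ∈ Finset.range J, ∑ d ∈ Finset.Ico 1 q, f (d * q ^ j))
      atTop (𝓝 S))
    (hS2 : Tendsto (fun J : ℕ => ∑ j ∈ Finset.range J, ∑ d ∈ Finset.Ico 1 q, f (d * q ^ j) ^ 2)
      atTop (𝓝 S2)) :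
    ∃ Pi : ℕ → ℂ, (∀ s, Pi s = cc q f t s * Pi (s + 1)) ∧
      Tendsto Pi atTop (𝓝 1) ∧
      Tendsto (fun J => ∏ j ∈ Finset.range J, cc q f t j) atTop (𝓝 (Pi 0)) ∧
      Tendsto (vv q f t) atTop (𝓝 0) := by
  have hq0 : (0:ℝ) < q := by positivity
  have hqC : (q:ℂ) ≠ 0 := by
    simp only [ne_eq, Nat.cast_eq_zero]; omega
  set a : ℕ → ℝ := fun j => ∑ d ∈ Finset.Ico 1 q, f (d * q ^ j) with ha
  set b : ℕ → ℝ := fun j => ∑ d ∈ Finset.Ico 1 q, f (d * q ^ j) ^ 2 with hbdef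
  have hbnn : ∀ j, 0 ≤ b j := fun j => Finset.sum_nonneg fun _ _ => sq_nonneg _
  -- b is summable
  have hbsum : Summable b := by
    apply summable_of_sum_range_le hbnn
    intro n
    have hmono : Monotone (fun J : ℕ => ∑ j ∈ Finset.range J, b j) := by
      intro m n hmn
      exact Finset.sum_le_sum_of_subset_of_nonneg (Finset.range_subset_range.2 hmn)
        (fun j _ _ => hbnn j)
    exact hmono.ge_of_tendsto hS2 n
  have hb0 : Tendsto b atTop (𝓝 0) := hbsum.tendsto_atTop_zero
  -- each digit value tends to 0
  have hfd : ∀ d, d < q → Tendsto (fun j => f (d * q ^ j)) atTop (𝓝 0) := by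
    intro d hd
    rcases Nat.eq_zero_or_pos d with rfl | hd1
    · simpa [hf0] using tendsto_const_nhds (α := ℝ) (f := atTop (α := ℕ)) (a := 0)
    · refine squeeze_zero_norm (a := fun j : ℕ => Real.sqrt (b j)) (fun j => ?_) ?_
      · show |f (d * q ^ j)| ≤ Real.sqrt (b j)
        rw [← Real.sqrt_sq_eq_abs]
        apply Real.sqrt_le_sqrt
        exact Finset.single_le_sum (f := fun d => f (d * q ^ j) ^ 2)
          (fun i _ => sq_nonneg _) (Finset.mem_Ico.2 ⟨hd1, hd⟩)
      · have := (Real.continuous_sqrt.tendsto 0).comp hb0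
        simpa [Function.comp_def] using this
  -- vv tends to 0
  have hv0 : Tendsto (vv q f t) atTop (𝓝 0) := by
    have h : Tendsto (fun j : ℕ => ∑ d ∈ Finset.range q,
        ‖Complex.exp (Complex.I * t * f (d * q ^ j)) - 1‖) atTop
        (𝓝 (∑ _d ∈ Finset.range q, (0:ℝ))) := by
      apply tendsto_finset_sum
      intro d hd
      have hcont : Continuous fun x : ℝ => ‖Complex.exp (Complex.I * t * x) - 1‖ := by
        fun_prop
      have := (hcont.tendsto 0).comp (hfd d (Finset.mem_range.1 hd))
      simpa [Function.comp_def] using this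
    rw [Finset.sum_const_zero] at h; exact h
  -- cc tends to 1
  have hzsum : ∀ j, cc q f t j - 1 =
      (∑ d ∈ Finset.Ico 1 q, (Complex.exp (Complex.I * t * f (d * q ^ j)) - 1)) / q := by
    intro j
    rw [cc, div_sub' hqC]
    congr 1
    rw [Finset.sum_sub_distrib]
    have h0q : (0:ℕ) < q := by omega
    rw [Finset.range_eq_Ico, Finset.sum_eq_sum_Ico_succ_bot h0q]
    simp only [Nat.cast_zero, zero_mul, hf0, Complex.ofReal_zero, mul_zero, Complex.exp_zero]
    rw [Finset.sum_const, Nat.card_Ico, nsmul_eq_mul, mul_one]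
    push_cast [Nat.cast_sub (show 1 ≤ q by omega)]
    ring
  have hznorm : ∀ j, ‖cc q f t j - 1‖ ≤ vv q f t j := by
    intro j
    rw [hzsum, norm_div, Complex.norm_natCast]
    have h1 : ‖∑ d ∈ Finset.Ico 1 q, (Complex.exp (Complex.I * t * f (d * q ^ j)) - 1)‖ ≤
        vv q f t j := by
      refine (norm_sum_le _ _).trans ?_
      rw [vv, Finset.range_eq_Ico]
      apply Finset.sum_le_sum_of_subset_of_nonneg
      · intro d hd; simp only [Finset.mem_Ico] at *; omega
      · intro _ _ _; exact norm_nonneg _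
    have hvnn : 0 ≤ vv q f t j := Finset.sum_nonneg fun _ _ => norm_nonneg _
    calc _ ≤ vv q f t j / q := by gcongr
      _ ≤ vv q f t j := div_le_self hvnn (by exact_mod_cast (by omega : 1 ≤ q))
  -- cc tends to 1
  have hc1 : Tendsto (fun j => ‖cc q f t j - 1‖) atTop (𝓝 0) :=
    squeeze_zero (fun j => norm_nonneg _) hznorm hv0
  have hev1 : ∀ᶠ k in atTop, ‖cc q f t k - 1‖ ≤ 1/2 :=
    hc1.eventually_le_const (by norm_num)
  have hev2 : ∀ᶠ k in atTop, ∀ d ∈ Finset.range q, |t * f (d * q ^ k)| ≤ 1 := by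
    rw [Filter.eventually_all_finset]
    intro d hd
    have h1 : Tendsto (fun k => t * f (d * q ^ k)) atTop (𝓝 0) := by
      simpa using (hfd d (Finset.mem_range.1 hd)).const_mul t
    have habs : Tendsto (fun k => |t * f (d * q ^ k)|) atTop (𝓝 0) := by
      simpa using h1.abs
    exact habs.eventually_le_const one_pos
  obtain ⟨K₀, hK⟩ := Filter.eventually_atTop.1 (hev1.and hev2)
  have hKa : ∀ k, ‖cc q f t (K₀ + k) - 1‖ ≤ 1/2 := fun k => (hK _ (Nat.le_add_right _ _)).1
  have hKb : ∀ k d, d < q → |t * f (d * q ^ (K₀ + k))| ≤ 1 :=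
    fun k d hd => (hK _ (Nat.le_add_right _ _)).2 d (Finset.mem_range.2 hd)
  have hccne : ∀ k, cc q f t (K₀ + k) ≠ 0 := by
    intro k h0
    have := hKa k
    rw [h0] at this
    norm_num at this
  set g : ℕ → ℂ := fun k => Complex.log (cc q f t (K₀ + k)) with hgdef
  have hexpg : ∀ k, Complex.exp (g k) = cc q f t (K₀ + k) := fun k =>
    Complex.exp_log (hccne _)
  set z : ℕ → ℂ := fun k => cc q f t (K₀ + k) - 1 with hzdef
  set w : ℕ → ℂ := fun k => (∑ d ∈ Finset.Ico 1 q,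
      (Complex.exp (Complex.I * t * f (d * q ^ (K₀ + k))) - 1
        - Complex.I * t * f (d * q ^ (K₀ + k)))) / q with hwdef
  set dl : ℕ → ℂ := fun k => g k - z k with hdldef
  have hnormz : ∀ x : ℝ, ‖Complex.I * (t:ℂ) * (x:ℂ)‖ = |t * x| := by
    intro x
    rw [show Complex.I * (t:ℂ) * (x:ℂ) = Complex.I * (((t*x : ℝ)):ℂ) by push_cast; ring,
      norm_mul, Complex.norm_I, one_mul, Complex.norm_real, Real.norm_eq_abs]
  -- decomposition of g
  have hgdecomp : ∀ k, g k = (Complex.I * t / q) * ((a (K₀ + k) : ℝ) : ℂ) + w k + dl k := by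
    intro k
    have h1 : g k = z k + dl k := by rw [hdldef]; ring
    rw [h1, hzdef]
    simp only
    rw [hzsum]
    have h2 : ∑ d ∈ Finset.Ico 1 q,
        (Complex.exp (Complex.I * t * f (d * q ^ (K₀ + k))) - 1) =
        (∑ d ∈ Finset.Ico 1 q, Complex.I * (t:ℂ) * (f (d * q ^ (K₀ + k)) : ℂ)) +
        ∑ d ∈ Finset.Ico 1 q, (Complex.exp (Complex.I * t * f (d * q ^ (K₀ + k))) - 1
          - Complex.I * t * f (d * q ^ (K₀ + k))) := by
      rw [← Finset.sum_add_distrib]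
      apply Finset.sum_congr rfl
      intro d _
      ring
    have h3 : ∑ d ∈ Finset.Ico 1 q, Complex.I * (t:ℂ) * (f (d * q ^ (K₀ + k)) : ℂ) =
        Complex.I * (t:ℂ) * ((a (K₀ + k) : ℝ) : ℂ) := by
      rw [← Finset.mul_sum]
      congr 1
      rw [ha]
      push_cast
      rfl
    rw [h2, add_div, h3, hwdef]
    ring
  -- summability of w
  have hbshift : Summable (fun k => b (K₀ + k)) := by
    have := (summable_nat_add_iff (f := b) K₀).2 hbsum
    simpa [add_comm] using this
  have hwnorm : ∀ k, ‖w k‖ ≤ t^2 * b (K₀ + k) := by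
    intro k
    rw [hwdef]
    simp only
    rw [norm_div, Complex.norm_natCast]
    have hstep : ‖∑ d ∈ Finset.Ico 1 q,
        (Complex.exp (Complex.I * t * f (d * q ^ (K₀ + k))) - 1
          - Complex.I * t * f (d * q ^ (K₀ + k)))‖ ≤ t^2 * b (K₀ + k) := by
      refine (norm_sum_le _ _).trans ?_
      rw [hbdef]
      simp only
      rw [Finset.mul_sum]
      apply Finset.sum_le_sum
      intro d hd
      have hd' : d < q := (Finset.mem_Ico.1 hd).2
      have h1 : ‖Complex.I * (t:ℂ) * ((f (d * q ^ (K₀ + k)) : ℝ) : ℂ)‖ ≤ 1 := by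
        rw [hnormz]; exact hKb k d hd'
      have h2 := Complex.norm_exp_sub_one_sub_id_le (x := Complex.I * t * f (d * q ^ (K₀ + k)))
        h1
      refine h2.trans ?_
      rw [hnormz, abs_mul, mul_pow, sq_abs, sq_abs]
    calc _ ≤ (t^2 * b (K₀ + k)) / q := by gcongr
      _ ≤ t^2 * b (K₀ + k) := by
          apply div_le_self (by positivity) (by exact_mod_cast (by omega : 1 ≤ q))
  have hwsum : Summable w :=
    Summable.of_norm_bounded (hbshift.mul_left (t^2)) hwnorm
  -- summability of dl
  have hdlb : ∀ k, ‖dl k‖ ≤ ‖z k‖^2 := by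
    intro k
    have h12 : ‖z k‖ ≤ 1/2 := hKa k
    have hlt : ‖z k‖ < 1 := lt_of_le_of_lt h12 (by norm_num)
    have h1z : (1:ℂ) + z k = cc q f t (K₀ + k) := by rw [hzdef]; ring
    have hb1 := Complex.norm_log_one_add_sub_self_le hlt
    have heq : dl k = Complex.log (1 + z k) - z k := by rw [hdldef, hgdef]; simp only; rw [h1z]
    rw [heq]
    refine hb1.trans ?_
    have hzn : (0:ℝ) ≤ ‖z k‖ := norm_nonneg _
    have h2 : (1 - ‖z k‖)⁻¹ ≤ 2 := by
      rw [inv_le_comm₀ (by linarith) (by norm_num)]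
      linarith
    nlinarith [sq_nonneg ‖z k‖]
  have hz2 : ∀ k, ‖z k‖^2 ≤ (4 * q * t^2) * b (K₀ + k) := by
    intro k
    have h1 : ‖z k‖ ≤ ∑ d ∈ Finset.Ico 1 q, 2 * |t * f (d * q ^ (K₀ + k))| := by
      rw [hzdef]
      simp only
      rw [hzsum, norm_div, Complex.norm_natCast]
      have h2 : ‖∑ d ∈ Finset.Ico 1 q,
          (Complex.exp (Complex.I * t * f (d * q ^ (K₀ + k))) - 1)‖ ≤
          ∑ d ∈ Finset.Ico 1 q, 2 * |t * f (d * q ^ (K₀ + k))| := by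
        refine (norm_sum_le _ _).trans ?_
        apply Finset.sum_le_sum
        intro d hd
        have hd' : d < q := (Finset.mem_Ico.1 hd).2
        have h3 := Complex.norm_exp_sub_one_le (x := Complex.I * t * f (d * q ^ (K₀ + k)))
          (by rw [hnormz]; exact hKb k d hd')
        rw [hnormz] at h3
        exact h3
      calc _ ≤ (∑ d ∈ Finset.Ico 1 q, 2 * |t * f (d * q ^ (K₀ + k))|) / q := by gcongr
        _ ≤ _ := div_le_self (Finset.sum_nonneg fun d _ => by positivity)
            (by exact_mod_cast (by omega : 1 ≤ q))
    have h4 : (∑ d ∈ Finset.Ico 1 q, 2 * |t * f (d * q ^ (K₀ + k))|)^2 ≤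
        (Finset.Ico 1 q).card * ∑ d ∈ Finset.Ico 1 q, (2 * |t * f (d * q ^ (K₀ + k))|)^2 :=
      sq_sum_le_card_mul_sum_sq
    have h5 : ∑ d ∈ Finset.Ico 1 q, (2 * |t * f (d * q ^ (K₀ + k))|)^2 =
        4 * t^2 * b (K₀ + k) := by
      rw [hbdef]
      simp only
      rw [Finset.mul_sum]
      apply Finset.sum_congr rfl
      intro d _
      rw [mul_pow, sq_abs]
      ring
    have hcard : ((Finset.Ico 1 q).card : ℝ) ≤ q := by
      rw [Nat.card_Ico]
      exact_mod_cast Nat.sub_le q 1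
    have h6 : ‖z k‖^2 ≤ (∑ d ∈ Finset.Ico 1 q, 2 * |t * f (d * q ^ (K₀ + k))|)^2 :=
      pow_le_pow_left₀ (norm_nonneg _) h1 2
    calc ‖z k‖^2 ≤ (∑ d ∈ Finset.Ico 1 q, 2 * |t * f (d * q ^ (K₀ + k))|)^2 := h6
      _ ≤ (Finset.Ico 1 q).card * (4 * t^2 * b (K₀ + k)) := by rw [← h5]; exact h4
      _ ≤ q * (4 * t^2 * b (K₀ + k)) := by
          apply mul_le_mul_of_nonneg_right hcard
          have := hbnn (K₀ + k)
          positivity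
      _ = (4 * q * t^2) * b (K₀ + k) := by ring
  have hdlsum : Summable dl :=
    Summable.of_norm_bounded (hbshift.mul_left (4 * q * t^2))
      (fun k => (hdlb k).trans (hz2 k))
  -- partial sums of a shifted converge
  have hashift : Tendsto (fun J => ∑ k ∈ Finset.range J, a (K₀ + k)) atTop
      (𝓝 (S - ∑ k ∈ Finset.range K₀, a k)) := by
    have hidd : ∀ J, ∑ k ∈ Finset.range J, a (K₀ + k) =
        (∑ k ∈ Finset.range (K₀ + J), a k) - ∑ k ∈ Finset.range K₀, a k := by
      intro J
      rw [Finset.sum_range_add]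
      ring
    simp only [hidd]
    apply Tendsto.sub_const
    apply hS.comp
    apply tendsto_atTop_atTop.2
    intro bb
    exact ⟨bb, fun n hn => by omega⟩
  -- partial sums of g converge
  have hGlim : ∃ Λ : ℂ, Tendsto (fun J => ∑ k ∈ Finset.range J, g k) atTop (𝓝 Λ) := by
    refine ⟨(Complex.I * t / q) * ((S - ∑ k ∈ Finset.range K₀, a k : ℝ) : ℂ) +
      (∑' k, w k) + (∑' k, dl k), ?_⟩
    have hre : ∀ J, ∑ k ∈ Finset.range J, g k =
        (Complex.I * t / q) * ((∑ k ∈ Finset.range J, a (K₀ + k) : ℝ) : ℂ) +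
        (∑ k ∈ Finset.range J, w k) + ∑ k ∈ Finset.range J, dl k := by
      intro J
      rw [Finset.sum_congr rfl (fun k _ => hgdecomp k), Finset.sum_add_distrib,
        Finset.sum_add_distrib, ← Finset.mul_sum]
      congr 2
      push_cast
      rfl
    simp only [hre]
    apply Tendsto.add
    apply Tendsto.add
    · apply Tendsto.const_mul
      exact (Complex.continuous_ofReal.tendsto _).comp hashift
    · exact hwsum.hasSum.tendsto_sum_nat
    · exact hdlsum.hasSum.tendsto_sum_nat
  obtain ⟨Λ, hG⟩ := hGlim
  set G : ℕ → ℂ := fun J => ∑ k ∈ Finset.range J, g k with hGdef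
  refine ⟨fun s => (∏ j ∈ Finset.Ico s K₀, cc q f t j) * Complex.exp (Λ - G (s - K₀)),
    ?_, ?_, ?_, hv0⟩
  · -- recursion Pi s = cc s * Pi (s+1)
    intro s
    dsimp only
    rcases lt_or_ge s K₀ with hs | hs
    · have h1 : s - K₀ = 0 := by omega
      have h2 : s + 1 - K₀ = 0 := by omega
      rw [h1, h2, Finset.prod_eq_prod_Ico_succ_bot hs]
      ring
    · have h1 : Finset.Ico s K₀ = ∅ := Finset.Ico_eq_empty (by omega)
      have h2 : Finset.Ico (s+1) K₀ = ∅ := Finset.Ico_eq_empty (by omega)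
      rw [h1, h2]
      simp only [Finset.prod_empty, one_mul]
      have h3 : s + 1 - K₀ = (s - K₀) + 1 := by omega
      rw [h3]
      have h4 : G ((s - K₀) + 1) = G (s - K₀) + g (s - K₀) := by
        rw [hGdef]
        exact Finset.sum_range_succ _ _
      have h5 : cc q f t s = Complex.exp (g (s - K₀)) := by
        rw [hexpg]
        congr 1
        omega
      rw [h4, h5, ← Complex.exp_add]
      congr 1
      ring
  · -- Pi tends to 1
    have hGs : Tendsto (fun s : ℕ => G (s - K₀)) atTop (𝓝 Λ) := by
      apply hG.comp
      apply tendsto_atTop_atTop.2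
      intro bb
      exact ⟨bb + K₀, fun n hn => by omega⟩
    have h1 : Tendsto (fun s : ℕ => Complex.exp (Λ - G (s - K₀))) atTop (𝓝 1) := by
      have h2 : Tendsto (fun s : ℕ => Λ - G (s - K₀)) atTop (𝓝 0) := by
        simpa using ((tendsto_const_nhds : Tendsto (fun _ : ℕ => Λ) atTop (𝓝 Λ)).sub hGs)
      have h3 := (Complex.continuous_exp.tendsto 0).comp h2
      simpa [Function.comp_def] using h3
    apply h1.congr'
    filter_upwards [Filter.eventually_ge_atTop K₀] with s hs
    rw [Finset.Ico_eq_empty (by omega)]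
    simp
  · -- partial products converge to Pi 0
    have hstep : Tendsto (fun J : ℕ => (∏ j ∈ Finset.range K₀, cc q f t j) *
        Complex.exp (G (J - K₀))) atTop
        (𝓝 ((∏ j ∈ Finset.range K₀, cc q f t j) * Complex.exp Λ)) := by
      apply Tendsto.const_mul
      apply (Complex.continuous_exp.tendsto _).comp
      apply hG.comp
      apply tendsto_atTop_atTop.2
      intro bb
      exact ⟨bb + K₀, fun n hn => by omega⟩
    have hPi0 : (∏ j ∈ Finset.Ico 0 K₀, cc q f t j) * Complex.exp (Λ - G (0 - K₀)) =
        (∏ j ∈ Finset.range K₀, cc q f t j) * Complex.exp Λ := by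
      rw [← Finset.range_eq_Ico]
      congr 1
      have h0 : (0:ℕ) - K₀ = 0 := by omega
      rw [h0]
      simp [hGdef]
    dsimp only
    rw [hPi0]
    apply hstep.congr'
    filter_upwards [Filter.eventually_ge_atTop K₀] with J hJ
    have e1 : Complex.exp (G (J - K₀)) = ∏ k ∈ Finset.range (J - K₀), cc q f t (K₀ + k) := by
      rw [hGdef]
      rw [Complex.exp_sum]
      exact Finset.prod_congr rfl fun k _ => hexpg k
    rw [e1, ← Finset.prod_Ico_eq_prod_range, Finset.prod_range_mul_prod_Ico (cc q f t) hJ]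

end C


section D
variable {q : ℕ} {f : ℕ → ℝ} {t : ℝ}

-- weighted tail lemma
lemma wt1 {Q : ℝ} (hQ : 2 ≤ Q) {v : ℕ → ℝ} (hnn : ∀ j, 0 ≤ v j)
    (hv : Tendsto v atTop (𝓝 0)) :
    Tendsto (fun L => ∑ j ∈ Finset.range L, v j * Q ^ j / Q ^ L) atTop (𝓝 0) := by
  have hQ0 : (0:ℝ) < Q := by linarith
  have hQ1 : (1:ℝ) < Q := by linarith
  rw [Metric.tendsto_atTop]
  intro ε hε
  obtain ⟨K, hK⟩ := Filter.eventually_atTop.1 (hv.eventually_le_const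
    (show (0:ℝ) < ε/4 by linarith))
  have hC : Tendsto (fun L : ℕ => (∑ j ∈ Finset.range K, v j * Q ^ j) / Q ^ L) atTop (𝓝 0) :=
    Tendsto.div_atTop tendsto_const_nhds (tendsto_pow_atTop_atTop_of_one_lt hQ1)
  obtain ⟨L₀, hL₀⟩ := Filter.eventually_atTop.1 (hC.eventually_le_const
    (show (0:ℝ) < ε/2 by linarith))
  refine ⟨max K L₀, fun L hL => ?_⟩
  have hLK : K ≤ L := le_trans (le_max_left _ _) hL
  have hterm_nonneg : ∀ j, 0 ≤ v j * Q ^ j / Q ^ L := fun j =>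
    div_nonneg (mul_nonneg (hnn j) (by positivity)) (by positivity)
  have hsplit : ∑ j ∈ Finset.range L, v j * Q ^ j / Q ^ L =
      (∑ j ∈ Finset.range K, v j * Q ^ j / Q ^ L) +
      ∑ j ∈ Finset.Ico K L, v j * Q ^ j / Q ^ L := by
    rw [show Finset.range L = Finset.Ico 0 L by rw [Finset.range_eq_Ico],
      show Finset.range K = Finset.Ico 0 K by rw [Finset.range_eq_Ico],
      ← Finset.sum_Ico_consecutive _ (Nat.zero_le K) hLK]
  have h1 : ∑ j ∈ Finset.range K, v j * Q ^ j / Q ^ L ≤ ε/2 := by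
    have := hL₀ L (le_trans (le_max_right _ _) hL)
    calc ∑ j ∈ Finset.range K, v j * Q ^ j / Q ^ L
        = (∑ j ∈ Finset.range K, v j * Q ^ j) / Q ^ L := by
          rw [Finset.sum_div]
      _ ≤ ε/2 := this
  have h2 : ∑ j ∈ Finset.Ico K L, v j * Q ^ j / Q ^ L ≤ ε/4 := by
    have hstep : ∑ j ∈ Finset.Ico K L, v j * Q ^ j / Q ^ L ≤
        ∑ j ∈ Finset.Ico K L, (ε/4) * Q ^ j / Q ^ L := by
      apply Finset.sum_le_sum
      intro j hj
      have hjK : K ≤ j := (Finset.mem_Ico.1 hj).1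
      have hvj := hK j hjK
      gcongr
    refine hstep.trans ?_
    have hgeo : ∑ j ∈ Finset.Ico K L, Q ^ j ≤ Q ^ L := by
      calc ∑ j ∈ Finset.Ico K L, Q ^ j ≤ ∑ j ∈ Finset.range L, Q ^ j := by
            apply Finset.sum_le_sum_of_subset_of_nonneg
            · rw [Finset.range_eq_Ico]
              exact Finset.Ico_subset_Ico (Nat.zero_le _) le_rfl
            · intro j _ _; positivity
        _ = (Q ^ L - 1) / (Q - 1) := geom_sum_eq (by linarith) L
        _ ≤ Q ^ L := by
            rw [div_le_iff₀ (by linarith)]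
            have : (0:ℝ) < Q ^ L := by positivity
            nlinarith
    calc ∑ j ∈ Finset.Ico K L, (ε/4) * Q ^ j / Q ^ L
        = (ε/4) * ((∑ j ∈ Finset.Ico K L, Q ^ j) / Q ^ L) := by
          rw [Finset.sum_div, Finset.mul_sum]
          apply Finset.sum_congr rfl
          intro j _
          ring
      _ ≤ (ε/4) * 1 := by
          apply mul_le_mul_of_nonneg_left _ (by linarith)
          rw [div_le_one (by positivity)]
          exact hgeo
      _ = ε/4 := by ring
  rw [Real.dist_eq, sub_zero, abs_of_nonneg (Finset.sum_nonneg fun j _ => hterm_nonneg j)]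
  rw [hsplit]
  linarith

-- triangular sum swap
lemma tri_swap {M : Type*} [AddCommMonoid M] (L : ℕ) (g : ℕ → ℕ → M) :
    ∑ j ∈ Finset.range L, ∑ i ∈ Finset.Ico (j+1) L, g j i =
    ∑ i ∈ Finset.range L, ∑ j ∈ Finset.range i, g j i := by
  apply Finset.sum_comm'
  intro j i
  simp only [Finset.mem_range, Finset.mem_Ico]
  omega

-- the main inductive bound
lemma main_bound (hq : 2 ≤ q) (hf : IsQAdditive q f) (Pi : ℕ → ℂ)
    (hPi : ∀ s, Pi s = cc q f t s * Pi (s + 1)) :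
    ∀ N s, ‖TT q f t s N - N * Pi s‖ ≤
      ∑ j ∈ Finset.range (lenb q N), (q:ℝ)^j *
        (vv q f t (s+j) + q * ‖1 - Pi (s+j)‖ +
          q * ∑ k ∈ Finset.range (lenb q N - 1 - j), vv q f t (s+j+1+k)) := by
  intro N
  induction N using Nat.strong_induction_on with
  | _ N ih =>
    intro s
    rcases eq_or_ne N 0 with rfl | hN0
    · simp [TT, lenb_zero]
    · have hq0C : (q:ℂ) ≠ 0 := by simp only [ne_eq, Nat.cast_eq_zero]; omega
      have hqR : (0:ℝ) < q := by positivity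
      set M := N / q with hM
      set r := N % q with hr
      have hMN : M < N := Nat.div_lt_self (by omega) (by omega)
      have hrq : r < q := Nat.mod_lt _ (by omega)
      have hNrec : M * q + r = N := Nat.div_add_mod' _ _
      set L := lenb q M with hL
      have hlen : lenb q N = L + 1 := lenb_succ hq hN0
      -- the exact algebraic identity
      have hsum_cc : (∑ d ∈ Finset.range q, Complex.exp (Complex.I * t * f (d * q ^ s))) =
          (q:ℂ) * cc q f t s := by
        rw [cc, mul_div_cancel₀ _ hq0C]
      have hNcast : (N:ℂ) = (q:ℂ) * M + r := by
        rw [← hNrec]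
        push_cast
        ring
      have key : TT q f t s N - N * Pi s =
          ((q:ℂ) * cc q f t s) * (TT q f t (s+1) M - M * Pi (s+1)) +
          (Complex.exp (Complex.I * t * f (M * q ^ (s+1))) *
              (∑ e ∈ Finset.range r, Complex.exp (Complex.I * t * f (e * q ^ s)))
            - r * Pi s) := by
        rw [TT_rec hq hf s N, hsum_cc, hNcast, ← hM, ← hr]
        have hPis : Pi s = cc q f t s * Pi (s+1) := hPi s
        rw [hPis]
        ring
      -- bound the residual
      have hresid : ‖Complex.exp (Complex.I * t * f (M * q ^ (s+1))) *
            (∑ e ∈ Finset.range r, Complex.exp (Complex.I * t * f (e * q ^ s)))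
          - r * Pi s‖ ≤
          vv q f t s + q * ‖1 - Pi s‖ +
            q * ∑ k ∈ Finset.range L, vv q f t (s+1+k) := by
        have hdecomp : Complex.exp (Complex.I * t * f (M * q ^ (s+1))) *
              (∑ e ∈ Finset.range r, Complex.exp (Complex.I * t * f (e * q ^ s)))
            - r * Pi s =
            Complex.exp (Complex.I * t * f (M * q ^ (s+1))) *
              ((∑ e ∈ Finset.range r, Complex.exp (Complex.I * t * f (e * q ^ s))) - r) +
            (r:ℂ) * (Complex.exp (Complex.I * t * f (M * q ^ (s+1))) - 1) +
            (r:ℂ) * (1 - Pi s) := by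
          ring
        rw [hdecomp]
        have hb1 : ‖Complex.exp (Complex.I * t * f (M * q ^ (s+1))) *
            ((∑ e ∈ Finset.range r, Complex.exp (Complex.I * t * f (e * q ^ s))) - r)‖ ≤
            vv q f t s := by
          rw [norm_mul, norm_exp_I_mul, one_mul]
          have hrsum : ((r:ℂ)) = ∑ e ∈ Finset.range r, (1:ℂ) := by simp
          rw [hrsum, ← Finset.sum_sub_distrib]
          refine (norm_sum_le _ _).trans ?_
          rw [vv]
          apply Finset.sum_le_sum_of_subset_of_nonneg
          · exact Finset.range_subset_range.2 (le_of_lt hrq)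
          · intro _ _ _; exact norm_nonneg _
        have hb2 : ‖(r:ℂ) * (Complex.exp (Complex.I * t * f (M * q ^ (s+1))) - 1)‖ ≤
            q * ∑ k ∈ Finset.range L, vv q f t (s+1+k) := by
          rw [norm_mul, Complex.norm_natCast]
          have h1 : (r:ℝ) ≤ q := by exact_mod_cast le_of_lt hrq
          have h2 := phase_bound hq hf (t := t) (s+1) M
          calc (r:ℝ) * ‖Complex.exp (Complex.I * t * f (M * q ^ (s+1))) - 1‖
              ≤ q * ‖Complex.exp (Complex.I * t * f (M * q ^ (s+1))) - 1‖ :=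
                mul_le_mul_of_nonneg_right h1 (norm_nonneg _)
            _ ≤ q * ∑ k ∈ Finset.range L, vv q f t (s+1+k) := by
                apply mul_le_mul_of_nonneg_left _ (le_of_lt hqR)
                exact h2
        have hb3 : ‖(r:ℂ) * (1 - Pi s)‖ ≤ q * ‖1 - Pi s‖ := by
          rw [norm_mul, Complex.norm_natCast]
          apply mul_le_mul_of_nonneg_right _ (norm_nonneg _)
          exact_mod_cast le_of_lt hrq
        calc ‖_ + _ + _‖ ≤ ‖_ + _‖ + ‖_‖ := norm_add_le _ _
          _ ≤ ‖_‖ + ‖_‖ + ‖_‖ := by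
              apply add_le_add_left
              exact norm_add_le _ _
          _ ≤ _ := by linarith [hb1, hb2, hb3]
      -- apply IH
      have hIH := ih M hMN (s+1)
      have hccle : ‖cc q f t s‖ ≤ 1 := cc_norm_le hq s
      have hnorm1 : ‖TT q f t s N - N * Pi s‖ ≤
          q * ‖TT q f t (s+1) M - M * Pi (s+1)‖ +
          (vv q f t s + q * ‖1 - Pi s‖ +
            q * ∑ k ∈ Finset.range L, vv q f t (s+1+k)) := by
        rw [key]
        refine (norm_add_le _ _).trans ?_
        apply add_le_add _ hresid
        rw [norm_mul, norm_mul, Complex.norm_natCast]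
        calc (q:ℝ) * ‖cc q f t s‖ * ‖TT q f t (s+1) M - M * Pi (s+1)‖
            ≤ q * 1 * ‖TT q f t (s+1) M - M * Pi (s+1)‖ := by
              apply mul_le_mul_of_nonneg_right _ (norm_nonneg _)
              exact mul_le_mul_of_nonneg_left hccle (le_of_lt hqR)
          _ = q * ‖TT q f t (s+1) M - M * Pi (s+1)‖ := by ring
      -- RHS decomposition
      have hRHS : ∑ j ∈ Finset.range (lenb q N), (q:ℝ)^j *
            (vv q f t (s+j) + q * ‖1 - Pi (s+j)‖ +
              q * ∑ k ∈ Finset.range (lenb q N - 1 - j), vv q f t (s+j+1+k)) =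
          (vv q f t s + q * ‖1 - Pi s‖ +
            q * ∑ k ∈ Finset.range L, vv q f t (s+1+k)) +
          q * ∑ j ∈ Finset.range L, (q:ℝ)^j *
            (vv q f t ((s+1)+j) + q * ‖1 - Pi ((s+1)+j)‖ +
              q * ∑ k ∈ Finset.range (L - 1 - j), vv q f t ((s+1)+j+1+k)) := by
        rw [hlen, Finset.sum_range_succ']
        have hterm0 : (q:ℝ)^0 *
            (vv q f t (s+0) + q * ‖1 - Pi (s+0)‖ +
              q * ∑ k ∈ Finset.range (L + 1 - 1 - 0), vv q f t (s+0+1+k)) =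
            vv q f t s + q * ‖1 - Pi s‖ +
              q * ∑ k ∈ Finset.range L, vv q f t (s+1+k) := by
          norm_num
        rw [hterm0]
        have hj : ∀ j ∈ Finset.range L, (q:ℝ)^(j+1) *
            (vv q f t (s+(j+1)) + q * ‖1 - Pi (s+(j+1))‖ +
              q * ∑ k ∈ Finset.range (L + 1 - 1 - (j+1)), vv q f t (s+(j+1)+1+k)) =
            q * ((q:ℝ)^j * (vv q f t ((s+1)+j) + q * ‖1 - Pi ((s+1)+j)‖ +
              q * ∑ k ∈ Finset.range (L - 1 - j), vv q f t ((s+1)+j+1+k))) := by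
          intro j _
          have e1 : s + (j + 1) = (s+1) + j := by omega
          have e2 : L + 1 - 1 - (j+1) = L - 1 - j := by omega
          rw [e1, e2, pow_succ]
          ring
        rw [Finset.sum_congr rfl hj, ← Finset.mul_sum]
        ring
      rw [hRHS]
      have := mul_le_mul_of_nonneg_left hIH (le_of_lt hqR)
      linarith

end D


set_option maxHeartbeats 2000000 in
/-- If the two series `∑_j ∑_{d=1}^{q-1} f(d q^j)` and `∑_j ∑_{d=1}^{q-1} f(d q^j)²`
converge, then for every real `t` the empirical characteristic functions converge to the
convergent infinite product `∏_{j≥0} ((1/q) ∑_{d=0}^{q-1} e^{i t f(d q^j)})`. -/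
theorem q_ary_char_fun_limit (q : ℕ) (hq : 2 ≤ q) (f : ℕ → ℝ) (hf : IsQAdditive q f)
    (hS : ∃ S : ℝ, Tendsto
      (fun J : ℕ => ∑ j ∈ Finset.range J, ∑ d ∈ Finset.Ico 1 q, f (d * q ^ j))
      atTop (𝓝 S))
    (hS2 : ∃ S2 : ℝ, Tendsto
      (fun J : ℕ => ∑ j ∈ Finset.range J, ∑ d ∈ Finset.Ico 1 q, f (d * q ^ j) ^ 2)
      atTop (𝓝 S2)) :
    ∀ t : ℝ, ∃ P : ℂ,
      Tendsto (fun J : ℕ => ∏ j ∈ Finset.range J,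
          ((∑ d ∈ Finset.range q, Complex.exp (Complex.I * t * f (d * q ^ j))) / q))
        atTop (𝓝 P) ∧
      Tendsto (fun N : ℕ => empCharFun f N t) atTop (𝓝 P) := by
  intro t
  obtain ⟨S, hS⟩ := hS
  obtain ⟨S2, hS2⟩ := hS2
  obtain ⟨Pi, hPirec, hPi1, hPiprod, hv0⟩ := prod_part (t := t) hq (f_zero hf) hS hS2
  have hqR : (0:ℝ) < q := by positivity
  have hqR2 : (2:ℝ) ≤ (q:ℝ) := by exact_mod_cast hq
  refine ⟨Pi 0, by simpa [cc] using hPiprod, ?_⟩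
  -- p_j := ‖1 - Pi j‖ tends to 0
  have hp0 : Tendsto (fun j => ‖1 - Pi j‖) atTop (𝓝 0) := by
    have h := tendsto_iff_norm_sub_tendsto_zero.1 hPi1
    apply h.congr
    intro j
    rw [norm_sub_rev]
  -- the majorant
  set pp : ℕ → ℝ := fun j => ‖1 - Pi j‖ with hppdef
  set H : ℕ → ℝ := fun L => (q:ℝ) * (∑ j ∈ Finset.range L, (q:ℝ)^j *
      (vv q f t j + q * pp j + q * ∑ k ∈ Finset.range (L-1-j), vv q f t (j+1+k))) / q^L
    with hHdef
  have hvnn : ∀ j, 0 ≤ vv q f t j := fun j => vv_nonneg j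
  have hppnn : ∀ j, 0 ≤ pp j := fun j => norm_nonneg _
  have hinn : ∀ L j, (0:ℝ) ≤ ∑ k ∈ Finset.range (L-1-j), vv q f t (j+1+k) :=
    fun L j => Finset.sum_nonneg fun k _ => hvnn _
  have htermnn : ∀ L j, (0:ℝ) ≤ (q:ℝ)^j *
      (vv q f t j + q * pp j + q * ∑ k ∈ Finset.range (L-1-j), vv q f t (j+1+k)) := by
    intro L j
    exact mul_nonneg (pow_nonneg (le_of_lt hqR) j)
      (add_nonneg (add_nonneg (hvnn j) (mul_nonneg (le_of_lt hqR) (hppnn j)))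
        (mul_nonneg (le_of_lt hqR) (hinn L j)))
  -- H tends to zero
  have hHto : Tendsto H atTop (𝓝 0) := by
    have hA : Tendsto (fun L => ∑ j ∈ Finset.range L, vv q f t j * (q:ℝ)^j / (q:ℝ)^L)
        atTop (𝓝 0) := wt1 hqR2 hvnn hv0
    have hB : Tendsto (fun L => ∑ j ∈ Finset.range L, pp j * (q:ℝ)^j / (q:ℝ)^L)
        atTop (𝓝 0) := wt1 hqR2 hppnn hp0
    -- upper bound function
    have hupper : ∀ L, H L ≤
        (q:ℝ) * (∑ j ∈ Finset.range L, vv q f t j * (q:ℝ)^j / (q:ℝ)^L) +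
        (q:ℝ)^2 * (∑ j ∈ Finset.range L, pp j * (q:ℝ)^j / (q:ℝ)^L) +
        (q:ℝ)^2 * (∑ j ∈ Finset.range L, vv q f t j * (q:ℝ)^j / (q:ℝ)^L) := by
      intro L
      -- split H L
      have hsplit : H L = (q:ℝ) * (∑ j ∈ Finset.range L, vv q f t j * (q:ℝ)^j / (q:ℝ)^L) +
          (q:ℝ)^2 * (∑ j ∈ Finset.range L, pp j * (q:ℝ)^j / (q:ℝ)^L) +
          (q:ℝ)^2 * ((∑ j ∈ Finset.range L, (q:ℝ)^j *
            ∑ k ∈ Finset.range (L-1-j), vv q f t (j+1+k)) / (q:ℝ)^L) := by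
        rw [hHdef]
        simp only
        rw [← Finset.sum_div, ← Finset.sum_div]
        have e1 : ∑ j ∈ Finset.range L, (q:ℝ)^j *
            (vv q f t j + q * pp j + q * ∑ k ∈ Finset.range (L-1-j), vv q f t (j+1+k)) =
            (∑ j ∈ Finset.range L, vv q f t j * (q:ℝ)^j) +
            (q:ℝ) * (∑ j ∈ Finset.range L, pp j * (q:ℝ)^j) +
            (q:ℝ) * ∑ j ∈ Finset.range L, (q:ℝ)^j *
              ∑ k ∈ Finset.range (L-1-j), vv q f t (j+1+k) := by
          rw [Finset.mul_sum, Finset.mul_sum, ← Finset.sum_add_distrib,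
            ← Finset.sum_add_distrib]
          apply Finset.sum_congr rfl
          intro j _
          ring
        rw [e1]
        have hpL : ((q:ℝ)^L) ≠ 0 := by positivity
        field_simp
      rw [hsplit]
      have hS3le : (∑ j ∈ Finset.range L, (q:ℝ)^j *
            ∑ k ∈ Finset.range (L-1-j), vv q f t (j+1+k)) / (q:ℝ)^L ≤
          ∑ j ∈ Finset.range L, vv q f t j * (q:ℝ)^j / (q:ℝ)^L := by
        have hswap : ∑ j ∈ Finset.range L, (q:ℝ)^j *
            ∑ k ∈ Finset.range (L-1-j), vv q f t (j+1+k) =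
            ∑ i ∈ Finset.range L, (∑ j ∈ Finset.range i, (q:ℝ)^j) * vv q f t i := by
          have e2 : ∀ j, (q:ℝ)^j * ∑ k ∈ Finset.range (L-1-j), vv q f t (j+1+k) =
              ∑ i ∈ Finset.Ico (j+1) L, (q:ℝ)^j * vv q f t i := by
            intro j
            rw [Finset.sum_Ico_eq_sum_range]
            have e3 : L - (j+1) = L - 1 - j := by omega
            rw [e3, Finset.mul_sum]
          rw [Finset.sum_congr rfl (fun j _ => e2 j), tri_swap]
          apply Finset.sum_congr rfl
          intro i _
          rw [Finset.sum_mul]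
        rw [hswap, Finset.sum_div]
        apply Finset.sum_le_sum
        intro i _
        have hgeom : ∑ j ∈ Finset.range i, (q:ℝ)^j ≤ (q:ℝ)^i := by
          rw [geom_sum_eq (by linarith) i]
          rw [div_le_iff₀ (by linarith)]
          have : (0:ℝ) < (q:ℝ)^i := by positivity
          nlinarith
        have hpLpos : (0:ℝ) < (q:ℝ)^L := by positivity
        apply (div_le_div_iff_of_pos_right hpLpos).2
        calc (∑ j ∈ Finset.range i, (q:ℝ)^j) * vv q f t i ≤ (q:ℝ)^i * vv q f t i :=
              mul_le_mul_of_nonneg_right hgeom (hvnn i)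
          _ = vv q f t i * (q:ℝ)^i := by ring
      have h2 : (0:ℝ) ≤ (q:ℝ)^2 := by positivity
      nlinarith [hS3le, h2]
    have hHnn : ∀ L, 0 ≤ H L := by
      intro L
      rw [hHdef]
      simp only
      apply div_nonneg _ (by positivity)
      apply mul_nonneg (le_of_lt hqR)
      exact Finset.sum_nonneg fun j _ => htermnn L j
    have hup : Tendsto (fun L =>
        (q:ℝ) * (∑ j ∈ Finset.range L, vv q f t j * (q:ℝ)^j / (q:ℝ)^L) +
        (q:ℝ)^2 * (∑ j ∈ Finset.range L, pp j * (q:ℝ)^j / (q:ℝ)^L) +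
        (q:ℝ)^2 * (∑ j ∈ Finset.range L, vv q f t j * (q:ℝ)^j / (q:ℝ)^L))
        atTop (𝓝 0) := by
      have := ((hA.const_mul (q:ℝ)).add (hB.const_mul ((q:ℝ)^2))).add
        (hA.const_mul ((q:ℝ)^2))
      simpa using this
    exact squeeze_zero hHnn hupper hup
  -- the eventual bound
  have hbound : ∀ N : ℕ, 1 ≤ N → ‖empCharFun f N t - Pi 0‖ ≤ H (lenb q N) := by
    intro N hN1
    have hN0 : N ≠ 0 := by omega
    have hNR : (0:ℝ) < N := by positivity
    have hNC : (N:ℂ) ≠ 0 := by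
      simp only [ne_eq, Nat.cast_eq_zero]
      omega
    have hemp : empCharFun f N t = TT q f t 0 N / N := by
      rw [empCharFun, TT]
      congr 1
      apply Finset.sum_congr rfl
      intro n _
      norm_num
    have h1 : empCharFun f N t - Pi 0 = (TT q f t 0 N - N * Pi 0) / N := by
      rw [hemp]
      field_simp
    rw [h1, norm_div, Complex.norm_natCast]
    have hmb := main_bound (t := t) hq hf Pi hPirec N 0
    simp only [Nat.zero_add] at hmb
    set L := lenb q N with hLdef
    have hL1 : 1 ≤ L := by
      rw [hLdef, lenb]
      simp [hN0]
    have hpow : (q:ℝ)^(L-1) ≤ N := by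
      exact_mod_cast pow_lenb_le (q := q) hN0
    have hBnn : (0:ℝ) ≤ ∑ j ∈ Finset.range L, (q:ℝ)^j *
        (vv q f t j + q * pp j + q * ∑ k ∈ Finset.range (L-1-j), vv q f t (j+1+k)) :=
      Finset.sum_nonneg fun j _ => htermnn L j
    calc ‖TT q f t 0 N - N * Pi 0‖ / N
        ≤ (∑ j ∈ Finset.range L, (q:ℝ)^j *
            (vv q f t j + q * pp j + q * ∑ k ∈ Finset.range (L-1-j), vv q f t (j+1+k))) / N := by
          exact (div_le_div_iff_of_pos_right hNR).2 hmb
      _ ≤ (∑ j ∈ Finset.range L, (q:ℝ)^j *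
            (vv q f t j + q * pp j + q * ∑ k ∈ Finset.range (L-1-j), vv q f t (j+1+k))) /
            (q:ℝ)^(L-1) :=
          div_le_div_of_nonneg_left hBnn (by positivity) hpow
      _ = H L := by
          rw [hHdef]
          simp only
          have e : (q:ℝ)^L = (q:ℝ)^(L-1) * q := by
            rw [← pow_succ]
            congr 1
            omega
          rw [e]
          have h1 : ((q:ℝ)^(L-1)) ≠ 0 := by positivity
          have h2 : ((q:ℝ)) ≠ 0 := by positivity
          field_simp
  -- conclude
  rw [tendsto_iff_norm_sub_tendsto_zero]
  apply squeeze_zero' (Eventually.of_forall fun N => norm_nonneg _)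
  · filter_upwards [Filter.eventually_ge_atTop 1] with N hN
    exact hbound N hN
  · exact hHto.comp (lenb_tendsto hq)
end

section
/- Let q ≥ 2 be an integer and let f be a real-valued q-additive function such that both series ∑_{j≥0} ∑_{d=1}^{q-1} f(d·q^j) and ∑_{j≥0} ∑_{d=1}^{q-1} f(d·q^j)² converge, and let φ(t) = ∏_{j≥0} ( (1/q) ∑_{d=0}^{q-1} e^{i t f(d q^j)} ). Then for every real t ≠ 0, |φ(t)| ≤ exp( −(2/(π²q²))·t²·∑_{(d,j)∈S(t)} f(d q^j)² ), where S(t) = {(d,j) : 1 ≤ d ≤ q−1, j ≥ 0, |f(d q^j)| ≤ π/|t|}. -/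
open Filter Finset Topology

lemma factor_bound (q : ℕ) (hq : 2 ≤ q) (θ : ℕ → ℝ) (h0 : θ 0 = 0) :
    ‖(∑ d ∈ Finset.range q, Complex.exp ((θ d : ℂ) * Complex.I)) / q‖ ≤
    Real.exp (-(2 / (Real.pi ^ 2 * q ^ 2)) *
      ∑ d ∈ Finset.Ico 1 q, (if |θ d| ≤ Real.pi then θ d ^ 2 else 0)) := by
  have hqpos : (0:ℝ) < q := by positivity
  have hpi : (0:ℝ) < Real.pi := Real.pi_pos
  set Z : ℂ := ∑ d ∈ Finset.range q, Complex.exp ((θ d : ℂ) * Complex.I) with hZ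
  set X : ℝ := ∑ d ∈ Finset.Ico 1 q, (if |θ d| ≤ Real.pi then θ d ^ 2 else 0) with hX
  set C : ℝ := ∑ d ∈ Finset.Ico 1 q, Real.cos (θ d) with hC
  set S : ℝ := ∑ d ∈ Finset.Ico 1 q, Real.sin (θ d) with hS
  have hre : Z.re = 1 + C := by
    rw [hZ, Complex.re_sum, Finset.range_eq_Ico, Finset.sum_eq_sum_Ico_succ_bot (by omega)]
    simp [Complex.exp_ofReal_mul_I_re, h0, hC]
  have him : Z.im = S := by
    rw [hZ, Complex.im_sum, Finset.range_eq_Ico, Finset.sum_eq_sum_Ico_succ_bot (by omega)]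
    simp [Complex.exp_ofReal_mul_I_im, h0, hS]
  have hcard : (#(Finset.Ico 1 q) : ℝ) = (q : ℝ) - 1 := by
    rw [Nat.card_Ico]; push_cast [Nat.cast_sub (by omega : 1 ≤ q)]; ring
  have hCS : C ^ 2 + S ^ 2 ≤ ((q:ℝ) - 1) ^ 2 := by
    have h1 : C ^ 2 ≤ ((q:ℝ) - 1) * ∑ d ∈ Finset.Ico 1 q, Real.cos (θ d) ^ 2 := by
      simpa [Nat.card_Ico, Nat.cast_sub (show 1 ≤ q by omega)] using
        sq_sum_le_card_mul_sum_sq (s := Finset.Ico 1 q) (f := fun d => Real.cos (θ d))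
    have h2 : S ^ 2 ≤ ((q:ℝ) - 1) * ∑ d ∈ Finset.Ico 1 q, Real.sin (θ d) ^ 2 := by
      simpa [Nat.card_Ico, Nat.cast_sub (show 1 ≤ q by omega)] using
        sq_sum_le_card_mul_sum_sq (s := Finset.Ico 1 q) (f := fun d => Real.sin (θ d))
    have h3 : (∑ d ∈ Finset.Ico 1 q, Real.cos (θ d) ^ 2)
        + (∑ d ∈ Finset.Ico 1 q, Real.sin (θ d) ^ 2) = (q:ℝ) - 1 := by
      rw [← Finset.sum_add_distrib]
      have hone : ∀ d, Real.cos (θ d) ^ 2 + Real.sin (θ d) ^ 2 = 1 := fun d => by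
        rw [add_comm]; exact Real.sin_sq_add_cos_sq _
      simp [hone, hcard, Nat.cast_sub (show 1 ≤ q by omega)]
    nlinarith [sq_nonneg ((q:ℝ)-1)]
  have hcosX : 2 / Real.pi ^ 2 * X ≤ ((q:ℝ) - 1) - C := by
    have : ((q:ℝ) - 1) - C = ∑ d ∈ Finset.Ico 1 q, (1 - Real.cos (θ d)) := by
      rw [Finset.sum_sub_distrib, hC]
      simp [hcard, Nat.cast_sub (show 1 ≤ q by omega)]
    rw [this, hX, Finset.mul_sum]
    refine Finset.sum_le_sum fun d _ => ?_
    split_ifs with h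
    · have := Real.cos_le_one_sub_mul_cos_sq h
      linarith
    · simp [Real.cos_le_one (θ d)]
  have hXnn : 0 ≤ X := Finset.sum_nonneg fun d _ => by positivity
  have habs2 : ‖Z‖ ^ 2 ≤ (q:ℝ) ^ 2 - 4 / Real.pi ^ 2 * X := by
    rw [Complex.sq_norm, Complex.normSq_apply, hre, him]
    have e1 : (1 + C) * (1 + C) + S * S = 1 + 2 * C + (C ^ 2 + S ^ 2) := by ring
    have e2 : ((q:ℝ) - 1) ^ 2 = (q:ℝ) ^ 2 - 2 * q + 1 := by ring
    have e3 : 4 / Real.pi ^ 2 * X = 2 * (2 / Real.pi ^ 2 * X) := by ring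
    linarith
  set y : ℝ := 4 / (Real.pi ^ 2 * (q:ℝ) ^ 2) * X with hy
  have h1 : (‖Z‖ / q) ^ 2 ≤ 1 - y := by
    rw [div_pow, hy]
    rw [div_le_iff₀ (by positivity)] at *
    calc ‖Z‖ ^ 2 ≤ (q:ℝ) ^ 2 - 4 / Real.pi ^ 2 * X := habs2
    _ = (1 - 4 / (Real.pi ^ 2 * (q:ℝ) ^ 2) * X) * (q:ℝ)^2 := by field_simp
  have h2 : 1 - y ≤ Real.exp (-y) := by
    have := Real.add_one_le_exp (-y); linarith
  have h3 : ‖Z‖ / q ≤ Real.exp (-y / 2) := by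
    have ha : ‖Z‖ / q = Real.sqrt ((‖Z‖ / q) ^ 2) :=
      (Real.sqrt_sq (by positivity)).symm
    rw [ha]
    calc Real.sqrt ((‖Z‖ / q) ^ 2) ≤ Real.sqrt (Real.exp (-y)) :=
          Real.sqrt_le_sqrt (h1.trans h2)
    _ = Real.exp (-y / 2) := (Real.exp_half _).symm
  have : ‖Z / q‖ = ‖Z‖ / q := by
    simp [map_div₀, Complex.norm_natCast]
  rw [this]
  convert h3 using 2
  rw [hy]; ring

/-- **Upper bound for the limiting characteristic function.**
If the two series converge and `P` is the value of the convergent infinite product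
`∏_{j≥0} ((1/q) ∑_{d=0}^{q-1} e^{i t f(d q^j)})`, then
`|P| ≤ exp(−(2/(π²q²)) t² ∑_{(d,j)∈S(t)} f(d q^j)²)` where
`S(t) = {(d,j) : 1 ≤ d ≤ q−1, |f(d q^j)| ≤ π/|t|}`. -/
theorem char_fun_bound (q : ℕ) (hq : 2 ≤ q) (f : ℕ → ℝ) (hf : IsQAdditive q f)
    (hS : ∃ S : ℝ, Tendsto
      (fun J : ℕ => ∑ j ∈ Finset.range J, ∑ d ∈ Finset.Ico 1 q, f (d * q ^ j))
      atTop (𝓝 S))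
    (hS2 : ∃ S2 : ℝ, Tendsto
      (fun J : ℕ => ∑ j ∈ Finset.range J, ∑ d ∈ Finset.Ico 1 q, f (d * q ^ j) ^ 2)
      atTop (𝓝 S2))
    (t : ℝ) (ht : t ≠ 0) (P : ℂ)
    (hP : Tendsto (fun J : ℕ => ∏ j ∈ Finset.range J,
        ((∑ d ∈ Finset.range q, Complex.exp (Complex.I * t * f (d * q ^ j))) / q))
      atTop (𝓝 P)) :
    ‖P‖ ≤
      Real.exp (-(2 / (Real.pi ^ 2 * q ^ 2)) * t ^ 2 *
        ∑' j : ℕ, ∑ d ∈ Finset.Ico 1 q,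
          (if |f (d * q ^ j)| ≤ Real.pi / |t| then f (d * q ^ j) ^ 2 else 0)) := by
  obtain ⟨S2, hS2⟩ := hS2
  have hf0 : f 0 = 0 := by simpa using hf 0
  set c : ℝ := 2 / (Real.pi ^ 2 * q ^ 2) with hc
  set u : ℕ → ℝ := fun j => ∑ d ∈ Finset.Ico 1 q,
    (if |f (d * q ^ j)| ≤ Real.pi / |t| then f (d * q ^ j) ^ 2 else 0) with hu
  set v : ℕ → ℝ := fun j => ∑ d ∈ Finset.Ico 1 q, f (d * q ^ j) ^ 2 with hv
  have hunn : ∀ j, 0 ≤ u j := fun j => Finset.sum_nonneg fun d _ => by positivity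
  have hvnn : ∀ j, 0 ≤ v j := fun j => Finset.sum_nonneg fun d _ => by positivity
  have huv : ∀ j, u j ≤ v j := fun j => Finset.sum_le_sum fun d _ => by
    split_ifs with h
    · exact le_refl _
    · positivity
  have hmono : Monotone (fun J : ℕ => ∑ j ∈ Finset.range J, v j) := fun a b hab =>
    Finset.sum_le_sum_of_subset_of_nonneg (Finset.range_subset_range.2 hab) fun i _ _ => hvnn i
  have hvsum : Summable v :=
    summable_of_sum_range_le hvnn fun n => hmono.ge_of_tendsto hS2 n
  have husum : Summable u := hvsum.of_nonneg_of_le hunn huv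
  have hT : Tendsto (fun J : ℕ => ∑ j ∈ Finset.range J, u j) atTop (𝓝 (∑' j, u j)) :=
    husum.hasSum.tendsto_sum_nat
  have perfactor : ∀ j : ℕ,
      ‖(∑ d ∈ Finset.range q, Complex.exp (Complex.I * t * f (d * q ^ j))) / q‖
        ≤ Real.exp (-c * t ^ 2 * u j) := by
    intro j
    have h0 : (fun d => t * f (d * q ^ j)) 0 = 0 := by simp [hf0]
    have hb := factor_bound q hq (fun d => t * f (d * q ^ j)) h0
    have harg : ∀ d : ℕ, ((t * f (d * q ^ j) : ℝ) : ℂ) * Complex.I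
        = Complex.I * t * f (d * q ^ j) := by intro d; push_cast; ring
    simp_rw [harg] at hb
    refine hb.trans (le_of_eq ?_)
    congr 1
    have hterm : ∀ d : ℕ, (if |t * f (d * q ^ j)| ≤ Real.pi then (t * f (d * q ^ j)) ^ 2 else 0)
        = t ^ 2 * (if |f (d * q ^ j)| ≤ Real.pi / |t| then f (d * q ^ j) ^ 2 else 0) := by
      intro d
      have hcond : |t * f (d * q ^ j)| ≤ Real.pi ↔ |f (d * q ^ j)| ≤ Real.pi / |t| := by
        rw [abs_mul, mul_comm, ← le_div_iff₀ (abs_pos.2 ht)]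
      simp only [hcond]
      split_ifs with h
      · ring
      · ring
    simp_rw [hterm, ← Finset.mul_sum, hu]
    ring
  have key : ∀ J : ℕ,
      ‖∏ j ∈ Finset.range J,
        ((∑ d ∈ Finset.range q, Complex.exp (Complex.I * t * f (d * q ^ j))) / q)‖
      ≤ Real.exp (-c * t ^ 2 * ∑ j ∈ Finset.range J, u j) := by
    intro J
    calc ‖∏ j ∈ Finset.range J,
          ((∑ d ∈ Finset.range q, Complex.exp (Complex.I * t * f (d * q ^ j))) / q)‖
        = ∏ j ∈ Finset.range J, ‖
          (∑ d ∈ Finset.range q, Complex.exp (Complex.I * t * f (d * q ^ j))) / q‖ :=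
          norm_prod _ _
      _ ≤ ∏ j ∈ Finset.range J, Real.exp (-c * t ^ 2 * u j) :=
          Finset.prod_le_prod (fun j _ => norm_nonneg _) fun j _ => perfactor j
      _ = Real.exp (∑ j ∈ Finset.range J, -c * t ^ 2 * u j) := (Real.exp_sum _ _).symm
      _ = Real.exp (-c * t ^ 2 * ∑ j ∈ Finset.range J, u j) := by
          rw [← Finset.mul_sum]
  have hlhs : Tendsto (fun J : ℕ => ‖∏ j ∈ Finset.range J,
      ((∑ d ∈ Finset.range q, Complex.exp (Complex.I * t * f (d * q ^ j))) / q)‖)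
      atTop (𝓝 ‖P‖) := (continuous_norm.tendsto P).comp hP
  have hrhs : Tendsto (fun J : ℕ => Real.exp (-c * t ^ 2 * ∑ j ∈ Finset.range J, u j))
      atTop (𝓝 (Real.exp (-c * t ^ 2 * ∑' j, u j))) :=
    (Real.continuous_exp.tendsto _).comp (hT.const_mul _)
  exact le_of_tendsto_of_tendsto' hlhs hrhs key
end

section
/- Let q ≥ 2 be an integer and let f be a real-valued q-additive function such that both series ∑_{j≥0} ∑_{d=1}^{q-1} f(d·q^j) and ∑_{j≥0} ∑_{d=1}^{q-1} f(d·q^j)² converge. Then (1/N) ∑_{n<N} |f(n)| = O(1) as N → ∞; that is, there exists a constant C (depending on f) such that ∑_{n<N} |f(n)| ≤ C·N for all N ≥ 1. -/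
open Filter Finset Topology

section Aux

variable {q : ℕ} {f : ℕ → ℝ}

lemma qadd_f_zero (hf : IsQAdditive q f) : f 0 = 0 := by simpa using hf 0

/-- For `n < q ^ K`, the defining sum can be taken over `range K`. -/
lemma qadd_sum_range (hq : 2 ≤ q) (hf : IsQAdditive q f) {K n : ℕ} (hn : n < q ^ K) :
    f n = ∑ j ∈ Finset.range K, f (n / q ^ j % q * q ^ j) := by
  have h0 : f 0 = 0 := qadd_f_zero hf
  have key : ∀ j, n < q ^ j → f (n / q ^ j % q * q ^ j) = 0 := by
    intro j hj
    rw [Nat.div_eq_of_lt hj]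
    simpa using h0
  rw [hf n]
  rcases le_total n K with h | h
  · apply Finset.sum_subset (Finset.range_subset_range.2 h)
    intro j _ hj
    simp only [Finset.mem_range, not_lt] at hj
    exact key j (lt_of_lt_of_le (Nat.lt_two_pow_self (n := n))
      (le_trans (Nat.pow_le_pow_right (by norm_num) hj) (Nat.pow_le_pow_left hq j)))
  · symm
    apply Finset.sum_subset (Finset.range_subset_range.2 h)
    intro j _ hj
    simp only [Finset.mem_range, not_lt] at hj
    exact key j (lt_of_lt_of_le hn (Nat.pow_le_pow_right (by omega) hj))

lemma qadd_split (hq : 2 ≤ q) (hf : IsQAdditive q f) {K d m : ℕ} (hd : d < q)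
    (hm : m < q ^ K) : f (d * q ^ K + m) = f (d * q ^ K) + f m := by
  have hq0 : 0 < q := by omega
  have hn : d * q ^ K + m < q ^ (K + 1) := by
    calc d * q ^ K + m < d * q ^ K + q ^ K := by omega
    _ = (d + 1) * q ^ K := by ring
    _ ≤ q * q ^ K := Nat.mul_le_mul_right _ (by omega)
    _ = q ^ (K + 1) := by ring
  rw [qadd_sum_range hq hf hn, Finset.sum_range_succ]
  have htop : (d * q ^ K + m) / q ^ K % q = d := by
    rw [Nat.add_comm, Nat.add_mul_div_right _ _ (pow_pos hq0 K),
      Nat.div_eq_of_lt hm, Nat.zero_add, Nat.mod_eq_of_lt hd]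
  have hlow : ∀ j < K, (d * q ^ K + m) / q ^ j % q = m / q ^ j % q := by
    intro j hj
    have : d * q ^ K = (d * q ^ (K - j - 1) * q) * q ^ j := by
      rw [Nat.mul_assoc, Nat.mul_assoc, ← pow_succ']
      congr 2
      rw [← pow_add]
      congr 1
      omega
    rw [this, Nat.add_comm, Nat.add_mul_div_right _ _ (pow_pos hq0 j),
      Nat.add_mul_mod_self_right]
  rw [htop, add_comm, qadd_sum_range hq hf hm]
  congr 1
  apply Finset.sum_congr rfl
  intro j hj
  rw [hlow j (Finset.mem_range.1 hj)]

/-- Decompose a sum over `range (a * b)`. -/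
lemma sum_range_mul_eq (g : ℕ → ℝ) (a b : ℕ) :
    ∑ n ∈ Finset.range (a * b), g n
      = ∑ d ∈ Finset.range a, ∑ m ∈ Finset.range b, g (d * b + m) := by
  induction a with
  | zero => simp
  | succ a ih =>
    rw [Nat.succ_mul, Finset.sum_range_add, ih, Finset.sum_range_succ]

end Aux

/-- If the two series `∑_j ∑_{d=1}^{q-1} f(d q^j)` and `∑_j ∑_{d=1}^{q-1} f(d q^j)²`
converge, then `(1/N) ∑_{n<N} |f(n)| = O(1)`. -/
theorem q_ary_first_abs_moment_bounded (q : ℕ) (hq : 2 ≤ q) (f : ℕ → ℝ)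
    (hf : IsQAdditive q f)
    (hS : ∃ S : ℝ, Tendsto
      (fun J : ℕ => ∑ j ∈ Finset.range J, ∑ d ∈ Finset.Ico 1 q, f (d * q ^ j))
      atTop (𝓝 S))
    (hS2 : ∃ S2 : ℝ, Tendsto
      (fun J : ℕ => ∑ j ∈ Finset.range J, ∑ d ∈ Finset.Ico 1 q, f (d * q ^ j) ^ 2)
      atTop (𝓝 S2)) :
    ∃ C : ℝ, ∀ N : ℕ, 1 ≤ N → ∑ n ∈ Finset.range N, |f n| ≤ C * N := by
  have hq0 : 0 < q := by omega
  have hq1 : (1 : ℝ) ≤ (q : ℝ) := by exact_mod_cast by omega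
  have h0 : f 0 = 0 := qadd_f_zero hf
  set a : ℕ → ℝ := fun j => ∑ d ∈ Finset.Ico 1 q, f (d * q ^ j) with ha
  set b : ℕ → ℝ := fun j => ∑ d ∈ Finset.Ico 1 q, f (d * q ^ j) ^ 2 with hb
  set σ : ℕ → ℝ := fun K => ∑ j ∈ Finset.range K, a j with hσ
  set T : ℕ → ℝ := fun K => ∑ j ∈ Finset.range K, b j with hT
  -- sums over `range q` equal sums over `Ico 1 q`
  have hrange_a : ∀ j, ∑ d ∈ Finset.range q, f (d * q ^ j) = a j := by
    intro j
    rw [Finset.range_eq_Ico, Finset.sum_eq_sum_Ico_succ_bot hq0]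
    simp [h0, ha]
  have hrange_b : ∀ j, ∑ d ∈ Finset.range q, f (d * q ^ j) ^ 2 = b j := by
    intro j
    rw [Finset.range_eq_Ico, Finset.sum_eq_sum_Ico_succ_bot hq0]
    simp [h0, hb]
  -- bounds on σ and T
  obtain ⟨S, hSt⟩ := hS
  obtain ⟨S2, hS2t⟩ := hS2
  obtain ⟨CA, hCA⟩ := ((hSt.norm).bddAbove_range)
  obtain ⟨CB, hCB⟩ := (hS2t.bddAbove_range)
  have hCA' : ∀ K, |σ K| ≤ CA := fun K => hCA ⟨K, rfl⟩
  have hCB' : ∀ K, T K ≤ CB := fun K => hCB ⟨K, rfl⟩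
  have hCA0 : 0 ≤ CA := le_trans (abs_nonneg _) (hCA' 0)
  have hTnn : ∀ K, 0 ≤ T K := by
    intro K
    apply Finset.sum_nonneg
    intro j _
    exact Finset.sum_nonneg fun d _ => sq_nonneg _
  have hCB0 : 0 ≤ CB := le_trans (hTnn 0) (hCB' 0)
  -- exact identity for the first moment
  have hA : ∀ K, (q : ℝ) * ∑ n ∈ Finset.range (q ^ K), f n = (q : ℝ) ^ K * σ K := by
    intro K
    induction K with
    | zero => simp [h0, hσ]
    | succ K ih =>
      have : (q ^ (K + 1) : ℕ) = q * q ^ K := by ring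
      rw [this, sum_range_mul_eq]
      have : ∀ d ∈ Finset.range q, ∑ m ∈ Finset.range (q ^ K), f (d * q ^ K + m)
          = (q ^ K : ℝ) * f (d * q ^ K) + ∑ m ∈ Finset.range (q ^ K), f m := by
        intro d hd
        rw [Finset.sum_congr rfl (fun m hm =>
          qadd_split hq hf (Finset.mem_range.1 hd) (Finset.mem_range.1 hm)),
          Finset.sum_add_distrib, Finset.sum_const, Finset.card_range,
          nsmul_eq_mul]
        push_cast
        ring
      rw [Finset.sum_congr rfl this, Finset.sum_add_distrib, Finset.sum_const,
        Finset.card_range, ← Finset.mul_sum, hrange_a, nsmul_eq_mul]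
      have hσs : σ (K + 1) = σ K + a K := Finset.sum_range_succ _ _
      rw [hσs]
      push_cast
      linear_combination (q : ℝ) * ih
  -- inequality for the second moment
  have hB : ∀ K, (q : ℝ) ^ 2 * ∑ n ∈ Finset.range (q ^ K), f n ^ 2
      ≤ (q : ℝ) ^ K * (σ K ^ 2 + q * T K) := by
    intro K
    induction K with
    | zero => simp [h0, hσ, hT]
    | succ K ih =>
      have hqK : (q ^ (K + 1) : ℕ) = q * q ^ K := by ring
      rw [hqK, sum_range_mul_eq]
      have hstep : ∀ d ∈ Finset.range q, ∑ m ∈ Finset.range (q ^ K), f (d * q ^ K + m) ^ 2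
          = (q ^ K : ℝ) * f (d * q ^ K) ^ 2
            + 2 * f (d * q ^ K) * (∑ m ∈ Finset.range (q ^ K), f m)
            + ∑ m ∈ Finset.range (q ^ K), f m ^ 2 := by
        intro d hd
        have e : ∑ m ∈ Finset.range (q ^ K), f (d * q ^ K + m) ^ 2
            = ∑ m ∈ Finset.range (q ^ K),
              (f (d * q ^ K) ^ 2 + 2 * f (d * q ^ K) * f m + f m ^ 2) :=
          Finset.sum_congr rfl (fun m hm => by
            rw [qadd_split hq hf (Finset.mem_range.1 hd) (Finset.mem_range.1 hm)]; ring)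
        rw [e, Finset.sum_add_distrib, Finset.sum_add_distrib, Finset.sum_const,
          Finset.card_range, ← Finset.mul_sum, nsmul_eq_mul]
        push_cast
        ring
      rw [Finset.sum_congr rfl hstep, Finset.sum_add_distrib, Finset.sum_add_distrib,
        Finset.sum_const, Finset.card_range, ← Finset.mul_sum, hrange_b, nsmul_eq_mul]
      have h2 : ∑ d ∈ Finset.range q, 2 * f (d * q ^ K) * (∑ m ∈ Finset.range (q ^ K), f m)
          = 2 * a K * (∑ m ∈ Finset.range (q ^ K), f m) := by
        rw [← Finset.sum_mul, ← Finset.mul_sum, hrange_a]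
      rw [h2]
      have hσs : σ (K + 1) = σ K + a K := Finset.sum_range_succ _ _
      have hTs : T (K + 1) = T K + b K := Finset.sum_range_succ _ _
      have hAK := hA K
      set SA := ∑ m ∈ Finset.range (q ^ K), f m
      set SB := ∑ m ∈ Finset.range (q ^ K), f m ^ 2
      rw [hσs, hTs]
      have hqpos : (0 : ℝ) < q := by positivity
      have hAK2 : 2 * (q : ℝ) * a K * ((q : ℝ) * SA)
          = 2 * (q : ℝ) * a K * ((q : ℝ) ^ K * σ K) := by rw [hAK]
      rw [pow_succ (q : ℝ) K]
      nlinarith [mul_le_mul_of_nonneg_left ih hqpos.le, hAK2,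
        mul_nonneg (mul_nonneg (pow_pos hqpos K).le hqpos.le) (sq_nonneg (a K))]
  -- assemble
  set M : ℝ := CA ^ 2 + q * CB with hM
  have hM0 : 0 ≤ M := by positivity
  refine ⟨(q : ℝ) * Real.sqrt M, ?_⟩
  intro N hN
  set K := Nat.log q N + 1 with hK
  have hNK : N ≤ q ^ K := (Nat.lt_pow_succ_log_self (by omega) N).le
  have hKN : (q ^ K : ℕ) ≤ q * N := by
    rw [hK, pow_succ']
    exact Nat.mul_le_mul_left q (Nat.pow_log_le_self q (by omega))
  -- second moment bound at scale q^K
  have hBK : ∑ n ∈ Finset.range (q ^ K), f n ^ 2 ≤ (q : ℝ) ^ K * M := by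
    have h1 : (q : ℝ) ^ 2 * ∑ n ∈ Finset.range (q ^ K), f n ^ 2
        ≤ (q : ℝ) ^ K * (σ K ^ 2 + q * T K) := hB K
    have h2 : σ K ^ 2 + (q : ℝ) * T K ≤ M := by
      have := hCA' K
      have h3 : σ K ^ 2 ≤ CA ^ 2 := by
        rw [← sq_abs]
        exact pow_le_pow_left₀ (abs_nonneg _) (hCA' K) 2
      have h4 : (q : ℝ) * T K ≤ q * CB :=
        mul_le_mul_of_nonneg_left (hCB' K) (by positivity)
      linarith
    have hq2 : (1 : ℝ) ≤ (q : ℝ) ^ 2 := one_le_pow₀ hq1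
    have hqKpos : (0 : ℝ) < (q : ℝ) ^ K := by positivity
    nlinarith [Finset.sum_nonneg (fun n (_ : n ∈ Finset.range (q ^ K)) => sq_nonneg (f n)),
      mul_le_mul_of_nonneg_left h2 hqKpos.le]
  have habs : ∑ n ∈ Finset.range N, |f n| ≤ ∑ n ∈ Finset.range (q ^ K), |f n| :=
    Finset.sum_le_sum_of_subset_of_nonneg (Finset.range_subset_range.2 hNK)
      (fun n _ _ => abs_nonneg _)
  have hCS : (∑ n ∈ Finset.range (q ^ K), |f n|) ^ 2
      ≤ (q : ℝ) ^ K * ∑ n ∈ Finset.range (q ^ K), f n ^ 2 := by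
    have := sq_sum_le_card_mul_sum_sq (s := Finset.range (q ^ K))
      (f := fun n => |f n|)
    simp only [Finset.card_range, sq_abs] at this
    calc (∑ n ∈ Finset.range (q ^ K), |f n|) ^ 2
        ≤ ((q ^ K : ℕ) : ℝ) * ∑ n ∈ Finset.range (q ^ K), f n ^ 2 := this
      _ = (q : ℝ) ^ K * ∑ n ∈ Finset.range (q ^ K), f n ^ 2 := by push_cast; ring
  have hsqfin : ∑ n ∈ Finset.range (q ^ K), |f n| ≤ (q : ℝ) ^ K * Real.sqrt M := by
    have hx : (0 : ℝ) ≤ ∑ n ∈ Finset.range (q ^ K), |f n| :=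
      Finset.sum_nonneg fun n _ => abs_nonneg _
    have h5 : (∑ n ∈ Finset.range (q ^ K), |f n|) ^ 2 ≤ ((q : ℝ) ^ K) ^ 2 * M := by
      calc (∑ n ∈ Finset.range (q ^ K), |f n|) ^ 2
          ≤ (q : ℝ) ^ K * ∑ n ∈ Finset.range (q ^ K), f n ^ 2 := hCS
        _ ≤ (q : ℝ) ^ K * ((q : ℝ) ^ K * M) :=
            mul_le_mul_of_nonneg_left hBK (by positivity)
        _ = ((q : ℝ) ^ K) ^ 2 * M := by ring
    have h6 := Real.sqrt_le_sqrt h5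
    rw [Real.sqrt_sq hx, Real.sqrt_mul (by positivity : (0:ℝ) ≤ ((q:ℝ)^K)^2),
      Real.sqrt_sq (by positivity : (0:ℝ) ≤ (q:ℝ)^K)] at h6
    exact h6
  calc ∑ n ∈ Finset.range N, |f n| ≤ (q : ℝ) ^ K * Real.sqrt M :=
        le_trans habs hsqfin
    _ ≤ ((q : ℝ) * N) * Real.sqrt M := by
        apply mul_le_mul_of_nonneg_right _ (Real.sqrt_nonneg M)
        calc ((q : ℝ)) ^ K = ((q ^ K : ℕ) : ℝ) := by push_cast; ring
          _ ≤ ((q * N : ℕ) : ℝ) := by exact_mod_cast hKN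
          _ = (q : ℝ) * N := by push_cast; ring
    _ = ((q : ℝ) * Real.sqrt M) * N := by ring
end

section
/- Let B > 1 be a real number and for an integer J ≥ 0 set S_J(τ) = (1/2) ∑_{j=0}^{J} ‖τ·B^j/π‖², where ‖x‖ denotes the distance from x to the nearest integer. Then there exist constants η > 0 and C > 0 (depending on B) such that for all J ≥ 0, ∫₁^B exp(−S_J(τ)) dτ ≤ C·exp(−η·J). -/
open Filter Finset Topology

/-- Distance from a real number to the nearest integer. -/
noncomputable def nearestIntDist (x : ℝ) : ℝ := |x - round x|

open MeasureTheory ENNReal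

lemma measurable_nearestIntDist : Measurable nearestIntDist := by
  have h : Measurable fun x : ℝ => ((round x : ℤ) : ℝ) := by
    have h1 : Measurable fun x : ℝ => (⌊x + 1/2⌋ : ℤ) :=
      Int.measurable_floor.comp (measurable_id.add_const _)
    have h2 := (measurable_from_top (f := (Int.cast : ℤ → ℝ))).comp h1
    simp only [round_eq]; exact h2
  exact (measurable_id.sub h).abs

lemma nearestIntDist_nonneg (x : ℝ) : 0 ≤ nearestIntDist x := abs_nonneg _

lemma arith_step (δ R lam0 lam1 c a b : ℝ) (n : ℕ) (hδ0 : 0 < δ) (hδ2 : δ ≤ 1/2)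
    (hR : 3 ≤ δ * R) (hlam0 : 0 < lam0) (hlam1 : lam0 ≤ lam1) (hc0 : 0 ≤ c)
    (hc : c ≤ (b - a) * lam1 + 2) (hab : a * lam1 - δ ≤ b * lam1 + δ) :
    c * ((8*δ)^n * (2*δ/lam1 + 3/(R*lam1))) ≤ (8*δ)^(n+1) * ((b - a) + 3/lam0) := by
  have hRpos : 0 < R := by nlinarith
  have hlam1pos : 0 < lam1 := lt_of_lt_of_le hlam0 hlam1
  have hpow : (0:ℝ) ≤ (8*δ)^n := by positivity
  have h3R : 3 / (R*lam1) ≤ δ/lam1 := by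
    rw [div_le_div_iff₀ (by positivity) hlam1pos]
    nlinarith
  have hsum : 2*δ/lam1 + 3/(R*lam1) ≤ 3*δ/lam1 := by
    have : 2*δ/lam1 + δ/lam1 = 3*δ/lam1 := by ring
    linarith
  have step1 : c * ((8*δ)^n * (2*δ/lam1 + 3/(R*lam1)))
      ≤ ((b-a)*lam1 + 2) * ((8*δ)^n * (3*δ/lam1)) := by
    apply mul_le_mul hc (mul_le_mul_of_nonneg_left hsum hpow) (by positivity)
      (le_trans hc0 hc)
  have expand : ((b-a)*lam1 + 2) * ((8*δ)^n * (3*δ/lam1))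
      = (8*δ)^n * (3*δ*(b-a) + 6*δ/lam1) := by
    field_simp; ring
  have hba : -(2*δ)/lam1 ≤ b - a := by
    rw [div_le_iff₀ hlam1pos]; nlinarith
  have h3l : (3:ℝ)/lam1 ≤ 3/lam0 := div_le_div_of_nonneg_left (by norm_num) hlam0 hlam1
  have h4 : 2*δ/lam1 ≤ 3/lam1 := by
    rw [div_le_div_iff₀ hlam1pos hlam1pos]
    nlinarith
  have hY : 0 ≤ (b-a) + 3/lam0 := by
    have : -(2*δ)/lam1 = -(2*δ/lam1) := by ring
    linarith [hba, h3l, h4]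
  have h6 : 6*δ/lam1 ≤ 6*δ/lam0 := div_le_div_of_nonneg_left (by positivity) hlam0 hlam1
  have goal : 3*δ*(b-a) + 6*δ/lam1 ≤ (8*δ) * ((b-a) + 3/lam0) := by
    have h5 : 0 ≤ 5*δ*((b-a) + 3/lam0) := mul_nonneg (by positivity) hY
    have h9 : 0 ≤ 9*(δ/lam0) := by positivity
    have e1 : 5*δ*((b-a) + 3/lam0) = 5*(δ*b) - 5*(δ*a) + 15*(δ/lam0) := by ring
    have e2 : 6*δ/lam0 = 6*(δ/lam0) := by ring
    rw [e1] at h5; rw [e2] at h6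
    nlinarith [h5, h6, h9]
  calc c * ((8*δ)^n * (2*δ/lam1 + 3/(R*lam1)))
      ≤ (8*δ)^n * (3*δ*(b-a) + 6*δ/lam1) := by rw [← expand]; exact step1
    _ ≤ (8*δ)^n * ((8*δ) * ((b-a) + 3/lam0)) := mul_le_mul_of_nonneg_left goal hpow
    _ = (8*δ)^(n+1) * ((b-a) + 3/lam0) := by ring

lemma inter_small_bound (δ R : ℝ) (hδ0 : 0 < δ) (hδ2 : δ ≤ 1/2) (hR : 3 ≤ δ * R) :
    ∀ (n : ℕ) (A : Finset ℕ) (lam : ℕ → ℝ) (lam0 : ℝ), A.card = n → 0 < lam0 →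
      (∀ k ∈ A, lam0 ≤ lam k) →
      (∀ k ∈ A, ∀ k' ∈ A, k < k' → R * lam k ≤ lam k') →
      ∀ a b : ℝ,
      volume (Set.Icc a b ∩ ⋂ k ∈ A, {τ : ℝ | nearestIntDist (τ * lam k) < δ})
        ≤ ENNReal.ofReal ((8*δ)^n * ((b - a) + 3 / lam0)) := by
  have hRpos : 0 < R := by nlinarith
  intro n
  induction n with
  | zero =>
    intro A lam lam0 hA hlam0 _ _ a b
    rw [Finset.card_eq_zero] at hA
    subst hA
    simp only [Finset.notMem_empty, Set.iInter_of_empty, Set.iInter_univ, Set.inter_univ,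
      pow_zero, one_mul]
    rw [Real.volume_Icc]
    apply ENNReal.ofReal_le_ofReal
    have : 0 ≤ 3 / lam0 := by positivity
    linarith
  | succ n ih =>
    intro A lam lam0 hA hlam0 hlow hratio a b
    have hne : A.Nonempty := Finset.card_pos.mp (by omega)
    set k₁ := A.min' hne with hk₁
    have hk₁A : k₁ ∈ A := A.min'_mem hne
    set lam1 := lam k₁ with hlam1def
    have hlam1 : lam0 ≤ lam1 := hlow k₁ hk₁A
    have hlam1pos : 0 < lam1 := lt_of_lt_of_le hlam0 hlam1
    set F : Finset ℤ := Finset.Icc ⌈a * lam1 - δ⌉ ⌊b * lam1 + δ⌋ with hF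
    -- inclusion into covering
    have hsub : Set.Icc a b ∩ ⋂ k ∈ A, {τ : ℝ | nearestIntDist (τ * lam k) < δ} ⊆
        ⋃ i ∈ F, (Set.Icc (((i : ℝ) - δ)/lam1) (((i : ℝ) + δ)/lam1) ∩
          ⋂ k ∈ A.erase k₁, {τ : ℝ | nearestIntDist (τ * lam k) < δ}) := by
      rintro τ ⟨hτI, hτE⟩
      simp only [Set.mem_iInter] at hτE
      have h1 : nearestIntDist (τ * lam1) < δ := hτE k₁ hk₁A
      have habs : |τ * lam1 - (round (τ * lam1) : ℝ)| < δ := h1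
      set i := round (τ * lam1) with hi
      have hl : τ * lam1 - δ ≤ (i:ℝ) := by
        have := abs_lt.mp habs; linarith [this.2]
      have hr : (i:ℝ) ≤ τ * lam1 + δ := by
        have := abs_lt.mp habs; linarith [this.1]
      have hiF : i ∈ F := by
        rw [hF, Finset.mem_Icc]
        constructor
        · apply Int.ceil_le.mpr
          have : a * lam1 ≤ τ * lam1 := by
            apply mul_le_mul_of_nonneg_right hτI.1 hlam1pos.le
          linarith
        · apply Int.le_floor.mpr
          have : τ * lam1 ≤ b * lam1 := by
            apply mul_le_mul_of_nonneg_right hτI.2 hlam1pos.le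
          linarith
      refine Set.mem_biUnion hiF ⟨⟨?_, ?_⟩, ?_⟩
      · rw [div_le_iff₀ hlam1pos]; linarith [mul_comm τ lam1]
      · rw [le_div_iff₀ hlam1pos]; linarith [mul_comm τ lam1]
      · simp only [Set.mem_iInter]
        intro k hk
        exact hτE k (Finset.mem_of_mem_erase hk)
    refine le_trans (measure_mono hsub) ?_
    refine le_trans (measure_biUnion_finset_le _ _) ?_
    -- per-term bound via IH
    have hterm : ∀ i ∈ F,
        volume (Set.Icc (((i : ℝ) - δ)/lam1) (((i : ℝ) + δ)/lam1) ∩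
          ⋂ k ∈ A.erase k₁, {τ : ℝ | nearestIntDist (τ * lam k) < δ})
          ≤ ENNReal.ofReal ((8*δ)^n * (2*δ/lam1 + 3 / (R * lam1))) := by
      intro i _
      have hcard : (A.erase k₁).card = n := by
        rw [Finset.card_erase_of_mem hk₁A, hA]; omega
      have hlow' : ∀ k ∈ A.erase k₁, R * lam1 ≤ lam k := by
        intro k hk
        have hkA : k ∈ A := Finset.mem_of_mem_erase hk
        have hkne : k ≠ k₁ := Finset.ne_of_mem_erase hk
        have : k₁ < k := lt_of_le_of_ne (A.min'_le k hkA) (Ne.symm hkne)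
        exact hratio k₁ hk₁A k hkA this
      have hratio' : ∀ k ∈ A.erase k₁, ∀ k' ∈ A.erase k₁, k < k' → R * lam k ≤ lam k' := by
        intro k hk k' hk' h
        exact hratio k (Finset.mem_of_mem_erase hk) k' (Finset.mem_of_mem_erase hk') h
      have := ih (A.erase k₁) lam (R * lam1) hcard (by positivity) hlow' hratio'
        (((i : ℝ) - δ)/lam1) (((i : ℝ) + δ)/lam1)
      convert this using 3
      field_simp
      ring
    refine le_trans (Finset.sum_le_sum hterm) ?_
    rw [Finset.sum_const, nsmul_eq_mul]
    -- card bound and final arithmetic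
    rcases Nat.eq_zero_or_pos F.card with h0 | hpos
    · rw [h0]; simp
    · -- F nonempty : ⌈a*lam1-δ⌉ ≤ ⌊b*lam1+δ⌋
      have hFle : (⌈a * lam1 - δ⌉ : ℤ) ≤ ⌊b * lam1 + δ⌋ := by
        by_contra hc
        push_neg at hc
        rw [hF] at hpos
        rw [Finset.Icc_eq_empty (by exact_mod_cast not_le.mpr hc)] at hpos
        simp at hpos
      have hab : a * lam1 - δ ≤ b * lam1 + δ := by
        calc a * lam1 - δ ≤ (⌈a * lam1 - δ⌉ : ℝ) := Int.le_ceil _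
        _ ≤ (⌊b * lam1 + δ⌋ : ℝ) := by exact_mod_cast hFle
        _ ≤ b * lam1 + δ := Int.floor_le _
      have hcardF : (F.card : ℝ) ≤ (b - a) * lam1 + 2 := by
        rw [hF, Int.card_Icc]
        have h1 : (⌊b * lam1 + δ⌋ + 1 - ⌈a * lam1 - δ⌉ : ℤ).toNat
            = (⌊b * lam1 + δ⌋ + 1 - ⌈a * lam1 - δ⌉ : ℤ) := by
          rw [Int.toNat_of_nonneg]; omega
        have h2 : ((⌊b * lam1 + δ⌋ + 1 - ⌈a * lam1 - δ⌉ : ℤ) : ℝ)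
            ≤ (b - a) * lam1 + 2 := by
          push_cast
          have := Int.floor_le (b * lam1 + δ)
          have := Int.le_ceil (a * lam1 - δ)
          nlinarith
        calc ((⌊b * lam1 + δ⌋ + 1 - ⌈a * lam1 - δ⌉ : ℤ).toNat : ℝ)
            = ((⌊b * lam1 + δ⌋ + 1 - ⌈a * lam1 - δ⌉ : ℤ) : ℝ) := by exact_mod_cast congrArg Int.cast h1
        _ ≤ (b - a) * lam1 + 2 := h2
      have hc0 : (0:ℝ) ≤ (F.card : ℝ) := Nat.cast_nonneg _
      calc (F.card : ℝ≥0∞) * ENNReal.ofReal ((8*δ)^n * (2*δ/lam1 + 3 / (R * lam1)))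
          = ENNReal.ofReal ((F.card : ℝ) * ((8*δ)^n * (2*δ/lam1 + 3 / (R * lam1)))) := by
            rw [← ENNReal.ofReal_natCast F.card, ← ENNReal.ofReal_mul hc0]
      _ ≤ ENNReal.ofReal ((8*δ)^(n+1) * ((b - a) + 3 / lam0)) :=
          ENNReal.ofReal_le_ofReal
            (arith_step δ R lam0 lam1 (F.card : ℝ) a b n hδ0 hδ2 hR hlam0 hlam1 hc0 hcardF hab)

lemma exp_step_aux (η0 : ℝ) (m T J : ℕ) (hη0pos : 0 < η0) (hη0le1 : η0 ≤ 1)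
    (hmpos : (0:ℝ) < m) (hcast : (J:ℝ) + 1 < m*(T+1)) :
    Real.exp (-(η0 * T)) ≤ Real.exp 1 * Real.exp (-(η0 / m * J)) := by
  rw [← Real.exp_add]
  apply Real.exp_le_exp.mpr
  have hJle : (J:ℝ) ≤ (m:ℝ)*T + m - 1 := by nlinarith
  have hmul : η0/m * J ≤ η0/m * ((m:ℝ)*T + m) :=
    mul_le_mul_of_nonneg_left (by linarith) (div_nonneg hη0pos.le hmpos.le)
  have hm0' : (m:ℝ) ≠ 0 := ne_of_gt hmpos
  have heq : η0/m * ((m:ℝ)*T + m) = η0*T + η0 := by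
    rw [div_mul_eq_mul_div, div_eq_iff hm0']
    ring
  rw [heq] at hmul
  linarith

set_option maxHeartbeats 1200000 in
/-- **Key exponential-decay lemma.** For `B > 1` and
`S_J(τ) = (1/2) ∑_{j=0}^{J} ‖τ B^j/π‖²`, there are `η > 0` and `C > 0` with
`∫₁^B exp(−S_J(τ)) dτ ≤ C e^{−ηJ}` for all `J ≥ 0`. -/
theorem exp_decay_integral (B : ℝ) (hB : 1 < B) :
    ∃ η C : ℝ, 0 < η ∧ 0 < C ∧ ∀ J : ℕ,
      (∫ τ in (1:ℝ)..B, Real.exp (-((1 / 2) *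
          ∑ j ∈ Finset.range (J + 1), nearestIntDist (τ * B ^ j / Real.pi) ^ 2))) ≤
        C * Real.exp (-η * J) := by
  have hπ : 0 < Real.pi := Real.pi_pos
  set δ : ℝ := 1/2048 with hδ
  have hδ0 : 0 < δ := by norm_num [hδ]
  have hδ2 : δ ≤ 1/2 := by norm_num [hδ]
  obtain ⟨m, hm⟩ := pow_unbounded_of_one_lt (6144 : ℝ) hB
  have hB0 : (0:ℝ) < B := by linarith
  have hB1 : (1:ℝ) ≤ B := hB.le
  have hm0 : 0 < m := by
    rcases Nat.eq_zero_or_pos m with h | h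
    · exfalso; rw [h, pow_zero] at hm; norm_num at hm
    · exact h
  have hmR : (1:ℝ) < (m:ℝ) + 1 := by
    have : (1:ℝ) ≤ (m:ℝ) := by exact_mod_cast hm0
    linarith
  set η0 : ℝ := δ^2/4 with hη0
  have hη0pos : 0 < η0 := by positivity
  have hη0le1 : η0 ≤ 1 := by norm_num [hη0, hδ]
  set K : ℝ := (B - 1) + 3 * Real.pi with hK
  have hKpos : 0 < K := by rw [hK]; nlinarith
  have hmpos : (0:ℝ) < (m:ℝ) := by exact_mod_cast hm0
  have hCpos : 0 < ((B - 1) + K) * Real.exp 1 := by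
    apply mul_pos ?_ (Real.exp_pos 1)
    nlinarith
  refine ⟨η0 / m, ((B - 1) + K) * Real.exp 1, by positivity, hCpos, ?_⟩
  intro J
  simp only [mul_div_assoc]
  set T : ℕ := (J+1)/m with hT
  set h : ℕ := T/2 + 1 with hh
  set f : ℝ → ℝ := fun τ => Real.exp (-((1 / 2) *
      ∑ j ∈ Finset.range (J + 1), nearestIntDist (τ * (B ^ j / Real.pi)) ^ 2)) with hf
  set Bad : Set ℝ := ⋃ A ∈ Finset.powersetCard h (Finset.range T),
      ⋂ k ∈ A, {τ : ℝ | nearestIntDist (τ * (B ^ (m*k) / Real.pi)) < δ} with hBad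
  have hEmeas : ∀ j : ℕ, MeasurableSet {τ : ℝ | nearestIntDist (τ * (B ^ j / Real.pi)) < δ} := by
    intro j
    exact measurableSet_lt (measurable_nearestIntDist.comp (measurable_id.mul_const _))
      measurable_const
  have hBadMeas : MeasurableSet Bad := by
    rw [hBad]
    exact MeasurableSet.biUnion (Finset.powersetCard h (Finset.range T)).countable_toSet
      (fun A _ => MeasurableSet.biInter A.countable_toSet (fun k _ => hEmeas (m*k)))
  -- measure bound for Bad
  have hvol : volume (Set.Ioc 1 B ∩ Bad) ≤ ENNReal.ofReal (K * Real.exp (-(T:ℝ))) := by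
    have hsub : Set.Ioc 1 B ∩ Bad ⊆ ⋃ A ∈ Finset.powersetCard h (Finset.range T),
        (Set.Icc 1 B ∩ ⋂ k ∈ A, {τ : ℝ | nearestIntDist (τ * (B ^ (m*k) / Real.pi)) < δ}) := by
      rintro τ ⟨hτI, hτB⟩
      rw [hBad, Set.mem_iUnion₂] at hτB
      obtain ⟨A, hA, hmem⟩ := hτB
      exact Set.mem_biUnion hA ⟨Set.Ioc_subset_Icc_self hτI, hmem⟩
    refine le_trans (measure_mono hsub) ?_
    refine le_trans (measure_biUnion_finset_le _ _) ?_
    have hterm : ∀ A ∈ Finset.powersetCard h (Finset.range T),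
        volume (Set.Icc 1 B ∩ ⋂ k ∈ A, {τ : ℝ | nearestIntDist (τ * (B ^ (m*k) / Real.pi)) < δ})
          ≤ ENNReal.ofReal ((8*δ)^h * K) := by
      intro A hA
      rw [Finset.mem_powersetCard] at hA
      have hcomp : (⋂ k ∈ A, {τ : ℝ | nearestIntDist (τ * (B ^ (m*k) / Real.pi)) < δ})
          = ⋂ k ∈ A, {τ : ℝ | nearestIntDist (τ * ((fun k => B ^ (m*k) / Real.pi) k)) < δ} := rfl
      rw [hcomp]
      have hπeq : (3:ℝ) / (1/Real.pi) = 3 * Real.pi := by field_simp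
      have hKeq : (8*δ)^h * K = (8*δ)^h * ((B - 1) + 3 / (1/Real.pi)) := by
        rw [hK, hπeq]
      rw [hKeq]
      apply inter_small_bound δ (B^m) hδ0 hδ2 ?_ h A _ (1/Real.pi) hA.2 (by positivity) ?_ ?_
      · rw [hδ]
        rw [div_mul_eq_mul_div, le_div_iff₀ (by norm_num : (0:ℝ) < 2048)]
        nlinarith
      · intro k _
        have h1 : (1:ℝ) ≤ B ^ (m*k) := one_le_pow₀ hB1
        rw [div_le_div_iff₀ hπ hπ]
        nlinarith
      · intro k _ k' _ hkk'
        have : B ^ m * (B ^ (m*k) / Real.pi) = B ^ (m + m*k) / Real.pi := by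
          rw [pow_add]; ring
        rw [this]
        rw [div_le_div_iff₀ hπ hπ]
        have h2 : B ^ (m + m*k) ≤ B ^ (m*k') := by
          apply pow_le_pow_right₀ hB1
          have : k + 1 ≤ k' := hkk'
          calc m + m*k = m*(k+1) := by ring
            _ ≤ m*k' := Nat.mul_le_mul_left m this
        nlinarith
    refine le_trans (Finset.sum_le_sum hterm) ?_
    rw [Finset.sum_const, nsmul_eq_mul]
    have hcard : (Finset.powersetCard h (Finset.range T)).card = Nat.choose T h := by
      rw [Finset.card_powersetCard, Finset.card_range]
    rw [hcard]
    calc ((Nat.choose T h : ℕ) : ℝ≥0∞) * ENNReal.ofReal ((8*δ)^h * K)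
        = ENNReal.ofReal ((Nat.choose T h : ℝ) * ((8*δ)^h * K)) := by
          rw [← ENNReal.ofReal_natCast (Nat.choose T h), ← ENNReal.ofReal_mul (by positivity)]
      _ ≤ ENNReal.ofReal (K * Real.exp (-(T:ℝ))) := by
          apply ENNReal.ofReal_le_ofReal
          have hchoose : ((Nat.choose T h : ℕ) : ℝ) ≤ 2^T := by
            have h1 : Nat.choose T h ≤ 2^T := by
              calc Nat.choose T h ≤ ∑ i ∈ Finset.range (T+1), Nat.choose T i := by
                    rcases le_or_gt h T with hle | hlt
                    · exact Finset.single_le_sum (f := fun i => Nat.choose T i)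
                        (fun i _ => Nat.zero_le _) (Finset.mem_range.mpr (by omega))
                    · rw [Nat.choose_eq_zero_of_lt hlt]; exact Nat.zero_le _
                _ = 2^T := Nat.sum_range_choose T
            exact_mod_cast h1
          have h2h : T ≤ 2*h := by omega
          have h8δ : (8*δ:ℝ) = 1/256 := by norm_num [hδ]
          have hp1 : ((8*δ:ℝ))^h = ((1/16:ℝ))^(2*h) := by
            rw [h8δ, pow_mul]; norm_num
          have hp2 : ((1/16:ℝ))^(2*h) ≤ ((1/16:ℝ))^T :=
            pow_le_pow_of_le_one (by norm_num) (by norm_num) h2h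
          have hexp8 : Real.exp 1 ≤ 8 := by
            have := Real.exp_one_lt_d9
            linarith
          have hp3 : ((1/8:ℝ))^T ≤ Real.exp (-(T:ℝ)) := by
            have h18 : (1/8:ℝ) ≤ Real.exp (-1) := by
              rw [Real.exp_neg]
              rw [div_le_iff₀ (by positivity : (0:ℝ) < 8)]
              rw [inv_mul_eq_div, le_div_iff₀ (Real.exp_pos 1)]
              linarith
            calc ((1/8:ℝ))^T ≤ (Real.exp (-1))^T := pow_le_pow_left₀ (by norm_num) h18 T
              _ = Real.exp (-(T:ℝ)) := by
                  rw [← Real.exp_nat_mul]; congr 1; push_cast; ring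
          calc (Nat.choose T h : ℝ) * ((8*δ)^h * K)
              ≤ (2:ℝ)^T * (((1/16:ℝ))^T * K) := by
                apply mul_le_mul hchoose ?_ (by positivity) (by positivity)
                apply mul_le_mul_of_nonneg_right ?_ hKpos.le
                rw [hp1]; exact hp2
            _ = ((1/8:ℝ))^T * K := by rw [← mul_assoc, ← mul_pow]; norm_num
            _ ≤ Real.exp (-(T:ℝ)) * K := by
                apply mul_le_mul_of_nonneg_right hp3 hKpos.le
            _ = K * Real.exp (-(T:ℝ)) := by ring
  -- pointwise bound
  have hpt : ∀ τ : ℝ, f τ ≤ Real.exp (-(η0 * T)) + Bad.indicator (fun _ => (1:ℝ)) τ := by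
    intro τ
    by_cases hτ : τ ∈ Bad
    · rw [Set.indicator_of_mem hτ]
      have h1 : f τ ≤ 1 := by
        rw [hf]
        rw [Real.exp_le_one_iff]
        simp only [neg_nonpos]
        positivity
      have h2 : (0:ℝ) ≤ Real.exp (-(η0 * T)) := (Real.exp_pos _).le
      linarith
    · rw [Set.indicator_of_notMem hτ, add_zero, hf]
      rw [Real.exp_le_exp]
      have key : η0 * T ≤ (1/2) * ∑ j ∈ Finset.range (J + 1),
          nearestIntDist (τ * (B ^ j / Real.pi)) ^ 2 := by
        set G : Finset ℕ := (Finset.range T).filter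
          (fun k => ¬ (nearestIntDist (τ * (B ^ (m*k) / Real.pi)) < δ)) with hG
        set SmallK : Finset ℕ := (Finset.range T).filter
          (fun k => nearestIntDist (τ * (B ^ (m*k) / Real.pi)) < δ) with hSmallK
        have hsk : SmallK.card < h := by
          by_contra hc
          push_neg at hc
          obtain ⟨A, hAsub, hAcard⟩ := Finset.exists_subset_card_eq hc
          apply hτ
          rw [hBad]
          apply Set.mem_biUnion (Finset.mem_powersetCard.mpr
            ⟨hAsub.trans (Finset.filter_subset _ _), hAcard⟩)
          simp only [Set.mem_iInter]
          intro k hk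
          have := hAsub hk
          rw [hSmallK, Finset.mem_filter] at this
          exact this.2
        have hcards : SmallK.card + G.card = T := by
          rw [hSmallK, hG]
          rw [Finset.card_filter_add_card_filter_not]
          · exact Finset.card_range T
        have hGcard : (T:ℝ)/2 ≤ (G.card:ℝ) := by
          have h1 : SmallK.card ≤ T/2 := by omega
          have h2 : ((T/2:ℕ):ℝ) ≤ (T:ℝ)/2 := Nat.cast_div_le
          have h3 : (G.card:ℝ) = (T:ℝ) - (SmallK.card:ℝ) := by
            have := hcards; push_cast [← this]; ring
          have h4 : (SmallK.card:ℝ) ≤ (T:ℝ)/2 := le_trans (by exact_mod_cast h1) h2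
          linarith
        -- sum lower bound
        have himg : G.image (fun k => m*k) ⊆ Finset.range (J+1) := by
          intro j hj
          rw [Finset.mem_image] at hj
          obtain ⟨k, hk, rfl⟩ := hj
          rw [hG, Finset.mem_filter, Finset.mem_range] at hk
          rw [Finset.mem_range]
          have h1 : m * k < m * T := by
            apply Nat.mul_lt_mul_left hm0 |>.mpr hk.1
          have h2 : m * T ≤ J + 1 := by
            rw [hT]; exact Nat.mul_div_le (J+1) m
          omega
        have hsum1 : ∑ j ∈ G.image (fun k => m*k), nearestIntDist (τ * (B ^ j / Real.pi)) ^ 2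
            ≤ ∑ j ∈ Finset.range (J+1), nearestIntDist (τ * (B ^ j / Real.pi)) ^ 2 :=
          Finset.sum_le_sum_of_subset_of_nonneg himg (fun _ _ _ => by positivity)
        have hsum2 : ∑ j ∈ G.image (fun k => m*k), nearestIntDist (τ * (B ^ j / Real.pi)) ^ 2
            = ∑ k ∈ G, nearestIntDist (τ * (B ^ (m*k) / Real.pi)) ^ 2 := by
          apply Finset.sum_image
          intro x _ y _ hxy
          exact Nat.eq_of_mul_eq_mul_left hm0 hxy
        have hper : ∀ k ∈ G, δ^2 ≤ nearestIntDist (τ * (B ^ (m*k) / Real.pi)) ^ 2 := by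
          intro k hk
          rw [hG, Finset.mem_filter] at hk
          push_neg at hk
          have := hk.2
          apply pow_le_pow_left₀ hδ0.le this
        have hsum3 : (G.card : ℝ) * δ^2 ≤ ∑ k ∈ G, nearestIntDist (τ * (B ^ (m*k) / Real.pi)) ^ 2 := by
          calc (G.card : ℝ) * δ^2 = ∑ _k ∈ G, δ^2 := by rw [Finset.sum_const, nsmul_eq_mul]
            _ ≤ _ := Finset.sum_le_sum hper
        rw [hsum2] at hsum1
        have h5 := mul_le_mul_of_nonneg_right hGcard (by positivity : (0:ℝ) ≤ δ^2)
        have heq : η0 * T = (1/2) * ((T:ℝ)/2 * δ^2) := by rw [hη0]; ring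
        rw [heq]
        linarith [hsum1, hsum3, h5]
      linarith [key]
  -- integrability
  have hfm : Measurable f := by
    rw [hf]
    apply Real.measurable_exp.comp
    apply Measurable.neg
    apply Measurable.const_mul
    apply Finset.measurable_sum
    intro j _
    exact (measurable_nearestIntDist.comp (measurable_id.mul_const _)).pow_const 2
  have hIocvol : volume (Set.Ioc (1:ℝ) B) ≠ ⊤ := by
    rw [Real.volume_Ioc]; exact ENNReal.ofReal_ne_top
  have hIocvol' : volume (Set.Ioc (1:ℝ) B) < ⊤ := lt_of_le_of_ne le_top hIocvol
  have hfint : IntegrableOn f (Set.Ioc 1 B) := by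
    apply Measure.integrableOn_of_bounded hIocvol hfm.aestronglyMeasurable (M := 1)
    apply Filter.Eventually.of_forall
    intro τ
    rw [Real.norm_eq_abs, abs_of_nonneg (Real.exp_pos _).le, Real.exp_le_one_iff]
    simp only [neg_nonpos]
    positivity
  have hconst_int : IntegrableOn (fun _ : ℝ => Real.exp (-(η0 * T))) (Set.Ioc 1 B) :=
    integrableOn_const hIocvol
  have hind_int : IntegrableOn (Bad.indicator (fun _ => (1:ℝ))) (Set.Ioc 1 B) := by
    apply Integrable.indicator ?_ hBadMeas
    exact integrableOn_const hIocvol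
  have hle : (∫ τ in Set.Ioc (1:ℝ) B, f τ)
      ≤ ∫ τ in Set.Ioc (1:ℝ) B,
        (Real.exp (-(η0 * T)) + Bad.indicator (fun _ => (1:ℝ)) τ) := by
    apply setIntegral_mono_on hfint (hconst_int.add hind_int) measurableSet_Ioc
    intro τ _
    exact hpt τ
  have hsplit : (∫ τ in Set.Ioc (1:ℝ) B,
        (Real.exp (-(η0 * T)) + Bad.indicator (fun _ => (1:ℝ)) τ))
      = (B - 1) * Real.exp (-(η0 * T)) + (volume (Set.Ioc 1 B ∩ Bad)).toReal := by
    rw [integral_add hconst_int hind_int]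
    congr 1
    · rw [setIntegral_const, measureReal_def, Real.volume_Ioc, ENNReal.toReal_ofReal (by linarith), smul_eq_mul]
    · rw [setIntegral_indicator hBadMeas, setIntegral_const, smul_eq_mul, mul_one, measureReal_def]
  have h3 : (volume (Set.Ioc 1 B ∩ Bad)).toReal ≤ K * Real.exp (-(T:ℝ)) :=
    ENNReal.toReal_le_of_le_ofReal (by positivity) hvol
  -- numeric conclusion
  have hcast : (J:ℝ) + 1 < m*(T+1) := by
    have := Nat.lt_mul_div_succ (J+1) hm0
    rw [hT]; exact_mod_cast this
  have hexpT : Real.exp (-(T:ℝ)) ≤ Real.exp (-(η0 * T)) := by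
    apply Real.exp_le_exp.mpr
    have : η0 * T ≤ 1 * T := by
      apply mul_le_mul_of_nonneg_right hη0le1 (Nat.cast_nonneg T)
    linarith
  have hfinal2 : Real.exp (-(η0 * T)) ≤ Real.exp 1 * Real.exp (-(η0 / m * J)) :=
    exp_step_aux η0 m T J hη0pos hη0le1 hmpos hcast
  rw [intervalIntegral.integral_of_le hB1]
  calc (∫ τ in Set.Ioc (1:ℝ) B, f τ)
      ≤ (B - 1) * Real.exp (-(η0 * T)) + (volume (Set.Ioc 1 B ∩ Bad)).toReal := by
        rw [← hsplit]; exact hle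
    _ ≤ (B - 1) * Real.exp (-(η0 * T)) + K * Real.exp (-(T:ℝ)) := by linarith
    _ ≤ ((B - 1) + K) * Real.exp (-(η0 * T)) := by nlinarith [Real.exp_pos (-(η0*T)), hexpT, hKpos]
    _ ≤ ((B - 1) + K) * (Real.exp 1 * Real.exp (-(η0 / m * J))) := by
        apply mul_le_mul_of_nonneg_left hfinal2 (by nlinarith)
    _ = ((B - 1) + K) * Real.exp 1 * Real.exp (-(η0 / m) * J) := by rw [neg_mul]; ring
end

section
/- Let f be a real-valued Z-additive function such that both series ∑_{j≥2} f(F_j) and ∑_{j≥2} f(F_j)² converge. Then (1/N) ∑_{n<N} |f(n)| = O(1) as N → ∞; that is, there exists a constant C (depending on f) such that ∑_{n<N} |f(n)| ≤ C·N for all N ≥ 1. -/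
open Filter Finset Topology
open scoped goldenRatio

/-- `f : ℕ → ℝ` is `Z`-additive (additive along Zeckendorf expansions). -/
def IsZAdditive (f : ℕ → ℝ) : Prop :=
  f 0 = 0 ∧ ∀ k m : ℕ, 2 ≤ k → m < Nat.fib (k - 1) →
    f (Nat.fib k + m) = f (Nat.fib k) + f m

noncomputable section ZeckAux

private def gseq (f : ℕ → ℝ) (i : ℕ) : ℝ := f (Nat.fib (i + 1))

private def Zs (f : ℕ → ℝ) (K : ℕ) : ℝ := ∑ n ∈ Finset.range (Nat.fib K), f n

private def Ts (f : ℕ → ℝ) (K : ℕ) : ℝ := ∑ n ∈ Finset.range (Nat.fib K), (f n) ^ 2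

private lemma fib_le_goldpow (n : ℕ) : (Nat.fib n : ℝ) ≤ φ ^ n := by
  induction n using Nat.twoStepInduction with
  | zero => simp
  | one => simpa using Real.one_lt_goldenRatio.le
  | more n ih1 ih2 =>
    have h : φ ^ (n + 2) = φ ^ n + φ ^ (n + 1) := by
      have := Real.goldenRatio_sq
      calc φ ^ (n+2) = φ ^ n * φ ^ 2 := by ring
      _ = φ ^ n * (φ + 1) := by rw [Real.goldenRatio_sq]
      _ = φ ^ n + φ ^ (n+1) := by ring
    rw [Nat.fib_add_two, h]
    push_cast
    exact add_le_add ih1 ih2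

private lemma goldpow_le_fib (n : ℕ) : φ ^ n ≤ (Nat.fib (n + 2) : ℝ) := by
  induction n using Nat.twoStepInduction with
  | zero => simp
  | one =>
    have : (Nat.fib 3 : ℝ) = 2 := by norm_num [Nat.fib]
    rw [this, pow_one]
    exact Real.goldenRatio_lt_two.le
  | more n ih1 ih2 =>
    have h : φ ^ (n + 2) = φ ^ n + φ ^ (n + 1) := by
      calc φ ^ (n+2) = φ ^ n * φ ^ 2 := by ring
      _ = φ ^ n * (φ + 1) := by rw [Real.goldenRatio_sq]
      _ = φ ^ n + φ ^ (n+1) := by ring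
    rw [h, show n + 2 + 2 = (n + 2) + 2 from rfl, Nat.fib_add_two]
    push_cast
    exact add_le_add ih1 ih2

private lemma fib_mul_fib_le (a b : ℕ) : Nat.fib a * Nat.fib b ≤ Nat.fib (a + b) := by
  cases a with
  | zero => simp
  | succ a' =>
    have h := Nat.fib_add a' b
    have : Nat.fib (a' + 1) * Nat.fib b ≤ Nat.fib (a' + 1) * Nat.fib (b + 1) :=
      Nat.mul_le_mul_left _ (Nat.fib_mono (Nat.le_succ b))
    calc Nat.fib (a' + 1) * Nat.fib b ≤ Nat.fib (a' + 1) * Nat.fib (b + 1) := this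
    _ ≤ Nat.fib a' * Nat.fib b + Nat.fib (a' + 1) * Nat.fib (b + 1) := Nat.le_add_left _ _
    _ = Nat.fib (a' + b + 1) := h.symm
    _ = Nat.fib (a' + 1 + b) := by ring_nf

private lemma geom_le' {r : ℝ} (h0 : 0 ≤ r) (h1 : r < 1) (n : ℕ) :
    ∑ i ∈ Finset.range n, r ^ i ≤ (1 - r)⁻¹ := by
  have hr : 0 < 1 - r := by linarith
  rw [geom_sum_eq (by linarith : r ≠ 1) n]
  rw [div_le_iff_of_neg (by linarith : r - 1 < 0)]
  have hrn : 0 ≤ r ^ n := pow_nonneg h0 n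
  have : (1 - r)⁻¹ * (r - 1) = -1 := by field_simp; ring
  rw [this]
  linarith

private lemma bdd_helper {x : ℕ → ℝ} {L : ℝ} (h : Tendsto x atTop (𝓝 L)) :
    ∃ M : ℝ, 0 ≤ M ∧ ∀ n, |x n| ≤ M := by
  obtain ⟨R, hR0, hR⟩ := cauchySeq_bdd h.cauchySeq
  refine ⟨|x 0| + R, by positivity, fun n => ?_⟩
  have := hR n 0
  rw [Real.dist_eq] at this
  calc |x n| = |x n - x 0 + x 0| := by ring_nf
  _ ≤ |x n - x 0| + |x 0| := abs_add_le _ _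
  _ ≤ |x 0| + R := by linarith

private lemma Zs_rec (f : ℕ → ℝ) (hf : IsZAdditive f) (K : ℕ) :
    Zs f (K + 2) = Zs f (K + 1) + Zs f K + Nat.fib K * gseq f K := by
  have hsplit : Zs f (K + 2) =
      Zs f (K + 1) + ∑ m ∈ Finset.range (Nat.fib K), f (Nat.fib (K + 1) + m) := by
    unfold Zs
    rw [show Nat.fib (K + 2) = Nat.fib (K + 1) + Nat.fib K from by rw [Nat.fib_add_two]; omega]
    exact Finset.sum_range_add f _ _
  cases K with
  | zero => simp [hsplit, Zs, gseq]
  | succ K' =>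
    rw [hsplit]
    have hc : ∀ m ∈ Finset.range (Nat.fib (K' + 1)),
        f (Nat.fib (K' + 2) + m) = f (Nat.fib (K' + 2)) + f m := by
      intro m hm
      exact hf.2 (K' + 2) m (by omega) (by simpa using Finset.mem_range.mp hm)
    rw [Finset.sum_congr rfl hc, Finset.sum_add_distrib, Finset.sum_const, Finset.card_range]
    unfold Zs gseq
    push_cast
    ring

private lemma Ts_rec (f : ℕ → ℝ) (hf : IsZAdditive f) (K : ℕ) :
    Ts f (K + 2) = Ts f (K + 1) + Ts f K +
      (Nat.fib K * (gseq f K) ^ 2 + 2 * gseq f K * Zs f K) := by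
  have hsplit : Ts f (K + 2) =
      Ts f (K + 1) + ∑ m ∈ Finset.range (Nat.fib K), (f (Nat.fib (K + 1) + m)) ^ 2 := by
    unfold Ts
    rw [show Nat.fib (K + 2) = Nat.fib (K + 1) + Nat.fib K from by rw [Nat.fib_add_two]; omega]
    exact Finset.sum_range_add (fun n => (f n) ^ 2) _ _
  cases K with
  | zero => simp [hsplit, Ts, Zs, gseq]
  | succ K' =>
    rw [hsplit]
    have hc : ∀ m ∈ Finset.range (Nat.fib (K' + 1)),
        (f (Nat.fib (K' + 2) + m)) ^ 2 =
          (f (Nat.fib (K' + 2))) ^ 2 + 2 * f (Nat.fib (K' + 2)) * f m + (f m) ^ 2 := by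
      intro m hm
      rw [hf.2 (K' + 2) m (by omega) (by simpa using Finset.mem_range.mp hm)]
      ring
    rw [Finset.sum_congr rfl hc, Finset.sum_add_distrib, Finset.sum_add_distrib,
      Finset.sum_const, Finset.card_range, ← Finset.mul_sum]
    unfold Ts Zs gseq
    push_cast
    ring

private lemma closed_form (u e : ℕ → ℝ) (h0 : u 0 = 0) (h1 : u 1 = 0)
    (hrec : ∀ K, u (K + 2) = u (K + 1) + u K + e K) (K : ℕ) :
    u K = ∑ i ∈ Finset.range K, (Nat.fib (K - 1 - i) : ℝ) * e i := by
  induction K using Nat.twoStepInduction with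
  | zero => simpa using h0
  | one => simpa using h1
  | more n ih1 ih2 =>
    rw [hrec n, ih1, ih2]
    rw [Finset.sum_range_succ (fun i => (Nat.fib (n + 2 - 1 - i) : ℝ) * e i),
      Finset.sum_range_succ (fun i => (Nat.fib (n + 2 - 1 - i) : ℝ) * e i)]
    have hsplit : ∀ i ∈ Finset.range n,
        (Nat.fib (n + 2 - 1 - i) : ℝ) * e i =
          (Nat.fib (n + 1 - 1 - i) : ℝ) * e i + (Nat.fib (n - 1 - i) : ℝ) * e i := by
      intro i hi
      have hi' := Finset.mem_range.mp hi
      have h2 : n + 2 - 1 - i = (n - 1 - i) + 2 := by omega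
      have h3 : (n - 1 - i) + 1 = n + 1 - 1 - i := by omega
      rw [h2, Nat.fib_add_two, h3]
      push_cast
      ring
    rw [Finset.sum_congr rfl hsplit, Finset.sum_add_distrib]
    have e1 : (Nat.fib (n + 2 - 1 - n) : ℝ) = 1 := by norm_num [show n + 2 - 1 - n = 1 by omega]
    have e2 : (Nat.fib (n + 2 - 1 - (n + 1)) : ℝ) = 0 := by
      norm_num [show n + 2 - 1 - (n + 1) = 0 by omega]
    have e3 : ∑ i ∈ Finset.range (n + 1), (Nat.fib (n + 1 - 1 - i) : ℝ) * e i =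
        ∑ i ∈ Finset.range n, (Nat.fib (n + 1 - 1 - i) : ℝ) * e i := by
      rw [Finset.sum_range_succ]
      norm_num [show n + 1 - 1 - n = 0 by omega]
    rw [e1, e2, e3]
    ring

private lemma abs_goldConj : |ψ| = φ⁻¹ := by
  have h : ψ = -φ⁻¹ := by
    have := Real.inv_goldenRatio
    linarith
  rw [abs_of_neg Real.goldenConj_neg, h]
  ring

private lemma rr_nonneg : (0:ℝ) ≤ (φ⁻¹) ^ 2 := by positivity

private lemma rr_lt_one : (φ⁻¹) ^ 2 < 1 := by
  have h1 : φ⁻¹ < 1 := by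
    rw [inv_lt_one_iff₀]
    right; exact Real.one_lt_goldenRatio
  have h0 : (0:ℝ) ≤ φ⁻¹ := by positivity
  nlinarith

private lemma c2_pos : (0:ℝ) < (1 - (φ⁻¹) ^ 2)⁻¹ := by
  have h := rr_lt_one
  have h2 : (0:ℝ) < 1 - (φ⁻¹) ^ 2 := by linarith
  positivity

private lemma one_le_goldpow (n : ℕ) : (1:ℝ) ≤ φ ^ n :=
  one_le_pow₀ Real.one_lt_goldenRatio.le

private lemma pow_helper {a i : ℕ} (h : i ≤ a) :
    φ ^ (a - i) * (φ⁻¹) ^ i = φ ^ a * ((φ⁻¹) ^ 2) ^ i := by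
  have key : φ ^ (a - i) * φ ^ (2 * i) = φ ^ a * φ ^ i := by
    rw [← pow_add, ← pow_add]
    congr 1
    omega
  rw [← pow_mul, inv_pow, inv_pow, ← div_eq_mul_inv, ← div_eq_mul_inv,
    div_eq_div_iff (by positivity) (by positivity)]
  linarith [key]

private lemma sum_pow_le {r b : ℝ} (h0 : 0 ≤ r) (h1 : r < 1) (hb : 0 ≤ b) (K : ℕ) :
    ∑ i ∈ Finset.range K, r ^ i * b ≤ (1 - r)⁻¹ * b := by
  rw [← Finset.sum_mul]
  exact mul_le_mul_of_nonneg_right (geom_le' h0 h1 K) hb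

private lemma sum_pow_reflect_le {r b : ℝ} (h0 : 0 ≤ r) (h1 : r < 1) (hb : 0 ≤ b) (K : ℕ) :
    ∑ i ∈ Finset.range K, r ^ (K - 1 - i) * b ≤ (1 - r)⁻¹ * b := by
  have h := Finset.sum_range_reflect (fun j => r ^ j * b) K
  rw [h]
  exact sum_pow_le h0 h1 hb K

private lemma sum_Ico_pow_le {r : ℝ} (h0 : 0 ≤ r) (h1 : r < 1) (l K : ℕ) :
    ∑ i ∈ Finset.Ico (l + 1) K, r ^ (i - l) ≤ (1 - r)⁻¹ := by
  rw [Finset.sum_Ico_eq_sum_range]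
  have hstep : ∀ i ∈ Finset.range (K - (l + 1)), r ^ (l + 1 + i - l) ≤ r ^ i := by
    intro i _
    rw [show l + 1 + i - l = i + 1 by omega, pow_succ]
    nlinarith [pow_nonneg h0 i]
  exact (Finset.sum_le_sum hstep).trans (geom_le' h0 h1 _)

private lemma tri_swap_s17 (F : ℕ → ℕ → ℝ) (K : ℕ) :
    ∑ i ∈ Finset.range K, ∑ l ∈ Finset.range i, F i l =
      ∑ l ∈ Finset.range K, ∑ i ∈ Finset.Ico (l + 1) K, F i l := by
  have h := Finset.sum_Ico_Ico_comm' 0 K (fun l i => F i l)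
  simpa [Nat.Ico_zero_eq_range] using h.symm

private lemma Zs_bound (f : ℕ → ℝ) (hf : IsZAdditive f) {B M' : ℝ} (hB0 : 0 ≤ B) (hM0 : 0 ≤ M')
    (hB : ∀ i, |gseq f i| ≤ B)
    (hσ : ∀ K, |∑ i ∈ Finset.range K, gseq f i| ≤ M') (K : ℕ) :
    |Zs f K| ≤ (M' + B * (1 - (φ⁻¹) ^ 2)⁻¹) * φ ^ K := by
  set g := gseq f with hg
  set rr : ℝ := (φ⁻¹) ^ 2 with hrr
  set c2 : ℝ := (1 - rr)⁻¹ with hc2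
  have hc2n : 0 ≤ c2 := c2_pos.le
  have hZcf := closed_form (Zs f) (fun i => (Nat.fib i : ℝ) * g i) (by simp [Zs])
    (by simp [Zs, hf.1]) (fun K => Zs_rec f hf K) K
  have hterm : ∀ i ∈ Finset.range K,
      (Nat.fib (K - 1 - i) : ℝ) * ((Nat.fib i : ℝ) * g i) =
        (1/5) * (φ ^ (K - 1 - i) * φ ^ i * g i) - (1/5) * (φ ^ (K - 1 - i) * ψ ^ i * g i)
        - (1/5) * (ψ ^ (K - 1 - i) * φ ^ i * g i) + (1/5) * (ψ ^ (K - 1 - i) * ψ ^ i * g i) := by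
    intro i _
    rw [Real.coe_fib_eq, Real.coe_fib_eq]
    have h5 : (Real.sqrt 5) * Real.sqrt 5 = 5 := Real.mul_self_sqrt (by norm_num)
    have e : ((φ ^ (K-1-i) - ψ ^ (K-1-i))/√5) * (((φ ^ i - ψ ^ i)/√5) * g i) =
        ((φ ^ (K-1-i) - ψ ^ (K-1-i)) * ((φ ^ i - ψ ^ i) * g i))/(√5 * √5) := by
      ring
    rw [e, h5]
    ring
  have hZ2 : Zs f K =
      (1/5) * (∑ i ∈ Finset.range K, φ ^ (K - 1 - i) * φ ^ i * g i)
      - (1/5) * (∑ i ∈ Finset.range K, φ ^ (K - 1 - i) * ψ ^ i * g i)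
      - (1/5) * (∑ i ∈ Finset.range K, ψ ^ (K - 1 - i) * φ ^ i * g i)
      + (1/5) * (∑ i ∈ Finset.range K, ψ ^ (K - 1 - i) * ψ ^ i * g i) := by
    rw [hZcf, Finset.sum_congr rfl hterm, Finset.sum_add_distrib, Finset.sum_sub_distrib,
      Finset.sum_sub_distrib, ← Finset.mul_sum, ← Finset.mul_sum, ← Finset.mul_sum,
      ← Finset.mul_sum]
  have hS1 : (∑ i ∈ Finset.range K, φ ^ (K - 1 - i) * φ ^ i * g i) =
      φ ^ (K - 1) * ∑ i ∈ Finset.range K, g i := by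
    rw [Finset.mul_sum]
    refine Finset.sum_congr rfl fun i hi => ?_
    rw [← pow_add, show K - 1 - i + i = K - 1 by have := Finset.mem_range.mp hi; omega]
  have hS4 : (∑ i ∈ Finset.range K, ψ ^ (K - 1 - i) * ψ ^ i * g i) =
      ψ ^ (K - 1) * ∑ i ∈ Finset.range K, g i := by
    rw [Finset.mul_sum]
    refine Finset.sum_congr rfl fun i hi => ?_
    rw [← pow_add, show K - 1 - i + i = K - 1 by have := Finset.mem_range.mp hi; omega]
  have habs1 : |φ ^ (K - 1) * ∑ i ∈ Finset.range K, g i| ≤ φ ^ (K - 1) * M' := by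
    rw [abs_mul, abs_of_pos (pow_pos Real.goldenRatio_pos _)]
    exact mul_le_mul_of_nonneg_left (hσ K) (pow_pos Real.goldenRatio_pos _).le
  have habs4 : |ψ ^ (K - 1) * ∑ i ∈ Finset.range K, g i| ≤ φ ^ (K - 1) * M' := by
    rw [abs_mul, abs_pow, abs_goldConj]
    have h1 : (φ⁻¹) ^ (K - 1) ≤ 1 := pow_le_one₀ (by positivity)
      (inv_le_one_of_one_le₀ Real.one_lt_goldenRatio.le)
    have h2 := hσ K
    nlinarith [one_le_goldpow (K - 1), abs_nonneg (∑ i ∈ Finset.range K, g i),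
      pow_nonneg (by positivity : (0:ℝ) ≤ φ⁻¹) (K - 1)]
  have habs2 : |∑ i ∈ Finset.range K, φ ^ (K - 1 - i) * ψ ^ i * g i| ≤ φ ^ (K - 1) * (c2 * B) := by
    calc |∑ i ∈ Finset.range K, φ ^ (K - 1 - i) * ψ ^ i * g i|
        ≤ ∑ i ∈ Finset.range K, |φ ^ (K - 1 - i) * ψ ^ i * g i| :=
          Finset.abs_sum_le_sum_abs _ _
      _ ≤ ∑ i ∈ Finset.range K, φ ^ (K - 1) * (rr ^ i * B) := by
          refine Finset.sum_le_sum fun i hi => ?_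
          have hik : i ≤ K - 1 := by have := Finset.mem_range.mp hi; omega
          have e1 : |φ ^ (K - 1 - i) * ψ ^ i * g i| = φ ^ (K - 1 - i) * (φ⁻¹) ^ i * |g i| := by
            rw [abs_mul, abs_mul, abs_pow, abs_pow, abs_goldConj, abs_of_pos Real.goldenRatio_pos]
          rw [e1, pow_helper hik, mul_assoc]
          exact mul_le_mul_of_nonneg_left
            (mul_le_mul_of_nonneg_left (hB i) (by positivity)) (by positivity)
      _ = φ ^ (K - 1) * ∑ i ∈ Finset.range K, rr ^ i * B := by rw [Finset.mul_sum]
      _ ≤ φ ^ (K - 1) * (c2 * B) := by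
          refine mul_le_mul_of_nonneg_left ?_ (by positivity)
          exact sum_pow_le rr_nonneg rr_lt_one hB0 K
  have habs3 : |∑ i ∈ Finset.range K, ψ ^ (K - 1 - i) * φ ^ i * g i| ≤ φ ^ (K - 1) * (c2 * B) := by
    calc |∑ i ∈ Finset.range K, ψ ^ (K - 1 - i) * φ ^ i * g i|
        ≤ ∑ i ∈ Finset.range K, |ψ ^ (K - 1 - i) * φ ^ i * g i| :=
          Finset.abs_sum_le_sum_abs _ _
      _ ≤ ∑ i ∈ Finset.range K, φ ^ (K - 1) * (rr ^ (K - 1 - i) * B) := by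
          refine Finset.sum_le_sum fun i hi => ?_
          have hik : K - 1 - i ≤ K - 1 := by omega
          have hik2 : K - 1 - (K - 1 - i) = i := by have := Finset.mem_range.mp hi; omega
          have e1 : |ψ ^ (K - 1 - i) * φ ^ i * g i| = φ ^ i * (φ⁻¹) ^ (K - 1 - i) * |g i| := by
            rw [abs_mul, abs_mul, abs_pow, abs_pow, abs_goldConj, abs_of_pos Real.goldenRatio_pos]
            ring
          have hph := pow_helper hik
          rw [hik2] at hph
          rw [e1, hph, mul_assoc]
          exact mul_le_mul_of_nonneg_left
            (mul_le_mul_of_nonneg_left (hB i) (by positivity)) (by positivity)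
      _ = φ ^ (K - 1) * ∑ i ∈ Finset.range K, rr ^ (K - 1 - i) * B := by rw [Finset.mul_sum]
      _ ≤ φ ^ (K - 1) * (c2 * B) := by
          refine mul_le_mul_of_nonneg_left ?_ (by positivity)
          exact sum_pow_reflect_le rr_nonneg rr_lt_one hB0 K
  rw [hZ2, hS1, hS4]
  have hpow : φ ^ (K - 1) ≤ φ ^ K := pow_le_pow_right₀ Real.one_lt_goldenRatio.le (by omega)
  have hr1 : φ ^ (K - 1) * M' ≤ φ ^ K * M' := mul_le_mul_of_nonneg_right hpow hM0
  have hr2 : φ ^ (K - 1) * (c2 * B) ≤ φ ^ K * (c2 * B) :=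
    mul_le_mul_of_nonneg_right hpow (mul_nonneg hc2n hB0)
  have hRR : (M' + B * c2) * φ ^ K = φ ^ K * M' + φ ^ K * (c2 * B) := by ring
  have hn1 : (0:ℝ) ≤ φ ^ (K - 1) * M' := mul_nonneg (by positivity) hM0
  have hn2 : (0:ℝ) ≤ φ ^ (K - 1) * (c2 * B) := mul_nonneg (by positivity) (mul_nonneg hc2n hB0)
  rw [abs_le]
  constructor <;>
    [ (nlinarith [abs_le.mp habs1, abs_le.mp habs2, abs_le.mp habs3, abs_le.mp habs4]);
      (nlinarith [abs_le.mp habs1, abs_le.mp habs2, abs_le.mp habs3, abs_le.mp habs4]) ]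

private lemma pow_helper0 {i a : ℕ} (h : i ≤ a) : φ ^ (a - i) = φ ^ a * (φ⁻¹) ^ i := by
  rw [inv_pow, eq_comm, mul_inv_eq_iff_eq_mul₀ (by positivity), ← pow_add]
  congr 1
  omega

private lemma pow_helper2 {l i : ℕ} (h : l < i) :
    (φ⁻¹) ^ i * φ ^ (i - 1 - l) = φ⁻¹ * (φ⁻¹) ^ l := by
  have key : φ ^ (i - 1 - l) * φ ^ (l + 1) = φ ^ i * 1 := by
    rw [← pow_add, mul_one]
    congr 1
    omega
  rw [inv_pow, inv_pow, mul_comm, ← div_eq_mul_inv, ← mul_inv, ← pow_succ',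
    ← one_div, div_eq_div_iff (by positivity) (by positivity)]
  linarith [key]

private lemma pow_helper3 {l i : ℕ} (h : l < i) :
    (φ⁻¹) ^ i * (φ⁻¹) ^ (i - 1 - l) * φ ^ l = φ * ((φ⁻¹) ^ 2) ^ (i - l) := by
  rw [inv_pow, inv_pow, ← pow_mul, inv_pow, ← mul_inv, ← pow_add, mul_comm, ← div_eq_mul_inv,
    ← div_eq_mul_inv, div_eq_div_iff (by positivity) (by positivity), ← pow_add]
  have key2 : φ ^ (l + 2 * (i - l)) = φ ^ (i + (i - 1 - l) + 1) := by
    congr 1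
    omega
  rw [key2, pow_succ]
  ring

private lemma goldConj_eq : ψ = -φ⁻¹ := by
  have := Real.inv_goldenRatio
  linarith

private lemma inv_mul_goldConj : φ⁻¹ * ψ = -((φ⁻¹) ^ 2) := by
  rw [goldConj_eq]
  ring

private lemma sqrt5_facts : (1:ℝ) ≤ √5 ∧ (2:ℝ) ≤ √5 := by
  have h := Real.sq_sqrt (by norm_num : (0:ℝ) ≤ 5)
  have h0 := Real.sqrt_nonneg 5
  constructor <;> nlinarith

set_option maxHeartbeats 2000000 in
private lemma U_bound (f : ℕ → ℝ) (hf : IsZAdditive f) {B M' Q' : ℝ}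
    (hB0 : 0 ≤ B) (hM0 : 0 ≤ M') (hQ0 : 0 ≤ Q')
    (hB : ∀ i, |gseq f i| ≤ B)
    (hσ : ∀ K, |∑ i ∈ Finset.range K, gseq f i| ≤ M')
    (hq : ∀ K, ∑ i ∈ Finset.range K, (gseq f i) ^ 2 ≤ Q') (K : ℕ) :
    |∑ i ∈ Finset.range K, (φ⁻¹) ^ i * gseq f i * Zs f i| ≤
      (M' ^ 2 + Q') / 2 + 2 * B * M' * (1 - (φ⁻¹) ^ 2)⁻¹ + 2 * Q' * (1 - (φ⁻¹) ^ 2)⁻¹ := by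
  set g := gseq f with hg
  set rr : ℝ := (φ⁻¹) ^ 2 with hrr
  set c2 : ℝ := (1 - rr)⁻¹ with hc2
  have hc2n : 0 ≤ c2 := c2_pos.le
  have h5 : (0:ℝ) < √5 := by positivity
  have h51 : (1:ℝ) ≤ √5 := sqrt5_facts.1
  have h52 : (2:ℝ) ≤ √5 := sqrt5_facts.2
  have h5i : ((√5)⁻¹ : ℝ) ≤ 1 := inv_le_one_of_one_le₀ h51
  have h5in : (0:ℝ) ≤ (√5)⁻¹ := by positivity
  have hZcf : ∀ i, Zs f i = ∑ l ∈ Finset.range i, (Nat.fib (i - 1 - l) : ℝ) *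
      ((Nat.fib l : ℝ) * g l) :=
    fun i => closed_form (Zs f) (fun l => (Nat.fib l : ℝ) * g l) (by simp [Zs])
      (by simp [Zs, hf.1]) (fun K => Zs_rec f hf K) i
  -- step 1 : expansion of each term
  have hterm : ∀ i ∈ Finset.range K,
      (φ⁻¹) ^ i * g i * Zs f i =
        (√5)⁻¹ * φ⁻¹ * (g i * ∑ l ∈ Finset.range i, (φ⁻¹) ^ l * ((Nat.fib l : ℝ) * g l))
        - (√5)⁻¹ *
          ∑ l ∈ Finset.range i, (φ⁻¹) ^ i * ψ ^ (i - 1 - l) * ((Nat.fib l : ℝ) * (g l * g i)) := by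
    intro i _
    rw [hZcf i, Finset.mul_sum]
    have hl : ∀ l ∈ Finset.range i,
        (φ⁻¹) ^ i * g i * ((Nat.fib (i - 1 - l) : ℝ) * ((Nat.fib l : ℝ) * g l)) =
          (√5)⁻¹ * φ⁻¹ * (g i * ((φ⁻¹) ^ l * ((Nat.fib l : ℝ) * g l)))
          - (√5)⁻¹ * ((φ⁻¹) ^ i * ψ ^ (i - 1 - l) * ((Nat.fib l : ℝ) * (g l * g i))) := by
      intro l hli
      rw [Real.coe_fib_eq (i - 1 - l)]
      have h2 := pow_helper2 (Finset.mem_range.mp hli)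
      have expand : (φ⁻¹) ^ i * g i * (((φ ^ (i - 1 - l) - ψ ^ (i - 1 - l)) / √5) *
          ((Nat.fib l : ℝ) * g l)) =
            (√5)⁻¹ * (((φ⁻¹) ^ i * φ ^ (i - 1 - l)) * (g i * ((Nat.fib l : ℝ) * g l)))
            - (√5)⁻¹ * ((φ⁻¹) ^ i * ψ ^ (i - 1 - l) * ((Nat.fib l : ℝ) * (g l * g i))) := by
        ring
      rw [expand, h2]
      ring
    rw [Finset.sum_congr rfl hl, Finset.sum_sub_distrib]
    simp only [← Finset.mul_sum]
  have hU : ∑ i ∈ Finset.range K, (φ⁻¹) ^ i * g i * Zs f i =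
      (√5)⁻¹ * φ⁻¹ *
        (∑ i ∈ Finset.range K, g i * ∑ l ∈ Finset.range i, (φ⁻¹) ^ l * ((Nat.fib l : ℝ) * g l))
      - (√5)⁻¹ * ∑ i ∈ Finset.range K,
          (∑ l ∈ Finset.range i, (φ⁻¹) ^ i * ψ ^ (i - 1 - l) * ((Nat.fib l : ℝ) * (g l * g i))) := by
    rw [Finset.sum_congr rfl hterm, Finset.sum_sub_distrib]
    simp only [← Finset.mul_sum]
  -- step 2 : the W sums
  have hW : ∀ i, (∑ l ∈ Finset.range i, (φ⁻¹) ^ l * ((Nat.fib l : ℝ) * g l)) =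
      (√5)⁻¹ * ((∑ l ∈ Finset.range i, g l) - ∑ l ∈ Finset.range i, (-rr) ^ l * g l) := by
    intro i
    have hl : ∀ l ∈ Finset.range i, (φ⁻¹) ^ l * ((Nat.fib l : ℝ) * g l) =
        (√5)⁻¹ * (g l - (-rr) ^ l * g l) := by
      intro l _
      rw [Real.coe_fib_eq l]
      have h1 : (φ⁻¹ : ℝ) ^ l * φ ^ l = 1 := by
        rw [← mul_pow, inv_mul_cancel₀ Real.goldenRatio_ne_zero, one_pow]
      have h2 : (φ⁻¹ : ℝ) ^ l * ψ ^ l = (-rr) ^ l := by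
        rw [← mul_pow, inv_mul_goldConj]
      have expand : (φ⁻¹) ^ l * (((φ ^ l - ψ ^ l) / √5) * g l) =
          (√5)⁻¹ * (((φ⁻¹) ^ l * φ ^ l) * g l - ((φ⁻¹) ^ l * ψ ^ l) * g l) := by
        ring
      rw [expand, h1, h2, one_mul]
    rw [Finset.sum_congr rfl hl, ← Finset.mul_sum, Finset.sum_sub_distrib]
  have hGW : (∑ i ∈ Finset.range K, g i *
        ∑ l ∈ Finset.range i, (φ⁻¹) ^ l * ((Nat.fib l : ℝ) * g l)) =
      (√5)⁻¹ * ((∑ i ∈ Finset.range K, g i * ∑ l ∈ Finset.range i, g l)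
        - ∑ i ∈ Finset.range K, g i * ∑ l ∈ Finset.range i, (-rr) ^ l * g l) := by
    have hl : ∀ i ∈ Finset.range K, g i *
        (∑ l ∈ Finset.range i, (φ⁻¹) ^ l * ((Nat.fib l : ℝ) * g l)) =
          (√5)⁻¹ * (g i * ∑ l ∈ Finset.range i, g l)
          - (√5)⁻¹ * (g i * ∑ l ∈ Finset.range i, (-rr) ^ l * g l) := by
      intro i _
      rw [hW i]
      ring
    rw [Finset.sum_congr rfl hl, Finset.sum_sub_distrib, ← Finset.mul_sum, ← Finset.mul_sum]
    ring
  -- bound on the pair sum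
  have hid : ∀ n, 2 * (∑ i ∈ Finset.range n, g i * ∑ l ∈ Finset.range i, g l) =
      (∑ i ∈ Finset.range n, g i) ^ 2 - ∑ i ∈ Finset.range n, (g i) ^ 2 := by
    intro n
    induction n with
    | zero => simp
    | succ m ih =>
      rw [Finset.sum_range_succ, Finset.sum_range_succ (fun i => g i),
        Finset.sum_range_succ (fun i => (g i) ^ 2)]
      linear_combination ih
  have hb1 : |∑ i ∈ Finset.range K, g i * ∑ l ∈ Finset.range i, g l| ≤ (M' ^ 2 + Q') / 2 := by
    have h := hid K
    have hσK := hσ K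
    have hqK := hq K
    have hq0' : (0:ℝ) ≤ ∑ i ∈ Finset.range K, (g i) ^ 2 :=
      Finset.sum_nonneg fun i _ => sq_nonneg _
    have hσ2 : (∑ i ∈ Finset.range K, g i) ^ 2 ≤ M' ^ 2 := by
      rw [← sq_abs]
      exact pow_le_pow_left₀ (abs_nonneg _) hσK 2
    have hσ2' : (0:ℝ) ≤ (∑ i ∈ Finset.range K, g i) ^ 2 := sq_nonneg _
    rw [abs_le]
    constructor <;> nlinarith
  -- bound on the E sum
  have hIco : ∀ l, |∑ i ∈ Finset.Ico (l + 1) K, g i| ≤ 2 * M' := by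
    intro l
    rcases le_or_gt (l + 1) K with h | h
    · rw [Finset.sum_Ico_eq_sub _ h]
      calc |∑ i ∈ Finset.range K, g i - ∑ i ∈ Finset.range (l + 1), g i|
          ≤ |∑ i ∈ Finset.range K, g i| + |∑ i ∈ Finset.range (l + 1), g i| := abs_sub _ _
        _ ≤ 2 * M' := by have := hσ K; have := hσ (l + 1); linarith
    · rw [Finset.Ico_eq_empty (by omega)]
      simp
      linarith
  have hb2 : |∑ i ∈ Finset.range K, g i * ∑ l ∈ Finset.range i, (-rr) ^ l * g l| ≤
      c2 * (B * (2 * M')) := by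
    have hswap : (∑ i ∈ Finset.range K, g i * ∑ l ∈ Finset.range i, (-rr) ^ l * g l) =
        ∑ l ∈ Finset.range K, ((-rr) ^ l * g l) * ∑ i ∈ Finset.Ico (l + 1) K, g i := by
      have h1 : ∀ i ∈ Finset.range K, g i * ∑ l ∈ Finset.range i, (-rr) ^ l * g l =
          ∑ l ∈ Finset.range i, g i * ((-rr) ^ l * g l) := by
        intro i _
        rw [Finset.mul_sum]
      rw [Finset.sum_congr rfl h1, tri_swap_s17 (fun i l => g i * ((-rr) ^ l * g l)) K]
      refine Finset.sum_congr rfl fun l _ => ?_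
      rw [← Finset.sum_mul, mul_comm]
    rw [hswap]
    calc |∑ l ∈ Finset.range K, ((-rr) ^ l * g l) * ∑ i ∈ Finset.Ico (l + 1) K, g i|
        ≤ ∑ l ∈ Finset.range K, |((-rr) ^ l * g l) * ∑ i ∈ Finset.Ico (l + 1) K, g i| :=
          Finset.abs_sum_le_sum_abs _ _
      _ ≤ ∑ l ∈ Finset.range K, rr ^ l * (B * (2 * M')) := by
          refine Finset.sum_le_sum fun l _ => ?_
          rw [abs_mul, abs_mul, abs_pow, abs_neg, abs_of_nonneg rr_nonneg, mul_assoc]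
          have h0 : (0:ℝ) ≤ rr ^ l := pow_nonneg rr_nonneg l
          exact mul_le_mul_of_nonneg_left
            (mul_le_mul (hB l) (hIco l) (abs_nonneg _) hB0) h0
      _ ≤ c2 * (B * (2 * M')) := sum_pow_le rr_nonneg rr_lt_one (by positivity) K
  -- bound on the Y double sum
  have hinner : ∀ i, ∑ l ∈ Finset.range i, rr ^ (i - l) ≤ c2 := by
    intro i
    have h := Finset.sum_range_reflect (fun l => rr ^ (l + 1)) i
    have h2 : ∑ l ∈ Finset.range i, rr ^ (i - l) = ∑ l ∈ Finset.range i, rr ^ (l + 1) := by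
      rw [← h]
      refine Finset.sum_congr rfl fun l hl => ?_
      have := Finset.mem_range.mp hl
      congr 1
      omega
    rw [h2]
    have h3 : ∀ l ∈ Finset.range i, rr ^ (l + 1) ≤ rr ^ l := by
      intro l _
      rw [pow_succ]
      nlinarith [pow_nonneg rr_nonneg l, rr_lt_one]
    exact (Finset.sum_le_sum h3).trans (geom_le' rr_nonneg rr_lt_one i)
  have hb3 : |∑ i ∈ Finset.range K,
        (∑ l ∈ Finset.range i, (φ⁻¹) ^ i * ψ ^ (i - 1 - l) * ((Nat.fib l : ℝ) * (g l * g i)))| ≤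
      φ * (c2 * Q') := by
    calc |∑ i ∈ Finset.range K,
        (∑ l ∈ Finset.range i, (φ⁻¹) ^ i * ψ ^ (i - 1 - l) * ((Nat.fib l : ℝ) * (g l * g i)))|
        ≤ ∑ i ∈ Finset.range K,
            |∑ l ∈ Finset.range i, (φ⁻¹) ^ i * ψ ^ (i - 1 - l) * ((Nat.fib l : ℝ) * (g l * g i))| :=
          Finset.abs_sum_le_sum_abs _ _
      _ ≤ ∑ i ∈ Finset.range K, ∑ l ∈ Finset.range i,
            (φ * rr ^ (i - l)) * ((g l) ^ 2 / 2 + (g i) ^ 2 / 2) := by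
          refine Finset.sum_le_sum fun i _ => ?_
          refine (Finset.abs_sum_le_sum_abs _ _).trans (Finset.sum_le_sum fun l hl => ?_)
          have hli := Finset.mem_range.mp hl
          have e1 : |(φ⁻¹) ^ i * ψ ^ (i - 1 - l) * ((Nat.fib l : ℝ) * (g l * g i))| =
              (φ⁻¹) ^ i * (φ⁻¹) ^ (i - 1 - l) * ((Nat.fib l : ℝ) * |g l * g i|) := by
            rw [abs_mul, abs_mul, abs_mul, abs_pow, abs_pow, abs_goldConj,
              abs_of_pos (by positivity : (0:ℝ) < φ⁻¹), Nat.abs_cast]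
          rw [e1]
          have hfib : (Nat.fib l : ℝ) ≤ φ ^ l := fib_le_goldpow l
          have hgg : |g l * g i| ≤ (g l) ^ 2 / 2 + (g i) ^ 2 / 2 := by
            rw [abs_mul]
            nlinarith [sq_nonneg (|g l| - |g i|), sq_abs (g l), sq_abs (g i),
              abs_nonneg (g l), abs_nonneg (g i)]
          have hpos1 : (0:ℝ) ≤ (φ⁻¹) ^ i * (φ⁻¹) ^ (i - 1 - l) := by positivity
          have hfib0 : (0:ℝ) ≤ (Nat.fib l : ℝ) := by positivity
          calc (φ⁻¹) ^ i * (φ⁻¹) ^ (i - 1 - l) * ((Nat.fib l : ℝ) * |g l * g i|)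
              ≤ (φ⁻¹) ^ i * (φ⁻¹) ^ (i - 1 - l) * (φ ^ l * ((g l) ^ 2 / 2 + (g i) ^ 2 / 2)) := by
                refine mul_le_mul_of_nonneg_left ?_ hpos1
                exact mul_le_mul hfib hgg (abs_nonneg _) (by positivity)
            _ = (φ * rr ^ (i - l)) * ((g l) ^ 2 / 2 + (g i) ^ 2 / 2) := by
                rw [← mul_assoc, pow_helper3 hli]
      _ = (φ / 2) * ((∑ i ∈ Finset.range K, ∑ l ∈ Finset.range i, rr ^ (i - l) * (g l) ^ 2)
            + ∑ i ∈ Finset.range K, ∑ l ∈ Finset.range i, rr ^ (i - l) * (g i) ^ 2) := by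
          rw [← Finset.sum_add_distrib, Finset.mul_sum]
          refine Finset.sum_congr rfl fun i _ => ?_
          rw [← Finset.sum_add_distrib, Finset.mul_sum]
          refine Finset.sum_congr rfl fun l _ => ?_
          ring
      _ ≤ (φ / 2) * (c2 * Q' + c2 * Q') := by
          refine mul_le_mul_of_nonneg_left ?_ (by positivity)
          have hSB : (∑ i ∈ Finset.range K, ∑ l ∈ Finset.range i, rr ^ (i - l) * (g l) ^ 2) ≤
              c2 * Q' := by
            rw [tri_swap_s17 (fun i l => rr ^ (i - l) * (g l) ^ 2) K]
            calc ∑ l ∈ Finset.range K, ∑ i ∈ Finset.Ico (l + 1) K, rr ^ (i - l) * (g l) ^ 2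
                ≤ ∑ l ∈ Finset.range K, c2 * (g l) ^ 2 := by
                  refine Finset.sum_le_sum fun l _ => ?_
                  rw [← Finset.sum_mul]
                  exact mul_le_mul_of_nonneg_right (sum_Ico_pow_le rr_nonneg rr_lt_one l K)
                    (sq_nonneg _)
              _ = c2 * ∑ l ∈ Finset.range K, (g l) ^ 2 := by rw [Finset.mul_sum]
              _ ≤ c2 * Q' := mul_le_mul_of_nonneg_left (hq K) hc2n
          have hSA : (∑ i ∈ Finset.range K, ∑ l ∈ Finset.range i, rr ^ (i - l) * (g i) ^ 2) ≤
              c2 * Q' := by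
            calc ∑ i ∈ Finset.range K, ∑ l ∈ Finset.range i, rr ^ (i - l) * (g i) ^ 2
                ≤ ∑ i ∈ Finset.range K, c2 * (g i) ^ 2 := by
                  refine Finset.sum_le_sum fun i _ => ?_
                  rw [← Finset.sum_mul]
                  exact mul_le_mul_of_nonneg_right (hinner i) (sq_nonneg _)
              _ = c2 * ∑ i ∈ Finset.range K, (g i) ^ 2 := by rw [Finset.mul_sum]
              _ ≤ c2 * Q' := mul_le_mul_of_nonneg_left (hq K) hc2n
          linarith
      _ = φ * (c2 * Q') := by ring
  -- final assembly
  rw [hU, hGW]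
  set P := ∑ i ∈ Finset.range K, g i * ∑ l ∈ Finset.range i, g l with hPd
  set E := ∑ i ∈ Finset.range K, g i * ∑ l ∈ Finset.range i, (-rr) ^ l * g l with hEd
  set Y := ∑ i ∈ Finset.range K,
      (∑ l ∈ Finset.range i, (φ⁻¹) ^ i * ψ ^ (i - 1 - l) * ((Nat.fib l : ℝ) * (g l * g i)))
    with hYd
  have hgold1 : (0:ℝ) < φ⁻¹ := by positivity
  have hgoldi : (φ⁻¹ : ℝ) ≤ 1 := inv_le_one_of_one_le₀ Real.one_lt_goldenRatio.le
  have hc2Q : (0:ℝ) ≤ c2 * Q' := mul_nonneg hc2n hQ0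
  have hφ5 : (√5)⁻¹ * φ ≤ 1 := by
    rw [← div_eq_inv_mul]
    exact div_le_one_of_le₀ (by linarith [Real.goldenRatio_lt_two]) h5.le
  have hcoef : (√5)⁻¹ * φ⁻¹ * (√5)⁻¹ ≤ 1 := by
    have hab : (√5)⁻¹ * φ⁻¹ ≤ 1 := mul_le_one₀ h5i hgold1.le hgoldi
    exact mul_le_one₀ hab h5in h5i
  have h1 : |(√5)⁻¹ * φ⁻¹ * ((√5)⁻¹ * (P - E))| ≤ |P - E| := by
    have e : (√5)⁻¹ * φ⁻¹ * ((√5)⁻¹ * (P - E)) = ((√5)⁻¹ * φ⁻¹ * (√5)⁻¹) * (P - E) := by ring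
    rw [e, abs_mul, abs_of_nonneg (by positivity : (0:ℝ) ≤ (√5)⁻¹ * φ⁻¹ * (√5)⁻¹)]
    exact mul_le_of_le_one_left (abs_nonneg _) hcoef
  have h2 : |(√5)⁻¹ * Y| ≤ c2 * Q' := by
    rw [abs_mul, abs_of_nonneg h5in]
    calc (√5)⁻¹ * |Y| ≤ (√5)⁻¹ * (φ * (c2 * Q')) :=
          mul_le_mul_of_nonneg_left hb3 h5in
      _ = ((√5)⁻¹ * φ) * (c2 * Q') := by ring
      _ ≤ 1 * (c2 * Q') := mul_le_mul_of_nonneg_right hφ5 hc2Q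
      _ = c2 * Q' := one_mul _
  calc |(√5)⁻¹ * φ⁻¹ * ((√5)⁻¹ * (P - E)) - (√5)⁻¹ * Y|
      ≤ |(√5)⁻¹ * φ⁻¹ * ((√5)⁻¹ * (P - E))| + |(√5)⁻¹ * Y| := abs_sub _ _
    _ ≤ |P - E| + c2 * Q' := by linarith
    _ ≤ |P| + |E| + c2 * Q' := by linarith [abs_sub P E]
    _ ≤ (M' ^ 2 + Q') / 2 + 2 * B * M' * c2 + 2 * Q' * c2 := by
        have := hb1
        have := hb2
        nlinarith

set_option maxHeartbeats 1000000 in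
private lemma cross_bound (f : ℕ → ℝ) (hf : IsZAdditive f) {B M' Q' : ℝ}
    (hB0 : 0 ≤ B) (hM0 : 0 ≤ M') (hQ0 : 0 ≤ Q')
    (hB : ∀ i, |gseq f i| ≤ B)
    (hσ : ∀ K, |∑ i ∈ Finset.range K, gseq f i| ≤ M')
    (hq : ∀ K, ∑ i ∈ Finset.range K, (gseq f i) ^ 2 ≤ Q') (K : ℕ) :
    |∑ i ∈ Finset.range K, (Nat.fib (K - 1 - i) : ℝ) * (gseq f i * Zs f i)| ≤
      ((M' ^ 2 + Q') / 2 + 2 * B * M' * (1 - (φ⁻¹) ^ 2)⁻¹ + 2 * Q' * (1 - (φ⁻¹) ^ 2)⁻¹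
        + (1 - (φ⁻¹) ^ 2)⁻¹ * (B * (M' + B * (1 - (φ⁻¹) ^ 2)⁻¹))) * φ ^ K := by
  set g := gseq f with hg
  set rr : ℝ := (φ⁻¹) ^ 2 with hrr
  set c2 : ℝ := (1 - rr)⁻¹ with hc2
  have hc2n : 0 ≤ c2 := c2_pos.le
  have h5 : (0:ℝ) < √5 := by positivity
  have h51 : (1:ℝ) ≤ √5 := sqrt5_facts.1
  have h5i : ((√5)⁻¹ : ℝ) ≤ 1 := inv_le_one_of_one_le₀ h51
  have h5in : (0:ℝ) ≤ (√5)⁻¹ := by positivity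
  set AA : ℝ := M' + B * c2 with hAA
  have hAA0 : 0 ≤ AA := by positivity
  set U0 : ℝ := (M' ^ 2 + Q') / 2 + 2 * B * M' * c2 + 2 * Q' * c2 with hU0
  have hU00 : 0 ≤ U0 := by positivity
  have hterm : ∀ i ∈ Finset.range K,
      (Nat.fib (K - 1 - i) : ℝ) * (g i * Zs f i) =
        (√5)⁻¹ * (φ ^ (K - 1) * ((φ⁻¹) ^ i * g i * Zs f i))
        - (√5)⁻¹ * (ψ ^ (K - 1 - i) * (g i * Zs f i)) := by
    intro i hi
    have hik : i ≤ K - 1 := by have := Finset.mem_range.mp hi; omega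
    rw [Real.coe_fib_eq (K - 1 - i), pow_helper0 hik]
    ring
  have hsum : (∑ i ∈ Finset.range K, (Nat.fib (K - 1 - i) : ℝ) * (g i * Zs f i)) =
      (√5)⁻¹ * (φ ^ (K - 1) * ∑ i ∈ Finset.range K, (φ⁻¹) ^ i * g i * Zs f i)
      - (√5)⁻¹ * (∑ i ∈ Finset.range K, ψ ^ (K - 1 - i) * (g i * Zs f i)) := by
    rw [Finset.sum_congr rfl hterm, Finset.sum_sub_distrib]
    simp only [← Finset.mul_sum]
  rw [hsum]
  have hUb := U_bound f hf hB0 hM0 hQ0 hB hσ hq K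
  have hZb := fun i => Zs_bound f hf hB0 hM0 hB hσ i
  have hX2 : |∑ i ∈ Finset.range K, ψ ^ (K - 1 - i) * (g i * Zs f i)| ≤
      φ ^ (K - 1) * (c2 * (B * AA)) := by
    calc |∑ i ∈ Finset.range K, ψ ^ (K - 1 - i) * (g i * Zs f i)|
        ≤ ∑ i ∈ Finset.range K, |ψ ^ (K - 1 - i) * (g i * Zs f i)| :=
          Finset.abs_sum_le_sum_abs _ _
      _ ≤ ∑ i ∈ Finset.range K, φ ^ (K - 1) * (rr ^ (K - 1 - i) * (B * AA)) := by
          refine Finset.sum_le_sum fun i hi => ?_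
          have hik : K - 1 - i ≤ K - 1 := by omega
          have hik2 : K - 1 - (K - 1 - i) = i := by have := Finset.mem_range.mp hi; omega
          have hph := pow_helper hik
          rw [hik2] at hph
          rw [abs_mul, abs_mul, abs_pow, abs_goldConj]
          calc (φ⁻¹) ^ (K - 1 - i) * (|g i| * |Zs f i|)
              ≤ (φ⁻¹) ^ (K - 1 - i) * (B * (AA * φ ^ i)) := by
                refine mul_le_mul_of_nonneg_left ?_ (by positivity)
                exact mul_le_mul (hB i) (hZb i) (abs_nonneg _) hB0
            _ = (φ ^ i * (φ⁻¹) ^ (K - 1 - i)) * (B * AA) := by ring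
            _ = φ ^ (K - 1) * (rr ^ (K - 1 - i) * (B * AA)) := by rw [hph]; ring
      _ = φ ^ (K - 1) * ∑ i ∈ Finset.range K, rr ^ (K - 1 - i) * (B * AA) := by
          rw [Finset.mul_sum]
      _ ≤ φ ^ (K - 1) * (c2 * (B * AA)) := by
          refine mul_le_mul_of_nonneg_left ?_ (by positivity)
          exact sum_pow_reflect_le rr_nonneg rr_lt_one (by positivity) K
  have hX1 : |(√5)⁻¹ * (φ ^ (K - 1) * ∑ i ∈ Finset.range K, (φ⁻¹) ^ i * g i * Zs f i)| ≤
      φ ^ (K - 1) * U0 := by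
    rw [abs_mul, abs_mul, abs_of_nonneg h5in, abs_of_nonneg (by positivity : (0:ℝ) ≤ φ ^ (K-1))]
    calc (√5)⁻¹ * (φ ^ (K - 1) * |∑ i ∈ Finset.range K, (φ⁻¹) ^ i * g i * Zs f i|)
        ≤ 1 * (φ ^ (K - 1) * U0) := by
          refine mul_le_mul h5i (mul_le_mul_of_nonneg_left hUb (by positivity)) (by positivity)
            (by norm_num)
      _ = φ ^ (K - 1) * U0 := one_mul _
  have hX2' : |(√5)⁻¹ * (∑ i ∈ Finset.range K, ψ ^ (K - 1 - i) * (g i * Zs f i))| ≤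
      φ ^ (K - 1) * (c2 * (B * AA)) := by
    rw [abs_mul, abs_of_nonneg h5in]
    calc (√5)⁻¹ * |∑ i ∈ Finset.range K, ψ ^ (K - 1 - i) * (g i * Zs f i)|
        ≤ 1 * (φ ^ (K - 1) * (c2 * (B * AA))) :=
          mul_le_mul h5i hX2 (abs_nonneg _) (by norm_num)
      _ = φ ^ (K - 1) * (c2 * (B * AA)) := one_mul _
  have hpow : φ ^ (K - 1) ≤ φ ^ K := pow_le_pow_right₀ Real.one_lt_goldenRatio.le (by omega)
  have hpow0 : (0:ℝ) < φ ^ (K - 1) := by positivity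
  have hfin : φ ^ (K - 1) * U0 + φ ^ (K - 1) * (c2 * (B * AA)) ≤
      (U0 + c2 * (B * AA)) * φ ^ K := by
    have e : φ ^ (K - 1) * U0 + φ ^ (K - 1) * (c2 * (B * AA)) =
        (U0 + c2 * (B * AA)) * φ ^ (K - 1) := by ring
    rw [e]
    exact mul_le_mul_of_nonneg_left hpow (by positivity)
  calc |(√5)⁻¹ * (φ ^ (K - 1) * ∑ i ∈ Finset.range K, (φ⁻¹) ^ i * g i * Zs f i)
      - (√5)⁻¹ * (∑ i ∈ Finset.range K, ψ ^ (K - 1 - i) * (g i * Zs f i))|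
      ≤ |(√5)⁻¹ * (φ ^ (K - 1) * ∑ i ∈ Finset.range K, (φ⁻¹) ^ i * g i * Zs f i)|
        + |(√5)⁻¹ * (∑ i ∈ Finset.range K, ψ ^ (K - 1 - i) * (g i * Zs f i))| := abs_sub _ _
    _ ≤ φ ^ (K - 1) * U0 + φ ^ (K - 1) * (c2 * (B * AA)) := by linarith
    _ ≤ (U0 + c2 * (B * AA)) * φ ^ K := hfin
    _ = (((M' ^ 2 + Q') / 2 + 2 * B * M' * c2 + 2 * Q' * c2) + c2 * (B * AA)) * φ ^ K := by
        rw [hU0]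
    _ = ((M' ^ 2 + Q') / 2 + 2 * B * M' * c2 + 2 * Q' * c2
          + c2 * (B * (M' + B * c2))) * φ ^ K := by rw [hAA]

set_option maxHeartbeats 1000000 in
private lemma Ts_bound (f : ℕ → ℝ) (hf : IsZAdditive f) {B M' Q' : ℝ}
    (hB0 : 0 ≤ B) (hM0 : 0 ≤ M') (hQ0 : 0 ≤ Q')
    (hB : ∀ i, |gseq f i| ≤ B)
    (hσ : ∀ K, |∑ i ∈ Finset.range K, gseq f i| ≤ M')
    (hq : ∀ K, ∑ i ∈ Finset.range K, (gseq f i) ^ 2 ≤ Q') (K : ℕ) :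
    Ts f K ≤ (Q' + 2 * ((M' ^ 2 + Q') / 2 + 2 * B * M' * (1 - (φ⁻¹) ^ 2)⁻¹
      + 2 * Q' * (1 - (φ⁻¹) ^ 2)⁻¹
      + (1 - (φ⁻¹) ^ 2)⁻¹ * (B * (M' + B * (1 - (φ⁻¹) ^ 2)⁻¹)))) * φ ^ K := by
  set g := gseq f with hg
  have hTcf := closed_form (Ts f)
    (fun i => (Nat.fib i : ℝ) * (g i) ^ 2 + 2 * g i * Zs f i)
    (by simp [Ts]) (by simp [Ts, hf.1]) (fun K => Ts_rec f hf K) K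
  have hsplit : Ts f K =
      (∑ i ∈ Finset.range K, (Nat.fib (K - 1 - i) : ℝ) * ((Nat.fib i : ℝ) * (g i) ^ 2))
      + 2 * ∑ i ∈ Finset.range K, (Nat.fib (K - 1 - i) : ℝ) * (g i * Zs f i) := by
    rw [hTcf, Finset.mul_sum, ← Finset.sum_add_distrib]
    refine Finset.sum_congr rfl fun i _ => ?_
    ring
  have hD1 : (∑ i ∈ Finset.range K, (Nat.fib (K - 1 - i) : ℝ) * ((Nat.fib i : ℝ) * (g i) ^ 2)) ≤
      φ ^ K * Q' := by
    calc (∑ i ∈ Finset.range K, (Nat.fib (K - 1 - i) : ℝ) * ((Nat.fib i : ℝ) * (g i) ^ 2))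
        ≤ ∑ i ∈ Finset.range K, φ ^ K * (g i) ^ 2 := by
          refine Finset.sum_le_sum fun i hi => ?_
          have h1 : Nat.fib (K - 1 - i) * Nat.fib i ≤ Nat.fib K := by
            refine (fib_mul_fib_le _ _).trans (Nat.fib_mono ?_)
            have := Finset.mem_range.mp hi
            omega
          have h2 : ((Nat.fib (K - 1 - i) : ℝ)) * (Nat.fib i : ℝ) ≤ φ ^ K := by
            calc ((Nat.fib (K - 1 - i) : ℝ)) * (Nat.fib i : ℝ)
                = ((Nat.fib (K - 1 - i) * Nat.fib i : ℕ) : ℝ) := by push_cast; ring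
              _ ≤ ((Nat.fib K : ℕ) : ℝ) := by exact_mod_cast h1
              _ ≤ φ ^ K := fib_le_goldpow K
          calc (Nat.fib (K - 1 - i) : ℝ) * ((Nat.fib i : ℝ) * (g i) ^ 2)
              = ((Nat.fib (K - 1 - i) : ℝ) * (Nat.fib i : ℝ)) * (g i) ^ 2 := by ring
            _ ≤ φ ^ K * (g i) ^ 2 := mul_le_mul_of_nonneg_right h2 (sq_nonneg _)
      _ = φ ^ K * ∑ i ∈ Finset.range K, (g i) ^ 2 := by rw [Finset.mul_sum]
      _ ≤ φ ^ K * Q' := mul_le_mul_of_nonneg_left (hq K) (by positivity)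
  have hCr := cross_bound f hf hB0 hM0 hQ0 hB hσ hq K
  have habs := abs_le.mp hCr
  rw [hsplit]
  nlinarith [habs.1, habs.2, hD1]

end ZeckAux

set_option maxHeartbeats 1000000 in
/-- If the two series `∑_{j≥2} f(F_j)` and `∑_{j≥2} f(F_j)²` converge, then
`(1/N) ∑_{n<N} |f(n)| = O(1)`. -/
theorem zeckendorf_first_abs_moment_bounded (f : ℕ → ℝ) (hf : IsZAdditive f)
    (hS : ∃ S : ℝ, Tendsto (fun J : ℕ => ∑ j ∈ Finset.Icc 2 J, f (Nat.fib j)) atTop (𝓝 S))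
    (hS2 : ∃ S2 : ℝ, Tendsto (fun J : ℕ => ∑ j ∈ Finset.Icc 2 J, f (Nat.fib j) ^ 2)
      atTop (𝓝 S2)) :
    ∃ C : ℝ, ∀ N : ℕ, 1 ≤ N → ∑ n ∈ Finset.range N, |f n| ≤ C * N := by
  obtain ⟨S, hSt⟩ := hS
  obtain ⟨S2, hS2t⟩ := hS2
  obtain ⟨M, hM0, hM⟩ := bdd_helper hSt
  obtain ⟨Q, hQ0, hQ⟩ := bdd_helper hS2t
  -- bound on the digit values
  have h01 : gseq f 0 = gseq f 1 := by norm_num [gseq]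
  have hstep : ∀ i : ℕ, 1 ≤ i → f (Nat.fib (i + 1)) =
      (∑ j ∈ Finset.Icc 2 (i + 1), f (Nat.fib j)) - ∑ j ∈ Finset.Icc 2 i, f (Nat.fib j) := by
    intro i hi
    have h := Finset.sum_Icc_succ_top (show 2 ≤ i + 1 by omega) (fun j => f (Nat.fib j))
    rw [h]
    ring
  have hB : ∀ i, |gseq f i| ≤ 2 * M := by
    have key : ∀ i : ℕ, 1 ≤ i → |gseq f i| ≤ 2 * M := by
      intro i hi
      unfold gseq
      rw [hstep i hi]
      calc |(∑ j ∈ Finset.Icc 2 (i + 1), f (Nat.fib j)) - ∑ j ∈ Finset.Icc 2 i, f (Nat.fib j)|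
          ≤ |∑ j ∈ Finset.Icc 2 (i + 1), f (Nat.fib j)| +
            |∑ j ∈ Finset.Icc 2 i, f (Nat.fib j)| := abs_sub _ _
        _ ≤ 2 * M := by have := hM (i + 1); have := hM i; linarith
    intro i
    cases i with
    | zero => rw [h01]; exact key 1 le_rfl
    | succ i' => exact key (i' + 1) (by omega)
  -- reindexing of partial sums
  have hreix : ∀ n : ℕ, (∑ i ∈ Finset.range n, gseq f (i + 1)) =
      ∑ j ∈ Finset.Icc 2 (n + 1), f (Nat.fib j) := by
    intro n
    rw [← Finset.Ico_add_one_right_eq_Icc, Finset.sum_Ico_eq_sum_range]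
    have e : n + 1 + 1 - 2 = n := by omega
    rw [e]
    refine Finset.sum_congr rfl fun i _ => ?_
    unfold gseq
    congr 2
    omega
  have hσ : ∀ K, |∑ i ∈ Finset.range K, gseq f i| ≤ 3 * M := by
    intro K
    cases K with
    | zero => simpa using by linarith
    | succ n =>
      rw [Finset.sum_range_succ' (fun i => gseq f i) n, hreix n]
      calc |(∑ j ∈ Finset.Icc 2 (n + 1), f (Nat.fib j)) + gseq f 0|
          ≤ |∑ j ∈ Finset.Icc 2 (n + 1), f (Nat.fib j)| + |gseq f 0| := abs_add_le _ _
        _ ≤ 3 * M := by have := hM (n + 1); have := hB 0; linarith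
  have hreix2 : ∀ n : ℕ, (∑ i ∈ Finset.range n, (gseq f (i + 1)) ^ 2) =
      ∑ j ∈ Finset.Icc 2 (n + 1), f (Nat.fib j) ^ 2 := by
    intro n
    rw [← Finset.Ico_add_one_right_eq_Icc, Finset.sum_Ico_eq_sum_range]
    have e : n + 1 + 1 - 2 = n := by omega
    rw [e]
    refine Finset.sum_congr rfl fun i _ => ?_
    unfold gseq
    congr 3
    omega
  have hq : ∀ K, ∑ i ∈ Finset.range K, (gseq f i) ^ 2 ≤ (2 * M) ^ 2 + Q := by
    intro K
    cases K with
    | zero => simp; positivity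
    | succ n =>
      rw [Finset.sum_range_succ' (fun i => (gseq f i) ^ 2) n, hreix2 n]
      have h1 : (∑ j ∈ Finset.Icc 2 (n + 1), f (Nat.fib j) ^ 2) ≤ Q :=
        (le_abs_self _).trans (hQ (n + 1))
      have h2 : (gseq f 0) ^ 2 ≤ (2 * M) ^ 2 := by
        rw [← sq_abs]
        exact pow_le_pow_left₀ (abs_nonneg _) (hB 0) 2
      linarith
  -- second moment bound
  have hTs := fun K => Ts_bound f hf (by positivity : (0:ℝ) ≤ 2 * M)
    (by positivity : (0:ℝ) ≤ 3 * M) (by positivity : (0:ℝ) ≤ (2 * M) ^ 2 + Q) hB hσ hq K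
  set CC : ℝ := ((2 * M) ^ 2 + Q) + 2 * (((3 * M) ^ 2 + ((2 * M) ^ 2 + Q)) / 2
    + 2 * (2 * M) * (3 * M) * (1 - (φ⁻¹) ^ 2)⁻¹
    + 2 * ((2 * M) ^ 2 + Q) * (1 - (φ⁻¹) ^ 2)⁻¹
    + (1 - (φ⁻¹) ^ 2)⁻¹ * ((2 * M) * (3 * M + (2 * M) * (1 - (φ⁻¹) ^ 2)⁻¹))) with hCC
  set C2 : ℝ := max CC 0 with hC2
  have hC20 : 0 ≤ C2 := le_max_right _ _
  have hTs2 : ∀ K, Ts f K ≤ C2 * φ ^ K := by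
    intro K
    refine (hTs K).trans ?_
    exact mul_le_mul_of_nonneg_right (le_max_left _ _) (by positivity)
  refine ⟨Real.sqrt C2 * φ ^ 3, fun N hN => ?_⟩
  have hC0 : (0:ℝ) ≤ Real.sqrt C2 * φ ^ 3 := by positivity
  rcases Nat.lt_or_ge N 2 with hN2 | hN2
  · have hN1 : N = 1 := by omega
    subst hN1
    simp [hf.1]
    positivity
  · -- choose the Zeckendorf scale
    have hex : ∃ K, N ≤ Nat.fib K := by
      refine ⟨max N 5, ?_⟩
      calc N ≤ max N 5 := le_max_left _ _
        _ ≤ Nat.fib (max N 5) := Nat.le_fib_self (le_max_right _ _)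
    set K₀ := Nat.find hex with hK₀
    have h1 : N ≤ Nat.fib K₀ := Nat.find_spec hex
    have hK3 : 3 ≤ K₀ := by
      by_contra h
      push_neg at h
      have h2 : Nat.fib K₀ ≤ Nat.fib 2 := Nat.fib_mono (by omega)
      have : Nat.fib 2 = 1 := rfl
      omega
    have h2 : Nat.fib (K₀ - 1) < N := by
      have h3 := Nat.find_min hex (show K₀ - 1 < K₀ by omega)
      omega
    have hφK : φ ^ K₀ ≤ φ ^ 3 * (N : ℝ) := by
      have e : φ ^ K₀ = φ ^ 3 * φ ^ (K₀ - 3) := by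
        rw [← pow_add]
        congr 1
        omega
      have h3 : φ ^ (K₀ - 3) ≤ (Nat.fib (K₀ - 3 + 2) : ℝ) := goldpow_le_fib _
      have e2 : K₀ - 3 + 2 = K₀ - 1 := by omega
      rw [e2] at h3
      have h4 : (Nat.fib (K₀ - 1) : ℝ) ≤ (N : ℝ) := by exact_mod_cast h2.le
      rw [e]
      have := pow_pos Real.goldenRatio_pos 3
      nlinarith
    have hmono : (∑ n ∈ Finset.range N, |f n|) ≤ ∑ n ∈ Finset.range (Nat.fib K₀), |f n| := by
      refine Finset.sum_le_sum_of_subset_of_nonneg ?_ (fun n _ _ => abs_nonneg _)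
      exact Finset.range_subset_range.mpr h1
    have hcs := Finset.sum_mul_sq_le_sq_mul_sq (Finset.range (Nat.fib K₀))
      (fun n => |f n|) (fun _ => 1)
    simp only [mul_one, one_pow, Finset.sum_const, Finset.card_range, nsmul_eq_mul,
      sq_abs] at hcs
    have hcs2 : (∑ n ∈ Finset.range (Nat.fib K₀), |f n|) ^ 2 ≤
        C2 * φ ^ K₀ * φ ^ K₀ := by
      have hfibφ : (Nat.fib K₀ : ℝ) ≤ φ ^ K₀ := fib_le_goldpow K₀
      have hTs0 : (0:ℝ) ≤ Ts f K₀ := Finset.sum_nonneg fun n _ => sq_nonneg _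
      calc (∑ n ∈ Finset.range (Nat.fib K₀), |f n|) ^ 2
          ≤ Ts f K₀ * (Nat.fib K₀ : ℝ) := hcs
        _ ≤ (C2 * φ ^ K₀) * φ ^ K₀ :=
            mul_le_mul (hTs2 K₀) hfibφ (by positivity) (by positivity)
    have hsq : (∑ n ∈ Finset.range (Nat.fib K₀), |f n|) ^ 2 ≤
        (Real.sqrt C2 * (φ ^ 3 * (N : ℝ))) ^ 2 := by
      have e : (Real.sqrt C2 * (φ ^ 3 * (N : ℝ))) ^ 2 = C2 * (φ ^ 3 * (N : ℝ)) ^ 2 := by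
        rw [mul_pow, Real.sq_sqrt hC20]
      rw [e]
      have h5 : C2 * φ ^ K₀ * φ ^ K₀ = C2 * (φ ^ K₀) ^ 2 := by ring
      have h6 : (φ ^ K₀ : ℝ) ^ 2 ≤ (φ ^ 3 * (N : ℝ)) ^ 2 := by
        refine pow_le_pow_left₀ (by positivity) hφK 2
      nlinarith [hcs2, mul_le_mul_of_nonneg_left h6 hC20]
    have hfinal : (∑ n ∈ Finset.range (Nat.fib K₀), |f n|) ≤
        Real.sqrt C2 * (φ ^ 3 * (N : ℝ)) := by
      have hL0 : (0:ℝ) ≤ ∑ n ∈ Finset.range (Nat.fib K₀), |f n| :=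
        Finset.sum_nonneg fun n _ => abs_nonneg _
      have hR0 : (0:ℝ) ≤ Real.sqrt C2 * (φ ^ 3 * (N : ℝ)) := by positivity
      nlinarith
    calc (∑ n ∈ Finset.range N, |f n|) ≤ ∑ n ∈ Finset.range (Nat.fib K₀), |f n| := hmono
      _ ≤ Real.sqrt C2 * (φ ^ 3 * (N : ℝ)) := hfinal
      _ = Real.sqrt C2 * φ ^ 3 * (N : ℝ) := by ring
end

section
/- Let η > 0 and let (a_n)_{n≥0} be a sequence of real numbers such that for every τ ∈ (0, η], ‖τ·a_n‖ → 0 as n → ∞, where ‖x‖ denotes the distance from x to the nearest integer. Then a_n → 0 as n → ∞. -/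
open Filter Topology MeasureTheory Set Pointwise

lemma nearestIntDist_eq_norm (x : ℝ) : nearestIntDist x = ‖(x : AddCircle (1 : ℝ))‖ := by
  rw [AddCircle.norm_eq]
  simp [nearestIntDist]

lemma continuous_nearestIntDist : Continuous nearestIntDist := by
  simp only [funext nearestIntDist_eq_norm]
  exact continuous_norm.comp (AddCircle.continuous_mk' 1)

lemma nearestIntDist_sub_le (x y : ℝ) :
    nearestIntDist (x - y) ≤ nearestIntDist x + nearestIntDist y := by
  have hcast : ((x - y : ℝ) : AddCircle (1 : ℝ)) = (x : AddCircle (1 : ℝ)) - (y : ℝ) :=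
    QuotientAddGroup.mk_sub _ _ _
  simp only [nearestIntDist_eq_norm, hcast]
  exact norm_sub_le _ _

lemma nearestIntDist_of_abs_lt_half {x : ℝ} (h : |x| < 1 / 2) : nearestIntDist x = |x| := by
  have : round x = 0 := by
    rw [round_eq_zero_iff]
    constructor
    · linarith [neg_abs_le x]
    · linarith [le_abs_self x]
  simp [nearestIntDist, this]

lemma nearestIntDist_half : nearestIntDist (1 / 2 : ℝ) = 1 / 2 := by
  have : round (1 / 2 : ℝ) = 1 := by
    rw [round_eq]; norm_num
  norm_num [nearestIntDist, this]

lemma nearestIntDist_neg_half : nearestIntDist (-(1 / 2) : ℝ) = 1 / 2 := by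
  have : round (-(1 / 2) : ℝ) = 0 := by
    rw [round_eq]; norm_num
  norm_num [nearestIntDist, this]

/-- If `‖τ·a_n‖ → 0` for every `τ ∈ (0, η]`, then `a_n → 0`. -/
theorem tendsto_zero_of_nearestIntDist (η : ℝ) (hη : 0 < η) (a : ℕ → ℝ)
    (h : ∀ τ : ℝ, 0 < τ → τ ≤ η →
      Tendsto (fun n : ℕ => nearestIntDist (τ * a n)) atTop (𝓝 0)) :
    Tendsto a atTop (𝓝 0) := by
  -- the closed sets G N
  set G : ℕ → Set ℝ := fun N => {τ | ∀ n ≥ N, nearestIntDist (τ * a n) ≤ 1 / 8} with hG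
  have hGclosed : ∀ N, IsClosed (G N) := by
    intro N
    have : G N = ⋂ n, ⋂ (_ : n ≥ N), {τ | nearestIntDist (τ * a n) ≤ 1 / 8} := by
      ext τ; simp [hG]
    rw [this]
    exact isClosed_iInter fun n => isClosed_iInter fun _ =>
      isClosed_le (continuous_nearestIntDist.comp (continuous_mul_right _)) continuous_const
  -- coverage
  have hcover : Ioc 0 η ⊆ ⋃ N, G N := by
    intro τ hτ
    have := (h τ hτ.1 hτ.2).eventually (eventually_le_nhds (by norm_num : (0:ℝ) < 1/8))
    rw [eventually_atTop] at this
    obtain ⟨N, hN⟩ := this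
    exact mem_iUnion.2 ⟨N, fun n hn => hN n hn⟩
  -- positive measure piece
  obtain ⟨N, hNpos⟩ : ∃ N, 0 < volume (G N ∩ Ioc 0 η) := by
    by_contra hc
    push_neg at hc
    simp only [le_zero_iff] at hc
    have : volume (Ioc 0 η) = 0 := by
      have hsub : Ioc 0 η ⊆ ⋃ N, G N ∩ Ioc 0 η := fun τ hτ => by
        obtain ⟨N, hN⟩ := mem_iUnion.1 (hcover hτ)
        exact mem_iUnion.2 ⟨N, hN, hτ⟩
      exact le_antisymm ((measure_mono hsub).trans (le_of_eq (measure_iUnion_null hc)))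
        zero_le
    rw [Real.volume_Ioc] at this
    simp only [sub_zero] at this
    rw [ENNReal.ofReal_eq_zero] at this
    linarith
  set E := G N ∩ Ioc 0 η with hE
  have hEmeas : MeasurableSet E := ((hGclosed N).measurableSet).inter measurableSet_Ioc
  -- Steinhaus
  have hnhds : E - E ∈ 𝓝 (0 : ℝ) :=
    MeasureTheory.Measure.sub_mem_nhds_zero_of_addHaar_pos volume E hEmeas hNpos
  obtain ⟨δ0, hδ0, hball⟩ := Metric.mem_nhds_iff.1 hnhds
  -- small shifts
  have key : ∀ n ≥ N, ∀ δ : ℝ, |δ| < δ0 → nearestIntDist (δ * a n) ≤ 1 / 4 := by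
    intro n hn δ hδ
    have hmem : δ ∈ E - E := hball (by simpa [Real.dist_eq] using hδ)
    obtain ⟨τ1, hτ1, τ2, hτ2, rfl⟩ := hmem
    have h1 := hτ1.1 n hn
    have h2 := hτ2.1 n hn
    calc nearestIntDist ((τ1 - τ2) * a n)
        = nearestIntDist (τ1 * a n - τ2 * a n) := by ring_nf
      _ ≤ nearestIntDist (τ1 * a n) + nearestIntDist (τ2 * a n) := nearestIntDist_sub_le _ _
      _ ≤ 1 / 8 + 1 / 8 := add_le_add h1 h2
      _ = 1 / 4 := by norm_num
  -- boundedness: |a n| ≤ 1/(2 δ0) for n ≥ N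
  set M : ℝ := 1 / (2 * δ0) with hM
  have hMpos : 0 < M := by positivity
  have hbound : ∀ n ≥ N, |a n| ≤ M := by
    intro n hn
    by_contra hc
    push_neg at hc
    have hapos : 0 < |a n| := lt_trans hMpos hc
    have hane : a n ≠ 0 := fun h0 => by simp [h0] at hapos
    set δ : ℝ := 1 / (2 * |a n|) with hδdef
    have hδlt : |δ| < δ0 := by
      rw [abs_of_pos (by positivity)]
      rw [hδdef]
      rw [div_lt_iff₀ (by positivity)]
      have : M < |a n| := hc
      rw [hM, div_lt_iff₀ (by positivity)] at this
      nlinarith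
    have := key n hn δ hδlt
    rcases abs_cases (a n) with ⟨habs, _⟩ | ⟨habs, _⟩
    · have heq : δ * a n = 1 / 2 := by
        rw [hδdef, habs]; field_simp
      rw [heq, nearestIntDist_half] at this
      linarith
    · have heq : δ * a n = -(1 / 2) := by
        rw [hδdef, habs]; field_simp
      rw [heq, nearestIntDist_neg_half] at this
      linarith
  -- conclusion: choose small τ0
  set τ0 : ℝ := min η (1 / (4 * M)) with hτ0
  have hτ0pos : 0 < τ0 := lt_min hη (by positivity)
  have hτ0le : τ0 ≤ η := min_le_left _ _
  have hsmall : ∀ n ≥ N, nearestIntDist (τ0 * a n) = τ0 * |a n| := by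
    intro n hn
    have h1 : |τ0 * a n| = τ0 * |a n| := by
      rw [abs_mul, abs_of_pos hτ0pos]
    have h2 : τ0 * |a n| < 1 / 2 := by
      have : τ0 ≤ 1 / (4 * M) := min_le_right _ _
      have h3 : τ0 * |a n| ≤ (1 / (4 * M)) * M :=
        mul_le_mul this (hbound n hn) (abs_nonneg _) (by positivity)
      have h4 : (1 / (4 * M)) * M = 1 / 4 := by field_simp
      linarith
    rw [nearestIntDist_of_abs_lt_half (by rwa [h1]), h1]
  have habs_tendsto : Tendsto (fun n => |a n|) atTop (𝓝 0) := by
    have h1 : Tendsto (fun n => τ0⁻¹ * nearestIntDist (τ0 * a n)) atTop (𝓝 0) := by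
      simpa using (h τ0 hτ0pos hτ0le).const_mul τ0⁻¹
    apply h1.congr'
    filter_upwards [eventually_ge_atTop N] with n hn
    rw [hsmall n hn, ← mul_assoc, inv_mul_cancel₀ hτ0pos.ne', one_mul]
  have hneg : Tendsto (fun n => -|a n|) atTop (𝓝 0) := by
    simpa using habs_tendsto.neg
  exact tendsto_of_tendsto_of_tendsto_of_le_of_le hneg habs_tendsto
    (fun n => neg_abs_le _) (fun n => le_abs_self _)
end
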